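/- arXiv:2508.14473 — 6 statements merged into one kernel-verified Lean document; each statement's English description precedes it below -/
import Mathlib

section
/- Let (W,S) be a Coxeter system, J ⊆ S, and let v ∈ ᴶW be the minimal-length representative of its coset W_J v. Set K = max{ K ⊆ J : vKv⁻¹ = K }. If w_J ∈ W_J and x, x' ∈ W_K satisfy w_J (v x) w_J⁻¹ = v x', then w_J ∈ W_K. More generally, if w_J(vx)w_J⁻¹ = vx' for some w_J ∈ W_J and x, x' ∈ W_K, then w_J ∈ W_K and x' = σ⁻¹(w_J) x w_J⁻¹ where σ = Ad(v) restricted to W_K. -/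
variable {B W : Type*} [Group W] {M : CoxeterMatrix B}

namespace Stmt4Aux

open CoxeterSystem List
open scoped Classical

lemma conj_eq_iff (u x y : W) : u * x * u⁻¹ = y ↔ x = u⁻¹ * y * u := by
  constructor
  · intro h; rw [← h]; group
  · intro h; rw [h]; group

variable (cs : CoxeterSystem M W)

noncomputable def titsFun (i : B) : W × ZMod 2 → W × ZMod 2 :=
  fun p => (cs.simple i * p.1 * cs.simple i, p.2 + if p.1 = cs.simple i then 1 else 0)

lemma titsFun_involutive (i : B) : Function.Involutive (titsFun cs i) := by
  rintro ⟨t, e⟩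
  simp only [titsFun]
  have h2 : (cs.simple i * t * cs.simple i = cs.simple i) ↔ (t = cs.simple i) := by
    constructor
    · intro h
      have := congrArg (fun x => cs.simple i * x * cs.simple i) h
      simpa [mul_assoc] using this
    · rintro h; rw [h]; simp
  rw [Prod.mk.injEq]
  constructor
  · simp [mul_assoc]
  · simp only [h2]
    rcases eq_or_ne t (cs.simple i) with h | h
    · simp [h, add_assoc, CharTwo.add_self_eq_zero]
    · simp [h]

noncomputable def titsPerm (i : B) : Equiv.Perm (W × ZMod 2) :=
  (titsFun_involutive cs i).toPerm

@[simp] lemma titsPerm_apply (i : B) (p : W × ZMod 2) :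
    titsPerm cs i p = (cs.simple i * p.1 * cs.simple i,
      p.2 + if p.1 = cs.simple i then 1 else 0) := rfl

lemma simple_shift (i j : B) (k : ℕ) :
    cs.simple j * (cs.simple i * cs.simple j) ^ k
      = (cs.simple j * cs.simple i) ^ k * cs.simple j := by
  induction k with
  | zero => simp
  | succ n ih =>
      rw [pow_succ, ← mul_assoc, ih, pow_succ]
      group

lemma conj_pow_aux3 (i j : B) (k : ℕ) :
    (cs.simple j * cs.simple i) * ((cs.simple j * cs.simple i) ^ k * cs.simple j)
      * (cs.simple i * cs.simple j)
      = (cs.simple j * cs.simple i) ^ (k + 2) * cs.simple j := by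
  set a := cs.simple i with ha
  set b := cs.simple j with hb
  have hc : (b * a) * (b * a) ^ k = (b * a) ^ k * (b * a) :=
    ((pow_succ' (b*a) k).symm.trans (pow_succ (b*a) k))
  calc (b*a) * ((b*a)^k * b) * (a*b)
      = (b*a) * (b*a)^k * (b * (a * b)) := by simp [mul_assoc]
    _ = (b*a)^k * (b*a) * (b * (a * b)) := by rw [hc]
    _ = (b*a)^k * ((b*a)*(b*a)) * b := by simp [mul_assoc]
    _ = (b*a)^(k+2) * b := by rw [pow_add, sq]

lemma titsPerm_mul_pow_apply (i j : B) (n : ℕ) (p : W × ZMod 2) :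
    ((titsPerm cs i * titsPerm cs j) ^ n) p =
      ((cs.simple i * cs.simple j) ^ n * p.1 * ((cs.simple i * cs.simple j) ^ n)⁻¹,
        p.2 + ∑ k ∈ Finset.range (2 * n),
          (if p.1 = (cs.simple j * cs.simple i) ^ k * cs.simple j then (1 : ZMod 2) else 0)) := by
  induction n generalizing p with
  | zero => simp
  | succ n ih =>
    have key : ((titsPerm cs i * titsPerm cs j) ^ (n+1)) p
        = ((titsPerm cs i * titsPerm cs j) ^ n) ((titsPerm cs i * titsPerm cs j) p) := by
      rw [pow_succ, Equiv.Perm.mul_apply]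
    have hu : (cs.simple i * cs.simple j)⁻¹ = cs.simple j * cs.simple i := by
      rw [mul_inv_rev, cs.inv_simple, cs.inv_simple]
    have happ : (titsPerm cs i * titsPerm cs j) p
        = ((cs.simple i * cs.simple j) * p.1 * (cs.simple j * cs.simple i),
            p.2 + ((if p.1 = cs.simple j then (1 : ZMod 2) else 0)
              + if p.1 = cs.simple j * cs.simple i * cs.simple j then 1 else 0)) := by
      rw [Equiv.Perm.mul_apply, titsPerm_apply, titsPerm_apply]
      rw [Prod.mk.injEq]
      constructor
      · simp [mul_assoc]
      · have h3 : (cs.simple j * p.1 * cs.simple j = cs.simple i)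
            ↔ (p.1 = cs.simple j * cs.simple i * cs.simple j) := by
          rw [show cs.simple j * p.1 * cs.simple j
              = cs.simple j * p.1 * (cs.simple j)⁻¹ from by rw [cs.inv_simple]]
          rw [conj_eq_iff, cs.inv_simple]
        rw [h3]
        ring
    rw [key, happ, ih]
    rw [Prod.mk.injEq]
    dsimp only
    constructor
    · rw [← hu, pow_succ, mul_inv_rev]
      simp [mul_assoc]
    · have hcond : ∀ k : ℕ,
          ((cs.simple i * cs.simple j) * p.1 * (cs.simple j * cs.simple i)
            = (cs.simple j * cs.simple i) ^ k * cs.simple j)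
          ↔ (p.1 = (cs.simple j * cs.simple i)^(k+2) * cs.simple j) := by
        intro k
        rw [← hu, conj_eq_iff, hu, conj_pow_aux3 cs i j k]
      have hsum : ∑ k ∈ Finset.range (2 * n),
            (if (cs.simple i * cs.simple j) * p.1 * (cs.simple j * cs.simple i)
              = (cs.simple j * cs.simple i) ^ k * cs.simple j then (1 : ZMod 2) else 0)
          = ∑ k ∈ Finset.range (2 * n),
            (if p.1 = (cs.simple j * cs.simple i) ^ (k+2) * cs.simple j
              then (1 : ZMod 2) else 0) := by
        apply Finset.sum_congr rfl
        intro k _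
        rw [if_congr (hcond k) rfl rfl]
      rw [hsum]
      have h2n2 : 2 * (n+1) = (2*n) + 1 + 1 := by omega
      rw [h2n2]
      rw [Finset.sum_range_succ'
        (fun k => if p.1 = (cs.simple j * cs.simple i) ^ k * cs.simple j
          then (1 : ZMod 2) else 0)]
      rw [Finset.sum_range_succ'
        (fun k => if p.1 = (cs.simple j * cs.simple i) ^ (k+1) * cs.simple j
          then (1 : ZMod 2) else 0)]
      simp only [pow_zero, one_mul, zero_add, pow_one]
      have hkk : ∀ k : ℕ, (k + 1 + 1) = k + 2 := by omega
      simp only [hkk]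
      ring

lemma titsLiftable : M.IsLiftable (titsPerm cs) := by
  intro i j
  apply Equiv.ext
  intro p
  rw [Equiv.Perm.one_apply, titsPerm_mul_pow_apply]
  have h1 : (cs.simple i * cs.simple j) ^ M.M i j = 1 := cs.simple_mul_simple_pow i j
  have h2 : (cs.simple j * cs.simple i) ^ M.M i j = 1 := cs.simple_mul_simple_pow' i j
  rw [h1]
  simp only [one_mul, inv_one, mul_one]
  have hper : ∀ k : ℕ,
      (if p.1 = (cs.simple j * cs.simple i) ^ (M.M i j + k) * cs.simple j
        then (1 : ZMod 2) else 0)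
      = (if p.1 = (cs.simple j * cs.simple i) ^ k * cs.simple j then (1 : ZMod 2) else 0) := by
    intro k
    have : (cs.simple j * cs.simple i) ^ (M.M i j + k)
        = (cs.simple j * cs.simple i) ^ k := by
      rw [pow_add, h2, one_mul]
    rw [this]
  have hsum : ∑ k ∈ Finset.range (2 * M.M i j),
      (if p.1 = (cs.simple j * cs.simple i) ^ k * cs.simple j then (1 : ZMod 2) else 0)
      = 0 := by
    rw [two_mul, Finset.sum_range_add]
    rw [Finset.sum_congr rfl (fun k _ => hper k)]
    exact CharTwo.add_self_eq_zero _
  rw [hsum, add_zero]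

/-- The Tits representation. -/
noncomputable def titsRho : W →* Equiv.Perm (W × ZMod 2) :=
  cs.lift ⟨titsPerm cs, titsLiftable cs⟩

@[simp] lemma titsRho_simple (i : B) : titsRho cs (cs.simple i) = titsPerm cs i :=
  cs.lift_apply_simple (titsLiftable cs) i

lemma titsRho_fst (g : W) : ∀ p : W × ZMod 2, ((titsRho cs g) p).1 = g * p.1 * g⁻¹ := by
  refine cs.simple_induction_left
    (p := fun w => ∀ p : W × ZMod 2, ((titsRho cs w) p).1 = w * p.1 * w⁻¹) g ?_ ?_
  · intro p; simp
  · intro i w hw p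
    rw [map_mul, Equiv.Perm.mul_apply, titsRho_simple, titsPerm_apply]
    simp only [hw p]
    rw [mul_inv_rev, cs.inv_simple]
    simp [mul_assoc]

lemma titsRho_snd_add (g : W) : ∀ (t : W) (e : ZMod 2),
    ((titsRho cs g) (t, e)).2 = e + ((titsRho cs g) (t, 0)).2 := by
  refine cs.simple_induction_left
    (p := fun w => ∀ (t : W) (e : ZMod 2),
      ((titsRho cs w) (t, e)).2 = e + ((titsRho cs w) (t, 0)).2) g ?_ ?_
  · intro t e; simp
  · intro w i hw t e
    rw [map_mul, Equiv.Perm.mul_apply, Equiv.Perm.mul_apply, titsRho_simple, titsPerm_apply,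
      titsPerm_apply]
    have h1 : ((titsRho cs w) (t, e)).1 = ((titsRho cs w) (t, 0)).1 := by
      rw [titsRho_fst, titsRho_fst]
    simp only [h1]
    rw [hw t e]
    ring

/-- The reflection cocycle. -/
noncomputable def nf (w t : W) : ZMod 2 := ((titsRho cs w⁻¹) (t, 0)).2

lemma nf_one (t : W) : nf cs 1 t = 0 := by simp [nf]

lemma nf_mul (a b t : W) : nf cs (a * b) t = nf cs a t + nf cs b (a⁻¹ * t * a) := by
  unfold nf
  rw [mul_inv_rev, map_mul, Equiv.Perm.mul_apply]
  have h1 : (titsRho cs a⁻¹) (t, 0) = (a⁻¹ * t * a, ((titsRho cs a⁻¹) (t, 0)).2) := by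
    rw [Prod.mk.injEq]
    constructor
    · rw [titsRho_fst]; rw [inv_inv]
    · rfl
  rw [h1, titsRho_snd_add]

lemma nf_simple (i : B) (t : W) :
    nf cs (cs.simple i) t = if t = cs.simple i then 1 else 0 := by
  unfold nf
  rw [cs.inv_simple, titsRho_simple, titsPerm_apply]
  simp

lemma nf_conj_simple_self : ∀ (ω : List B) (i : B),
    nf cs (cs.wordProd ω * cs.simple i * (cs.wordProd ω)⁻¹)
      (cs.wordProd ω * cs.simple i * (cs.wordProd ω)⁻¹) = 1 := by
  intro ω
  induction ω with
  | nil => intro i; simp [nf_simple]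
  | cons c ω' ih =>
      intro i
      have ihi := ih i
      have hexp : cs.wordProd (c :: ω') * cs.simple i * (cs.wordProd (c :: ω'))⁻¹
          = cs.simple c * ((cs.wordProd ω' * cs.simple i * (cs.wordProd ω')⁻¹) * cs.simple c) := by
        rw [cs.wordProd_cons, mul_inv_rev, cs.inv_simple]
        simp [mul_assoc]
      rw [hexp]
      revert ihi
      generalize (cs.wordProd ω' * cs.simple i * (cs.wordProd ω')⁻¹) = t'
      intro ihi
      have h1 : nf cs (cs.simple c * (t' * cs.simple c)) (cs.simple c * (t' * cs.simple c))
          = (if cs.simple c * (t' * cs.simple c) = cs.simple c then (1 : ZMod 2) else 0)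
            + nf cs (t' * cs.simple c) t' := by
        rw [nf_mul, cs.inv_simple, nf_simple]
        congr 2
        simp [mul_assoc]
      have h3 : nf cs (t' * cs.simple c) t'
          = nf cs t' t' + (if t' = cs.simple c then (1 : ZMod 2) else 0) := by
        rw [nf_mul, nf_simple]
        congr 2
        group
      have h4 : (cs.simple c * (t' * cs.simple c) = cs.simple c) ↔ (t' = cs.simple c) := by
        constructor
        · intro h
          have := congrArg (fun x => cs.simple c * x * cs.simple c) h
          rw [show cs.simple c * (cs.simple c * (t' * cs.simple c)) * cs.simple c = t' from by
            simp [mul_assoc]] at this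
          rw [this]
          simp [mul_assoc]
        · intro h
          rw [h]
          simp [mul_assoc]
      rw [h1, h3, ihi]
      rcases eq_or_ne t' (cs.simple c) with h | h
      · rw [if_pos h, if_pos (h4.mpr h)]
        decide
      · rw [if_neg h, if_neg (fun hc => h (h4.mp hc))]
        ring

lemma nf_self_eq_one {t : W} (ht : cs.IsReflection t) : nf cs t t = 1 := by
  obtain ⟨w, i, rfl⟩ := ht
  obtain ⟨ω, rfl⟩ := cs.wordProd_surjective w
  exact nf_conj_simple_self cs ω i

lemma nf_exchange : ∀ (ω : List B) (t : W), nf cs (cs.wordProd ω) t = 1 →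
    ∃ k < ω.length, t * cs.wordProd ω = cs.wordProd (ω.eraseIdx k) := by
  intro ω
  induction ω with
  | nil =>
      intro t h
      rw [cs.wordProd_nil, nf_one] at h
      exact absurd h (by decide)
  | cons c ω' ih =>
      intro t h
      rcases eq_or_ne t (cs.simple c) with rfl | hne
      · refine ⟨0, by simp, ?_⟩
        rw [cs.wordProd_cons]
        simp [mul_assoc]
      · rw [cs.wordProd_cons, nf_mul, nf_simple, if_neg hne, zero_add, cs.inv_simple] at h
        obtain ⟨k, hk, heq⟩ := ih (cs.simple c * t * cs.simple c) h
        refine ⟨k + 1, by simpa using hk, ?_⟩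
        rw [List.eraseIdx_cons_succ, cs.wordProd_cons, cs.wordProd_cons, ← heq]
        simp [mul_assoc]

lemma lt_of_nf_eq_one {w t : W} (h : nf cs w t = 1) :
    cs.length (t * w) < cs.length w := by
  obtain ⟨ω, hred, rfl⟩ := cs.exists_reduced_word' w
  obtain ⟨k, hk, heq⟩ := nf_exchange cs ω t h
  rw [heq]
  calc cs.length (cs.wordProd (ω.eraseIdx k)) ≤ (ω.eraseIdx k).length :=
        cs.length_wordProd_le _
    _ < ω.length := by
        rw [List.length_eraseIdx]
        simp only [hk, if_pos]
        omega
    _ = cs.length (cs.wordProd ω) := hred.symm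

lemma nf_eq_one_iff {t : W} (ht : cs.IsReflection t) (w : W) :
    nf cs w t = 1 ↔ cs.length (t * w) < cs.length w := by
  constructor
  · exact fun h => lt_of_nf_eq_one cs h
  · intro h
    by_contra hn
    have h0 : nf cs w t = 0 := by
      have : ∀ x : ZMod 2, x ≠ 1 → x = 0 := by decide
      exact this _ hn
    have h1 : nf cs (t * w) t = 1 := by
      rw [nf_mul, nf_self_eq_one cs ht, show t⁻¹ * t * t = t from by group, h0]
      ring
    have h2 := lt_of_nf_eq_one cs h1
    rw [show t * (t * w) = w from by rw [← mul_assoc, ht.mul_self, one_mul]] at h2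
    omega

lemma nf_eq_zero_iff {t : W} (ht : cs.IsReflection t) (w : W) :
    nf cs w t = 0 ↔ ¬ (cs.length (t * w) < cs.length w) := by
  rw [← nf_eq_one_iff cs ht w]
  constructor
  · intro h h1; rw [h] at h1; exact absurd h1 (by decide)
  · intro h
    have : ∀ x : ZMod 2, x ≠ 1 → x = 0 := by decide
    exact this _ h

/-! ### Parabolic-type lemmas for a set `S` of simple reflections -/

variable {S : Set W}

lemma S_isReflection (hS : ∀ g ∈ S, ∃ i : B, g = cs.simple i) {t : W} (ht : t ∈ S) :
    cs.IsReflection t := by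
  obtain ⟨i, rfl⟩ := hS t ht
  exact cs.isReflection_simple i

lemma S_length (hS : ∀ g ∈ S, ∃ i : B, g = cs.simple i) {t : W} (ht : t ∈ S) :
    cs.length t = 1 := by
  obtain ⟨i, rfl⟩ := hS t ht
  exact cs.length_simple i

lemma S_inv (hS : ∀ g ∈ S, ∃ i : B, g = cs.simple i) {t : W} (ht : t ∈ S) : t⁻¹ = t := by
  obtain ⟨i, rfl⟩ := hS t ht
  exact cs.inv_simple i

lemma S_mul_self (hS : ∀ g ∈ S, ∃ i : B, g = cs.simple i) {t : W} (ht : t ∈ S) : t * t = 1 := by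
  obtain ⟨i, rfl⟩ := hS t ht
  exact cs.simple_mul_simple_self i

lemma word_mem_closure {ω : List B} (hω : ∀ c ∈ ω, cs.simple c ∈ S) :
    cs.wordProd ω ∈ Subgroup.closure S := by
  unfold CoxeterSystem.wordProd
  apply Subgroup.list_prod_mem
  intro x hx
  obtain ⟨c, hc, rfl⟩ := List.mem_map.mp hx
  exact Subgroup.subset_closure (hω c hc)

lemma mem_closure_iff_word (hS : ∀ g ∈ S, ∃ i : B, g = cs.simple i) (g : W) :
    g ∈ Subgroup.closure S ↔ ∃ ω : List B, (∀ c ∈ ω, cs.simple c ∈ S) ∧ g = cs.wordProd ω := by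
  constructor
  · intro hg
    induction hg using Subgroup.closure_induction with
    | mem x hx =>
        obtain ⟨i, rfl⟩ := hS x hx
        exact ⟨[i], by simpa using hx, by simp⟩
    | one => exact ⟨[], by simp, by simp⟩
    | mul x y hx hy ihx ihy =>
        obtain ⟨ω₁, h₁, rfl⟩ := ihx
        obtain ⟨ω₂, h₂, rfl⟩ := ihy
        refine ⟨ω₁ ++ ω₂, ?_, by rw [cs.wordProd_append]⟩
        intro c hc
        rcases List.mem_append.mp hc with h | h
        · exact h₁ c h
        · exact h₂ c h
    | inv x hx ihx =>
        obtain ⟨ω, h₁, rfl⟩ := ihx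
        refine ⟨ω.reverse, ?_, by rw [cs.wordProd_reverse]⟩
        intro c hc
        exact h₁ c (List.mem_reverse.mp hc)
  · rintro ⟨ω, hω, rfl⟩
    exact word_mem_closure cs hω

lemma inversion_mem_closure_aux : ∀ (ω : List B) (t : W),
    (∀ c ∈ ω, cs.simple c ∈ S) → nf cs (cs.wordProd ω) t = 1 → t ∈ Subgroup.closure S := by
  intro ω
  induction ω with
  | nil =>
      intro t _ h
      rw [cs.wordProd_nil, nf_one] at h
      exact absurd h (by decide)
  | cons c ω' ih =>
      intro t hmem h
      rw [cs.wordProd_cons, nf_mul, nf_simple, cs.inv_simple] at h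
      rcases eq_or_ne t (cs.simple c) with rfl | hne
      · exact Subgroup.subset_closure (hmem c (by simp))
      · rw [if_neg hne, zero_add] at h
        have h2 := ih (cs.simple c * t * cs.simple c) (fun d hd => hmem d (by simp [hd])) h
        have hc : cs.simple c ∈ Subgroup.closure S :=
          Subgroup.subset_closure (hmem c (by simp))
        have : t = cs.simple c * (cs.simple c * t * cs.simple c) * cs.simple c := by
          simp [mul_assoc]
        rw [this]
        exact Subgroup.mul_mem _ (Subgroup.mul_mem _ hc h2) hc

lemma refl_mem_of_inversion (hS : ∀ g ∈ S, ∃ i : B, g = cs.simple i) {g t : W}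
    (hg : g ∈ Subgroup.closure S) (ht : cs.IsReflection t)
    (hlt : cs.length (t * g) < cs.length g) : t ∈ Subgroup.closure S := by
  obtain ⟨ω, hω, rfl⟩ := (mem_closure_iff_word cs hS g).mp hg
  exact inversion_mem_closure_aux cs ω t hω ((nf_eq_one_iff cs ht _).mpr hlt)

lemma exists_reduced_word_subset_aux : ∀ (ω : List B), (∀ c ∈ ω, cs.simple c ∈ S) →
    ∃ ω' : List B, cs.IsReduced ω' ∧ (∀ c ∈ ω', cs.simple c ∈ S) ∧
      cs.wordProd ω' = cs.wordProd ω := by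
  intro ω
  induction ω with
  | nil => exact fun _ => ⟨[], by simp [CoxeterSystem.IsReduced], by simp, rfl⟩
  | cons c ω' ih =>
      intro hmem
      obtain ⟨ω₁, hred₁, hmem₁, heq₁⟩ := ih (fun d hd => hmem d (by simp [hd]))
      rcases cs.length_simple_mul (cs.wordProd ω₁) c with hup | hdown
      · refine ⟨c :: ω₁, ?_, ?_, ?_⟩
        · unfold CoxeterSystem.IsReduced
          rw [cs.wordProd_cons, hup, hred₁]
          simp
        · intro d hd
          rcases List.mem_cons.mp hd with rfl | hd
          · exact hmem d (by simp)
          · exact hmem₁ d hd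
        · rw [cs.wordProd_cons, cs.wordProd_cons, heq₁]
      · have hlt : cs.length (cs.simple c * cs.wordProd ω₁) < cs.length (cs.wordProd ω₁) := by
          omega
        have hnf : nf cs (cs.wordProd ω₁) (cs.simple c) = 1 :=
          (nf_eq_one_iff cs (cs.isReflection_simple c) _).mpr hlt
        obtain ⟨k, hk, heq⟩ := nf_exchange cs ω₁ (cs.simple c) hnf
        refine ⟨ω₁.eraseIdx k, ?_, ?_, ?_⟩
        · unfold CoxeterSystem.IsReduced
          rw [← heq]
          have h1 : cs.length (cs.simple c * cs.wordProd ω₁) + 1 = cs.length (cs.wordProd ω₁) :=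
            hdown
          rw [List.length_eraseIdx]
          simp only [hk, if_pos]
          rw [hred₁] at h1
          omega
        · intro d hd
          exact hmem₁ d ((ω₁.eraseIdx_sublist k).mem hd)
        · rw [← heq, cs.wordProd_cons, heq₁]

lemma exists_reduced_word_subset (hS : ∀ g ∈ S, ∃ i : B, g = cs.simple i) {g : W}
    (hg : g ∈ Subgroup.closure S) :
    ∃ ω : List B, cs.IsReduced ω ∧ (∀ c ∈ ω, cs.simple c ∈ S) ∧ g = cs.wordProd ω := by
  obtain ⟨ω, hω, rfl⟩ := (mem_closure_iff_word cs hS g).mp hg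
  obtain ⟨ω', h1, h2, h3⟩ := exists_reduced_word_subset_aux cs ω hω
  exact ⟨ω', h1, h2, h3.symm⟩

lemma mem_S_of_length_one (hS : ∀ g ∈ S, ∃ i : B, g = cs.simple i) {g : W}
    (hg : g ∈ Subgroup.closure S) (hlen : cs.length g = 1) : g ∈ S := by
  obtain ⟨ω, hred, hmem, rfl⟩ := exists_reduced_word_subset cs hS hg
  have : ω.length = 1 := by
    unfold CoxeterSystem.IsReduced at hred
    omega
  obtain ⟨c, rfl⟩ := List.length_eq_one_iff.mp this
  rw [cs.wordProd_singleton]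
  exact hmem c (by simp)

lemma letters_mem_of_reduced (hS : ∀ g ∈ S, ∃ i : B, g = cs.simple i) :
    ∀ (ω : List B), cs.IsReduced ω → cs.wordProd ω ∈ Subgroup.closure S →
      ∀ c ∈ ω, cs.simple c ∈ S := by
  intro ω
  induction ω with
  | nil => intro _ _ c hc; exact absurd hc (by simp)
  | cons c ω' ih =>
      intro hred hmem d hd
      have hlen : cs.length (cs.wordProd (c :: ω')) = ω'.length + 1 := by
        unfold CoxeterSystem.IsReduced at hred
        rw [hred]
        simp
      have htail : cs.simple c * cs.wordProd (c :: ω') = cs.wordProd ω' := by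
        rw [cs.wordProd_cons]
        simp [mul_assoc]
      have hlt : cs.length (cs.simple c * cs.wordProd (c :: ω'))
          < cs.length (cs.wordProd (c :: ω')) := by
        rw [htail, hlen]
        calc cs.length (cs.wordProd ω') ≤ ω'.length := cs.length_wordProd_le ω'
          _ < ω'.length + 1 := by omega
      have hcS : cs.simple c ∈ S := by
        have h1 : cs.simple c ∈ Subgroup.closure S :=
          refl_mem_of_inversion cs hS hmem (cs.isReflection_simple c) hlt
        exact mem_S_of_length_one cs hS h1 (cs.length_simple c)
      rcases List.mem_cons.mp hd with rfl | hd'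
      · exact hcS
      · have hmem' : cs.wordProd ω' ∈ Subgroup.closure S := by
          rw [← htail]
          exact Subgroup.mul_mem _ (Subgroup.subset_closure hcS) hmem
        have hred' : cs.IsReduced ω' := by
          unfold CoxeterSystem.IsReduced
          have hge : cs.length (cs.simple c * cs.wordProd (c :: ω'))
              ≥ cs.length (cs.wordProd (c :: ω')) - 1 := by
            rcases cs.length_simple_mul (cs.wordProd (c :: ω')) c with h | h <;> omega
          rw [htail] at hge
          have hle := cs.length_wordProd_le ω'
          rw [hlen] at hge
          omega
        exact ih hred' hmem' d hd'

lemma exists_descent (hS : ∀ g ∈ S, ∃ i : B, g = cs.simple i) {g : W}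
    (hg : g ∈ Subgroup.closure S) (hne : g ≠ 1) :
    ∃ t ∈ S, cs.length (t * g) + 1 = cs.length g := by
  obtain ⟨ω, hred, hmem, rfl⟩ := exists_reduced_word_subset cs hS hg
  cases ω with
  | nil => exact absurd (by simp : cs.wordProd [] = 1) (by simpa using hne)
  | cons c ω' =>
      refine ⟨cs.simple c, hmem c (by simp), ?_⟩
      have htail : cs.simple c * cs.wordProd (c :: ω') = cs.wordProd ω' := by
        rw [cs.wordProd_cons]; simp [mul_assoc]
      have hlen : cs.length (cs.wordProd (c :: ω')) = ω'.length + 1 := by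
        unfold CoxeterSystem.IsReduced at hred
        rw [hred]; simp
      have hred' : cs.IsReduced ω' := by
        unfold CoxeterSystem.IsReduced
        have hge : cs.length (cs.simple c * cs.wordProd (c :: ω'))
            ≥ cs.length (cs.wordProd (c :: ω')) - 1 := by
          rcases cs.length_simple_mul (cs.wordProd (c :: ω')) c with h | h <;> omega
        rw [htail] at hge
        have hle := cs.length_wordProd_le ω'
        rw [hlen] at hge
        omega
      rw [htail, hlen, hred']

/-- Left additivity from left minimality. -/
lemma left_additive (hS : ∀ g ∈ S, ∃ i : B, g = cs.simple i) {d : W}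
    (hmin : ∀ y ∈ Subgroup.closure S, cs.length d ≤ cs.length (y * d)) :
    ∀ y ∈ Subgroup.closure S, cs.length (y * d) = cs.length y + cs.length d := by
  intro y hy
  generalize hn : cs.length y = n
  induction n using Nat.strong_induction_on generalizing y with
  | _ n ih =>
    rcases eq_or_ne y 1 with rfl | hne
    · rw [cs.length_one] at hn
      rw [one_mul]
      omega
    · obtain ⟨t, htS, hdesc⟩ := exists_descent cs hS hy hne
      have hy' : t * y ∈ Subgroup.closure S :=
        Subgroup.mul_mem _ (Subgroup.subset_closure htS) hy
      have hn1 : 1 ≤ n := by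
        rcases Nat.eq_zero_or_pos n with h0 | h1
        · rw [h0] at hn; exact absurd ((cs.length_eq_zero_iff).mp hn) hne
        · omega
      have hlen' : cs.length (t * y) = n - 1 := by omega
      have ihy' := ih (n-1) (by omega) (t * y) hy' hlen'
      have hexp : y * d = t * ((t * y) * d) := by
        rw [← mul_assoc, ← mul_assoc, S_mul_self cs hS htS, one_mul]
      rcases hS t htS with ⟨i, rfl⟩
      rcases cs.length_simple_mul ((cs.simple i * y) * d) i with hup | hdown
      · rw [hexp, hup, ihy']
        omega
      · exfalso
        have hnf : nf cs ((cs.simple i * y) * d) (cs.simple i) = 1 := by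
          rw [nf_eq_one_iff cs (cs.isReflection_simple i)]
          omega
        rw [nf_mul] at hnf
        have h1 : nf cs (cs.simple i * y) (cs.simple i) = 0 := by
          rw [nf_eq_zero_iff cs (cs.isReflection_simple i)]
          intro hcon
          rw [show cs.simple i * (cs.simple i * y) = y from by simp [mul_assoc]] at hcon
          omega
        rw [h1, zero_add] at hnf
        have hqrefl : cs.IsReflection ((cs.simple i * y)⁻¹ * cs.simple i * (cs.simple i * y)) := by
          have := (cs.isReflection_simple i).conj (cs.simple i * y)⁻¹
          rwa [inv_inv] at this
        have hqmem : (cs.simple i * y)⁻¹ * cs.simple i * (cs.simple i * y)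
            ∈ Subgroup.closure S :=
          Subgroup.mul_mem _ (Subgroup.mul_mem _ (Subgroup.inv_mem _ hy')
            (Subgroup.subset_closure htS)) hy'
        have hlt := lt_of_nf_eq_one cs hnf
        exact absurd hlt (by have := hmin _ hqmem; omega)

/-- Right additivity from right minimality. -/
lemma right_additive (hS : ∀ g ∈ S, ∃ i : B, g = cs.simple i) {d : W}
    (hmin : ∀ y ∈ Subgroup.closure S, cs.length d ≤ cs.length (d * y)) :
    ∀ y ∈ Subgroup.closure S, cs.length (d * y) = cs.length d + cs.length y := by
  have hmin' : ∀ y ∈ Subgroup.closure S, cs.length d⁻¹ ≤ cs.length (y * d⁻¹) := by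
    intro y hy
    have h1 : cs.length (y * d⁻¹) = cs.length (d * y⁻¹) := by
      rw [← cs.length_inv (y * d⁻¹), mul_inv_rev, inv_inv]
    rw [h1, cs.length_inv]
    exact hmin y⁻¹ (Subgroup.inv_mem _ hy)
  intro y hy
  have h2 := left_additive cs hS hmin' y⁻¹ (Subgroup.inv_mem _ hy)
  have h3 : cs.length (y⁻¹ * d⁻¹) = cs.length (d * y) := by
    rw [← cs.length_inv (y⁻¹ * d⁻¹), mul_inv_rev, inv_inv, inv_inv]
  rw [h3, cs.length_inv, cs.length_inv] at h2
  omega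

/-- A minimal-length representative of the right coset `v * closure S`, with both-sided
additivity. -/
lemma exists_coset_min (hS : ∀ g ∈ S, ∃ i : B, g = cs.simple i) (v : W)
    (hmin : ∀ y ∈ Subgroup.closure S, cs.length v ≤ cs.length (y * v)) :
    ∃ c₀ ∈ Subgroup.closure S,
      (∀ y ∈ Subgroup.closure S,
        cs.length ((v * c₀) * y) = cs.length (v * c₀) + cs.length y) ∧
      (∀ y ∈ Subgroup.closure S,
        cs.length (y * (v * c₀)) = cs.length y + cs.length (v * c₀)) := by
  have hne : ∃ n : ℕ, ∃ c ∈ Subgroup.closure S, cs.length (v * c) = n :=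
    ⟨cs.length v, 1, Subgroup.one_mem _, by rw [mul_one]⟩
  classical
  obtain ⟨c₀, hc₀, hlen₀⟩ := Nat.find_spec hne
  have hminR : ∀ y ∈ Subgroup.closure S, cs.length (v * c₀) ≤ cs.length ((v * c₀) * y) := by
    intro y hy
    rw [hlen₀, mul_assoc]
    exact Nat.find_min' hne ⟨c₀ * y, Subgroup.mul_mem _ hc₀ hy, rfl⟩
  have hradd := right_additive cs hS hminR
  refine ⟨c₀, hc₀, hradd, ?_⟩
  -- left additivity
  have hladdv := left_additive cs hS hmin
  have hvlen : cs.length v = cs.length (v * c₀) + cs.length c₀ := by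
    have h1 : v = (v * c₀) * c₀⁻¹ := by group
    calc cs.length v = cs.length ((v * c₀) * c₀⁻¹) := by rw [← h1]
      _ = cs.length (v * c₀) + cs.length c₀⁻¹ := hradd c₀⁻¹ (Subgroup.inv_mem _ hc₀)
      _ = cs.length (v * c₀) + cs.length c₀ := by rw [cs.length_inv]
  intro y hy
  have hub : cs.length (y * (v * c₀)) ≤ cs.length y + cs.length (v * c₀) :=
    cs.length_mul_le _ _
  have hlb : cs.length y + cs.length v ≤ cs.length (y * (v * c₀)) + cs.length c₀ := by
    have h2 : y * v = (y * (v * c₀)) * c₀⁻¹ := by group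
    calc cs.length y + cs.length v = cs.length (y * v) := (hladdv y hy).symm
      _ = cs.length ((y * (v * c₀)) * c₀⁻¹) := by rw [← h2]
      _ ≤ cs.length (y * (v * c₀)) + cs.length c₀⁻¹ := cs.length_mul_le _ _
      _ = cs.length (y * (v * c₀)) + cs.length c₀ := by rw [cs.length_inv]
  omega

/-- The Kilmoyer-type chain step: if `u` lies in the standard parabolic generated by `S`
and `v⁻¹ * u * v` does as well, then `u` lies in the standard parabolic generated by the
simple reflections of `S` whose `v`-conjugate lies in the parabolic. -/
theorem kilmoyer_step (hS : ∀ g ∈ S, ∃ i : B, g = cs.simple i) (v : W)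
    (hmin : ∀ y ∈ Subgroup.closure S, cs.length v ≤ cs.length (y * v)) :
    ∀ u, u ∈ Subgroup.closure S → v⁻¹ * u * v ∈ Subgroup.closure S →
      u ∈ Subgroup.closure {t ∈ S | v⁻¹ * t * v ∈ Subgroup.closure S} := by
  obtain ⟨c₀, hc₀, hradd, hladd⟩ := exists_coset_min cs hS v hmin
  set d₀ := v * c₀ with hd₀
  intro u
  generalize hn : cs.length u = n
  induction n using Nat.strong_induction_on generalizing u with
  | _ n ih =>
    intro hu hcu
    rcases eq_or_ne u 1 with rfl | hne
    · exact Subgroup.one_mem _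
    · obtain ⟨t, htS, hdesc⟩ := exists_descent cs hS hu hne
      have htrefl := S_isReflection cs hS htS
      have htlen := S_length cs hS htS
      have htmem : t ∈ Subgroup.closure S := Subgroup.subset_closure htS
      have htne : t ≠ 1 := by
        intro h; rw [h, cs.length_one] at htlen; omega
      -- nf (u * d₀) t = 1
      have hnf1 : nf cs (u * d₀) t = 1 := by
        rw [nf_mul]
        have ha : nf cs u t = 1 := by
          rw [nf_eq_one_iff cs htrefl]
          omega
        have hb : nf cs d₀ (u⁻¹ * t * u) = 0 := by
          rw [nf_eq_zero_iff cs (by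
            have := htrefl.conj u⁻¹
            rwa [inv_inv] at this)]
          intro hcon
          have hqmem : u⁻¹ * t * u ∈ Subgroup.closure S :=
            Subgroup.mul_mem _ (Subgroup.mul_mem _ (Subgroup.inv_mem _ hu) htmem) hu
          have hqne : u⁻¹ * t * u ≠ 1 := by
            intro h
            have : t = u * 1 * u⁻¹ := by rw [← h]; group
            rw [this] at htne
            exact htne (by group)
          have hqlen : 1 ≤ cs.length (u⁻¹ * t * u) := by
            rcases Nat.eq_zero_or_pos (cs.length (u⁻¹ * t * u)) with h0 | h1
            · exact absurd ((cs.length_eq_zero_iff).mp h0) hqne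
            · omega
          have := hladd (u⁻¹ * t * u) hqmem
          omega
        rw [ha, hb, add_zero]
      -- u * d₀ = d₀ * m₀
      have hm₀mem : d₀⁻¹ * u * d₀ ∈ Subgroup.closure S := by
        have : d₀⁻¹ * u * d₀ = c₀⁻¹ * (v⁻¹ * u * v) * c₀ := by
          rw [hd₀]; group
        rw [this]
        exact Subgroup.mul_mem _ (Subgroup.mul_mem _ (Subgroup.inv_mem _ hc₀) hcu) hc₀
      have hud : u * d₀ = d₀ * (d₀⁻¹ * u * d₀) := by group
      rw [hud, nf_mul] at hnf1
      have hc : nf cs d₀ t = 0 := by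
        rw [nf_eq_zero_iff cs htrefl]
        intro hcon
        have := hladd t htmem
        omega
      rw [hc, zero_add] at hnf1
      -- r := d₀⁻¹ * t * d₀ is a simple reflection of S
      have hrrefl : cs.IsReflection (d₀⁻¹ * t * d₀) := by
        have := htrefl.conj d₀⁻¹
        rwa [inv_inv] at this
      have hrlt := lt_of_nf_eq_one cs hnf1
      have hrmem : d₀⁻¹ * t * d₀ ∈ Subgroup.closure S :=
        refl_mem_of_inversion cs hS hm₀mem hrrefl hrlt
      have hrlen : cs.length (d₀⁻¹ * t * d₀) = 1 := by
        have h1 : d₀ * (d₀⁻¹ * t * d₀) = t * d₀ := by group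
        have h2 := hradd (d₀⁻¹ * t * d₀) hrmem
        rw [h1] at h2
        have h3 := hladd t htmem
        rw [htlen] at h3
        omega
      have hrS : d₀⁻¹ * t * d₀ ∈ S := mem_S_of_length_one cs hS hrmem hrlen
      -- t is in the refined set
      have htS' : t ∈ {t ∈ S | v⁻¹ * t * v ∈ Subgroup.closure S} := by
        refine ⟨htS, ?_⟩
        have : v⁻¹ * t * v = c₀ * (d₀⁻¹ * t * d₀) * c₀⁻¹ := by
          rw [hd₀]; group
        rw [this]
        exact Subgroup.mul_mem _ (Subgroup.mul_mem _ hc₀ (Subgroup.subset_closure hrS))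
          (Subgroup.inv_mem _ hc₀)
      -- induct on t * u
      have hulen : 1 ≤ n := by omega
      have htu : t * u ∈ Subgroup.closure S :=
        Subgroup.mul_mem _ htmem hu
      have htuc : v⁻¹ * (t * u) * v ∈ Subgroup.closure S := by
        have : v⁻¹ * (t * u) * v = (v⁻¹ * t * v) * (v⁻¹ * u * v) := by group
        rw [this]
        exact Subgroup.mul_mem _ htS'.2 hcu
      have ihtu := ih (n - 1) (by omega) (t * u) (by omega) htu htuc
      have : u = t * (t * u) := by
        rw [← mul_assoc, S_mul_self cs hS htS, one_mul]
      rw [this]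
      exact Subgroup.mul_mem _ (Subgroup.subset_closure htS') ihtu

end Stmt4Aux

open Stmt4Aux

/-- with `v ∈ ᴶW` and `K` the largest subset of `J` with `v K v⁻¹ = K`,
if `w_J (v x) w_J⁻¹ = v x'` with `w_J ∈ W_J` and `x, x' ∈ W_K`, then `w_J ∈ W_K` and
`x' = σ⁻¹(w_J) x w_J⁻¹` where `σ = Ad(v)`. -/
theorem stmt4 (cs : CoxeterSystem M W) (J : Set B) (v : W)
    -- `v` is the minimal length representative of its coset `W_J v`
    (hv : ∀ y ∈ Subgroup.closure (cs.simple '' J), cs.length v ≤ cs.length (y * v))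
    (K : Set B) (hKJ : K ⊆ J)
    -- `v K v⁻¹ = K` (as sets of simple reflections)
    (hK : (fun g => v * g * v⁻¹) '' (cs.simple '' K) = cs.simple '' K)
    -- `K` is the largest such subset of `J`
    (hKmax : ∀ K' ⊆ J, (fun g => v * g * v⁻¹) '' (cs.simple '' K') = cs.simple '' K' → K' ⊆ K)
    (wJ x x' : W)
    (hwJ : wJ ∈ Subgroup.closure (cs.simple '' J))
    (hx : x ∈ Subgroup.closure (cs.simple '' K))
    (hx' : x' ∈ Subgroup.closure (cs.simple '' K))
    (h : wJ * (v * x) * wJ⁻¹ = v * x') :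
    wJ ∈ Subgroup.closure (cs.simple '' K) ∧ x' = (v⁻¹ * wJ * v) * x * wJ⁻¹ := by
  classical
  have hformula : x' = (v⁻¹ * wJ * v) * x * wJ⁻¹ := by
    have h2 : v⁻¹ * (wJ * (v * x) * wJ⁻¹) = x' := by rw [h]; group
    rw [← h2]; group
  refine ⟨?_, hformula⟩
  have hshape : v⁻¹ * wJ * v = x' * wJ * x⁻¹ := by
    have h3 : x' * wJ * x⁻¹ = ((v⁻¹ * wJ * v) * x * wJ⁻¹) * wJ * x⁻¹ := by rw [← hformula]
    rw [h3]; group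
  -- The chain of sets of simple reflections
  let Sn : ℕ → Set W := fun n => Nat.rec (cs.simple '' J)
      (fun _ Sp => {t ∈ Sp | v⁻¹ * t * v ∈ Subgroup.closure Sp}) n
  have hSn_zero : Sn 0 = cs.simple '' J := rfl
  have hSn_succ : ∀ n, Sn (n+1) = {t ∈ Sn n | v⁻¹ * t * v ∈ Subgroup.closure (Sn n)} :=
    fun n => rfl
  have hSn_subJ : ∀ n, Sn n ⊆ cs.simple '' J := by
    intro n
    induction n with
    | zero => exact fun t ht => ht
    | succ m ih => exact fun t ht => ih ht.1
  have hSn_simples : ∀ n, ∀ g ∈ Sn n, ∃ i : B, g = cs.simple i := by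
    intro n g hg
    obtain ⟨b, _, rfl⟩ := hSn_subJ n hg
    exact ⟨b, rfl⟩
  have hSn_min : ∀ n, ∀ y ∈ Subgroup.closure (Sn n), cs.length v ≤ cs.length (y * v) := by
    intro n y hy
    exact hv y (Subgroup.closure_mono (hSn_subJ n) hy)
  have hK_sub : ∀ n, cs.simple '' K ⊆ Sn n := by
    intro n
    induction n with
    | zero => exact Set.image_mono hKJ
    | succ m ih =>
        intro t ht
        refine ⟨ih ht, ?_⟩
        have : t ∈ (fun g => v * g * v⁻¹) '' (cs.simple '' K) := by rw [hK]; exact ht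
        obtain ⟨s₀, hs₀, hst⟩ := this
        have : v⁻¹ * t * v = s₀ := by rw [← hst]; group
        rw [this]
        exact Subgroup.subset_closure (ih hs₀)
  have hw_mem : ∀ n, wJ ∈ Subgroup.closure (Sn n) := by
    intro n
    induction n with
    | zero => exact hwJ
    | succ m ih =>
        have hcu : v⁻¹ * wJ * v ∈ Subgroup.closure (Sn m) := by
          rw [hshape]
          have hxm : x ∈ Subgroup.closure (Sn m) :=
            Subgroup.closure_mono (hK_sub m) hx
          have hx'm : x' ∈ Subgroup.closure (Sn m) :=
            Subgroup.closure_mono (hK_sub m) hx'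
          exact Subgroup.mul_mem _ (Subgroup.mul_mem _ hx'm ih) (Subgroup.inv_mem _ hxm)
        exact kilmoyer_step cs (hSn_simples m) v (hSn_min m) wJ ih hcu
  -- The limit set
  let Sinf : Set W := ⋂ n, Sn n
  have hSinf_sub : ∀ n, Sinf ⊆ Sn n := fun n => Set.iInter_subset _ n
  have hSinf_simples : ∀ g ∈ Sinf, ∃ i : B, g = cs.simple i :=
    fun g hg => hSn_simples 0 g (hSinf_sub 0 hg)
  have hSinf_min : ∀ y ∈ Subgroup.closure Sinf, cs.length v ≤ cs.length (y * v) :=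
    fun y hy => hSn_min 0 y (Subgroup.closure_mono (hSinf_sub 0) hy)
  have hWinf : ∀ g : W, (∀ n, g ∈ Subgroup.closure (Sn n)) → g ∈ Subgroup.closure Sinf := by
    intro g hg
    obtain ⟨ω, hred, rfl⟩ := cs.exists_reduced_word' g
    apply word_mem_closure
    intro c hc
    apply Set.mem_iInter.mpr
    intro n
    exact letters_mem_of_reduced cs (hSn_simples n) ω hred (hg n) c hc
  have hw_inf : wJ ∈ Subgroup.closure Sinf := hWinf wJ hw_mem
  have hback : ∀ g ∈ Subgroup.closure Sinf, v⁻¹ * g * v ∈ Subgroup.closure Sinf := by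
    intro g hg
    apply hWinf
    intro n
    have hg1 : g ∈ Subgroup.closure (Sn (n+1)) :=
      Subgroup.closure_mono (hSinf_sub (n+1)) hg
    have himg : (fun t => v⁻¹ * t * v) '' (Sn (n+1)) ⊆ Subgroup.closure (Sn n) := by
      rintro _ ⟨t, ht, rfl⟩
      exact ht.2
    have hmap := MonoidHom.map_closure ((MulAut.conj v⁻¹).toMonoidHom) (Sn (n+1))
    have hmem : (MulAut.conj v⁻¹).toMonoidHom g
        ∈ (Subgroup.closure (Sn (n+1))).map ((MulAut.conj v⁻¹).toMonoidHom) :=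
      Subgroup.mem_map_of_mem _ hg1
    rw [hmap] at hmem
    have hconj : ((MulAut.conj v⁻¹).toMonoidHom : W → W) = fun t => v⁻¹ * t * v := by
      funext t
      simp [MulAut.conj_apply]
    rw [hconj] at hmem
    exact (Subgroup.closure_le _ |>.mpr himg) hmem
  -- minimal coset representative v₀ = v * c₀
  obtain ⟨c₀, hc₀, hradd, hladd⟩ := exists_coset_min cs hSinf_simples v hSinf_min
  set v₀ := v * c₀ with hv₀def
  have hmu : ∀ t ∈ Sinf, v₀⁻¹ * t * v₀ ∈ Sinf := by
    intro t ht
    have htc : t ∈ Subgroup.closure Sinf := Subgroup.subset_closure ht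
    have hrmem : v₀⁻¹ * t * v₀ ∈ Subgroup.closure Sinf := by
      have e1 : v₀⁻¹ * t * v₀ = c₀⁻¹ * (v⁻¹ * t * v) * c₀ := by rw [hv₀def]; group
      rw [e1]
      exact Subgroup.mul_mem _ (Subgroup.mul_mem _ (Subgroup.inv_mem _ hc₀)
        (hback t htc)) hc₀
    have hrlen : cs.length (v₀⁻¹ * t * v₀) = 1 := by
      have e2 : v₀ * (v₀⁻¹ * t * v₀) = t * v₀ := by group
      have h1 := hradd (v₀⁻¹ * t * v₀) hrmem
      rw [e2] at h1
      have h2 := hladd t htc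
      rw [S_length cs hSinf_simples ht] at h2
      omega
    exact mem_S_of_length_one cs hSinf_simples hrmem hrlen
  -- surjectivity of t ↦ v₀⁻¹ t v₀ on Sinf, via supports
  obtain ⟨ω₀, hred₀, hv₀w⟩ := cs.exists_reduced_word' v₀
  have hlenv₀ : cs.length v₀ = ω₀.length := by
    rw [hv₀w]; exact hred₀
  have hmu_surj : ∀ t ∈ Sinf, ∃ t' ∈ Sinf, v₀⁻¹ * t' * v₀ = t := by
    set Supp : Set W := {g | ∃ c ∈ ω₀, g = cs.simple c} with hSupp
    have hSuppFin : Supp.Finite := by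
      have : Supp = (fun c => cs.simple c) '' {c | c ∈ ω₀} := by
        ext g
        constructor
        · rintro ⟨c, hc, rfl⟩; exact ⟨c, hc, rfl⟩
        · rintro ⟨c, hc, rfl⟩; exact ⟨c, hc, rfl⟩
      rw [this]
      exact (ω₀.finite_toSet).image _
    have claim1 : ∀ t ∈ Sinf, v₀⁻¹ * t * v₀ ≠ t → t ∈ Supp ∧ (v₀⁻¹ * t * v₀) ∈ Supp := by
      intro t ht hne
      obtain ⟨b, rfl⟩ := hSinf_simples t ht
      have ht' := hmu _ ht
      obtain ⟨b', hb'⟩ := hSinf_simples _ ht'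
      have hw1red : cs.IsReduced (b :: ω₀) := by
        unfold CoxeterSystem.IsReduced
        rw [cs.wordProd_cons, ← hv₀w]
        have := hladd (cs.simple b) (Subgroup.subset_closure ht)
        rw [cs.length_simple] at this
        simp only [List.length_cons]
        omega
      have hw2red : cs.IsReduced (ω₀ ++ [b']) := by
        unfold CoxeterSystem.IsReduced
        rw [cs.wordProd_append, cs.wordProd_singleton, ← hv₀w, ← hb']
        have := hradd _ (Subgroup.subset_closure ht')
        rw [S_length cs hSinf_simples ht'] at this
        simp only [List.length_append, List.length_singleton]
        omega
      have hsame : cs.wordProd (b :: ω₀) = cs.wordProd (ω₀ ++ [b']) := by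
        rw [cs.wordProd_cons, cs.wordProd_append, cs.wordProd_singleton, ← hv₀w, ← hb']
        group
      -- letters of word2 lie in letters of word1 and vice versa
      set L1 : Set W := {g | ∃ c ∈ (b :: ω₀), g = cs.simple c} with hL1
      set L2 : Set W := {g | ∃ c ∈ (ω₀ ++ [b']), g = cs.simple c} with hL2
      have hL1s : ∀ g ∈ L1, ∃ i : B, g = cs.simple i := by
        rintro g ⟨c, _, rfl⟩; exact ⟨c, rfl⟩
      have hL2s : ∀ g ∈ L2, ∃ i : B, g = cs.simple i := by
        rintro g ⟨c, _, rfl⟩; exact ⟨c, rfl⟩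
      have hmem1 : cs.wordProd (b :: ω₀) ∈ Subgroup.closure L1 :=
        word_mem_closure cs (fun c hc => ⟨c, hc, rfl⟩)
      have hmem2 : cs.wordProd (ω₀ ++ [b']) ∈ Subgroup.closure L2 :=
        word_mem_closure cs (fun c hc => ⟨c, hc, rfl⟩)
      have hletters21 := letters_mem_of_reduced cs hL1s (ω₀ ++ [b']) hw2red
        (by rw [← hsame]; exact hmem1)
      have hletters12 := letters_mem_of_reduced cs hL2s (b :: ω₀) hw1red
        (by rw [hsame]; exact hmem2)
      constructor
      · have := hletters12 b (by simp)
        obtain ⟨c, hc, hcs⟩ := this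
        rcases List.mem_append.mp hc with hcw | hcb
        · exact ⟨c, hcw, hcs⟩
        · exfalso
          have : c = b' := by simpa using hcb
          rw [this] at hcs
          rw [← hcs] at hb'
          exact hne hb'
      · have := hletters21 b' (by simp)
        obtain ⟨c, hc, hcs⟩ := this
        rcases List.mem_cons.mp hc with hcb | hcw
        · exfalso
          rw [hcb] at hcs
          rw [hb', hcs]  at hne
          exact hne rfl
        · rw [hb']
          exact ⟨c, hcw, hcs⟩
    -- finiteness argument
    set f : W → W := fun t => v₀⁻¹ * t * v₀ with hf
    have hfinj : Function.Injective f := by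
      intro a b hab
      simp only [hf] at hab
      have := congrArg (fun z => v₀ * z * v₀⁻¹) hab
      calc a = v₀ * (v₀⁻¹ * a * v₀) * v₀⁻¹ := by group
        _ = v₀ * (v₀⁻¹ * b * v₀) * v₀⁻¹ := by rw [hab]
        _ = b := by group
    set A : Set W := Sinf ∩ Supp with hA
    have hAfin : A.Finite := hSuppFin.inter_of_right _
    have hmaps : Set.MapsTo f A A := by
      rintro t ⟨ht1, ht2⟩
      constructor
      · exact hmu t ht1
      · rcases eq_or_ne (f t) t with he | hne
        · rw [he]; exact ht2
        · exact (claim1 t ht1 hne).2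
    have hbij : Set.BijOn f A A :=
      (hAfin.injOn_iff_bijOn_of_mapsTo hmaps).mp (Function.Injective.injOn hfinj)
    intro t ht
    rcases eq_or_ne (f t) t with he | hne
    · exact ⟨t, ht, he⟩
    · have htA : t ∈ A := ⟨ht, (claim1 t ht hne).1⟩
      obtain ⟨t', ht'A, ht'e⟩ := hbij.surjOn htA
      exact ⟨t', ht'A.1, ht'e⟩
  -- group-level stability under conjugation
  have hgrp_fwd0 : ∀ g ∈ Subgroup.closure Sinf, v₀ * g * v₀⁻¹ ∈ Subgroup.closure Sinf := by
    have himg_eq : (fun t => v₀⁻¹ * t * v₀) '' Sinf = Sinf := by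
      apply Set.eq_of_subset_of_subset
      · rintro _ ⟨t, ht, rfl⟩; exact hmu t ht
      · intro t ht
        obtain ⟨t', ht', he⟩ := hmu_surj t ht
        exact ⟨t', ht', he⟩
    intro g hg
    have hmap := MonoidHom.map_closure ((MulAut.conj v₀⁻¹).toMonoidHom) Sinf
    have hconj : ((MulAut.conj v₀⁻¹).toMonoidHom : W → W) = fun t => v₀⁻¹ * t * v₀ := by
      funext t; simp [MulAut.conj_apply]
    rw [hconj, himg_eq] at hmap
    -- so map (conj v₀⁻¹) (closure Sinf) = closure Sinf; hence g is the image of some g'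
    have : g ∈ (Subgroup.closure Sinf).map ((MulAut.conj v₀⁻¹).toMonoidHom) := by
      rw [show (Subgroup.closure Sinf).map ((MulAut.conj v₀⁻¹).toMonoidHom)
        = Subgroup.closure Sinf from hmap]
      exact hg
    obtain ⟨g', hg', hge⟩ := Subgroup.mem_map.mp this
    have hge' : v₀⁻¹ * g' * v₀ = g := by
      rw [← hge]; simp [MulAut.conj_apply]
    have : v₀ * g * v₀⁻¹ = g' := by rw [← hge']; group
    rw [this]
    exact hg'
  have hfwd : ∀ g ∈ Subgroup.closure Sinf, v * g * v⁻¹ ∈ Subgroup.closure Sinf := by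
    intro g hg
    have e1 : v * g * v⁻¹ = v₀ * (c₀⁻¹ * g * c₀) * v₀⁻¹ := by rw [hv₀def]; group
    rw [e1]
    exact hgrp_fwd0 _ (Subgroup.mul_mem _ (Subgroup.mul_mem _ (Subgroup.inv_mem _ hc₀) hg) hc₀)
  -- J-level additivity for the nonincreasing estimate
  have hJsimples : ∀ g ∈ cs.simple '' J, ∃ i : B, g = cs.simple i := by
    rintro g ⟨b, _, rfl⟩; exact ⟨b, rfl⟩
  have hJadd := left_additive cs hJsimples hv
  -- Ad(v) maps Sinf to Sinf
  have hvS : ∀ t ∈ Sinf, v * t * v⁻¹ ∈ Sinf := by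
    intro t ht
    have h1 : v * t * v⁻¹ ∈ Subgroup.closure Sinf := hfwd t (Subgroup.subset_closure ht)
    have h1J : v * t * v⁻¹ ∈ Subgroup.closure (cs.simple '' J) :=
      Subgroup.closure_mono (hSinf_sub 0) h1
    have h2 : cs.length (v * t * v⁻¹) ≤ 1 := by
      have e2 : (v * t * v⁻¹) * v = v * t := by group
      have h3 := hJadd (v * t * v⁻¹) h1J
      rw [e2] at h3
      have h4 : cs.length (v * t) ≤ cs.length v + 1 := by
        have := cs.length_mul_le v t
        rw [S_length cs hSinf_simples ht] at this
        omega
      omega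
    have h5 : v * t * v⁻¹ ≠ 1 := by
      intro hcon
      have ht1 : t = 1 := by
        calc t = v⁻¹ * (v * t * v⁻¹) * v := by group
          _ = v⁻¹ * 1 * v := by rw [hcon]
          _ = 1 := by group
      have hl := S_length cs hSinf_simples ht
      rw [ht1, cs.length_one] at hl
      omega
    have h6 : cs.length (v * t * v⁻¹) = 1 := by
      rcases Nat.eq_zero_or_pos (cs.length (v * t * v⁻¹)) with h0 | hp
      · exact absurd ((cs.length_eq_zero_iff).mp h0) h5
      · omega
    exact mem_S_of_length_one cs hSinf_simples h1 h6
  -- Ad(v) is onto Sinf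
  have hvS_surj : ∀ t ∈ Sinf, ∃ t' ∈ Sinf, v * t' * v⁻¹ = t := by
    intro t ht
    set Img : Set W := (fun t => v * t * v⁻¹) '' Sinf with hImg
    have hImgs : ∀ g ∈ Img, ∃ i : B, g = cs.simple i := by
      rintro g ⟨t', ht', rfl⟩
      exact hSinf_simples _ (hvS t' ht')
    have hImgsub : Img ⊆ Sinf := by
      rintro _ ⟨t', ht', rfl⟩; exact hvS t' ht'
    have hclo : t ∈ Subgroup.closure Img := by
      -- t = v * (v⁻¹ t v) * v⁻¹ with v⁻¹ t v ∈ closure Sinf = closure of preimages...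
      have h1 : v⁻¹ * t * v ∈ Subgroup.closure Sinf := hback t (Subgroup.subset_closure ht)
      have hmap := MonoidHom.map_closure ((MulAut.conj v).toMonoidHom) Sinf
      have hconj : ((MulAut.conj v).toMonoidHom : W → W) = fun t => v * t * v⁻¹ := by
        funext z; simp [MulAut.conj_apply]
      rw [hconj] at hmap
      have h2 : (fun t => v * t * v⁻¹) (v⁻¹ * t * v)
          ∈ (Subgroup.closure Sinf).map ((MulAut.conj v).toMonoidHom) := by
        have := Subgroup.mem_map_of_mem ((MulAut.conj v).toMonoidHom) h1
        rwa [show ((MulAut.conj v).toMonoidHom) (v⁻¹ * t * v) =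
          (fun t => v * t * v⁻¹) (v⁻¹ * t * v) from by rw [hconj]] at this
      rw [hmap] at h2
      have e3 : (fun t => v * t * v⁻¹) (v⁻¹ * t * v) = t := by simp only; group
      rwa [e3] at h2
    have := mem_S_of_length_one cs hImgs hclo (S_length cs hSinf_simples ht)
    obtain ⟨t', ht', he⟩ := this
    exact ⟨t', ht', he⟩
  -- apply maximality
  set K' : Set B := {b : B | b ∈ J ∧ cs.simple b ∈ Sinf} with hK'
  have hK'img : cs.simple '' K' = Sinf := by
    apply Set.eq_of_subset_of_subset
    · rintro _ ⟨b, hb, rfl⟩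
      exact hb.2
    · intro t ht
      obtain ⟨b, hbJ, hbt⟩ := hSn_subJ 0 (hSinf_sub 0 ht)
      exact ⟨b, ⟨hbJ, by rw [hbt]; exact ht⟩, hbt⟩
  have hK'stable : (fun g => v * g * v⁻¹) '' (cs.simple '' K') = cs.simple '' K' := by
    rw [hK'img]
    apply Set.eq_of_subset_of_subset
    · rintro _ ⟨t, ht, rfl⟩
      exact hvS t ht
    · intro t ht
      obtain ⟨t', ht', he⟩ := hvS_surj t ht
      exact ⟨t', ht', he⟩
  have hK'K : K' ⊆ K := hKmax K' (fun b hb => hb.1) hK'stable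
  have : Subgroup.closure Sinf ≤ Subgroup.closure (cs.simple '' K) := by
    rw [← hK'img]
    exact Subgroup.closure_mono (Set.image_mono hK'K)
  exact this hw_inf
end

section
/- Let (W,S) be a Coxeter system, J ⊆ S spherical (i.e. W_J finite), and let w be the unique maximal length element of a double coset W_J w' W_J. Set K = { s ∈ J : w s w⁻¹ ∈ W_J }. Then in fact K = { s ∈ J : w s w⁻¹ ∈ J }, i.e. for every s ∈ K, the element w s w⁻¹ is itself a simple reflection in J. -/
open List CoxeterSystem

variable {B W : Type*} [Group W] {M : CoxeterMatrix B}

namespace Stmt8Aux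

variable (cs : CoxeterSystem M W)

local prefix:100 "s" => cs.simple
local prefix:100 "π" => cs.wordProd
local prefix:100 "ℓ" => cs.length

noncomputable instance : DecidableEq W := Classical.decEq W

/-- underlying function of the permutation attached to a simple reflection -/
noncomputable def muFun (i : B) (x : W × ZMod 2) : W × ZMod 2 :=
  (s i * x.1 * s i, x.2 + if x.1 = s i then 1 else 0)

lemma muFun_invol (i : B) (x : W × ZMod 2) : muFun cs i (muFun cs i x) = x := by
  obtain ⟨x, e⟩ := x
  simp only [muFun]
  have h1 : s i * (s i * x * s i) * s i = x := by
    rw [mul_assoc, cs.simple_mul_simple_cancel_right, cs.simple_mul_simple_cancel_left]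
  have h2 : (s i * x * s i = s i) ↔ (x = s i) := by
    constructor
    · intro h
      have := congrArg (fun z => s i * z * s i) h
      rw [h1] at this
      rw [this, cs.simple_mul_simple_cancel_right]
    · rintro rfl
      rw [cs.simple_mul_simple_cancel_right]
  ext
  · exact h1
  · simp only [h2]
    rcases eq_or_ne x (s i) with h | h
    · have h11 : (1 + 1 : ZMod 2) = 0 := rfl
      simp [h, add_assoc, h11]
    · simp [h]

/-- The permutation of `W × ZMod 2` attached to a simple reflection. -/
noncomputable def mu (i : B) : Equiv.Perm (W × ZMod 2) :=
  ⟨muFun cs i, muFun cs i, muFun_invol cs i, muFun_invol cs i⟩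

lemma mu_apply (i : B) (x : W) (e : ZMod 2) :
    mu cs i (x, e) = (s i * x * s i, e + if x = s i then 1 else 0) := rfl

/-- word action -/
noncomputable def muWord (ω : List B) : Equiv.Perm (W × ZMod 2) :=
  (ω.map (mu cs)).prod

lemma muWord_nil : muWord cs [] = 1 := rfl

lemma muWord_cons (i : B) (ω : List B) :
    muWord cs (i :: ω) = mu cs i * muWord cs ω := by
  simp [muWord]

lemma muWord_apply (ω : List B) (x : W) (e : ZMod 2) :
    muWord cs ω (x, e) =
      (π ω * x * (π ω)⁻¹, e + ((cs.rightInvSeq ω).count x : ZMod 2)) := by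
  induction ω generalizing e with
  | nil => simp [muWord_nil]
  | cons i ω ih =>
    rw [muWord_cons, Equiv.Perm.mul_apply, ih, mu_apply, cs.wordProd_cons, rightInvSeq]
    have hinv : (s i * π ω)⁻¹ = (π ω)⁻¹ * s i := by
      rw [mul_inv_rev, cs.inv_simple]
    rw [hinv, Prod.mk.injEq]
    constructor
    · group
    · by_cases h : π ω * x * (π ω)⁻¹ = s i
      · have hx : x = (π ω)⁻¹ * s i * π ω := by
          rw [← h]; group
        rw [if_pos h, List.count_cons, if_pos (by rw [beq_iff_eq]; exact hx.symm)]
        push_cast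
        ring
      · have hx : ¬ (x = (π ω)⁻¹ * s i * π ω) := by
          intro hc
          apply h
          rw [hc]; group
        rw [if_neg h, List.count_cons, if_neg (by rw [beq_iff_eq]; exact fun hc => hx hc.symm)]
        push_cast
        ring

lemma rightInvSeq_append' (χ ω : List B) :
    cs.rightInvSeq (χ ++ ω) =
      (cs.rightInvSeq χ).map (fun t => (π ω)⁻¹ * t * π ω) ++ cs.rightInvSeq ω := by
  induction χ with
  | nil => simp [rightInvSeq]
  | cons i χ ih =>
    show cs.rightInvSeq ((i :: χ) ++ ω) = _
    rw [List.cons_append]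
    show (π (χ ++ ω))⁻¹ * (s i) * (π (χ ++ ω)) :: cs.rightInvSeq (χ ++ ω) = _
    rw [ih, cs.wordProd_append]
    simp [rightInvSeq, mul_assoc]

lemma muWord_append (χ ω : List B) :
    muWord cs (χ ++ ω) = muWord cs χ * muWord cs ω := by
  simp [muWord]

/-- the word `[i, i', i, i', ...]` of length `2 * k` -/
def repWord (i i' : B) : ℕ → List B
  | 0 => []
  | (k + 1) => i :: i' :: repWord i i' k

lemma repWord_prod (i i' : B) (k : ℕ) : π (repWord i i' k) = (s i * s i') ^ k := by
  induction k with
  | zero => simp [repWord]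
  | succ k ih =>
    rw [repWord, cs.wordProd_cons, cs.wordProd_cons, ih, pow_succ']
    group

lemma simple_mul_pow (i i' : B) (k : ℕ) :
    s i' * (s i * s i') ^ k = (s i' * s i) ^ k * s i' := by
  induction k with
  | zero => simp
  | succ k ih =>
    calc s i' * (s i * s i') ^ (k + 1)
        = (s i' * s i) * (s i' * (s i * s i') ^ k) := by rw [pow_succ']; simp [mul_assoc]
      _ = (s i' * s i) * ((s i' * s i) ^ k * s i') := by rw [ih]
      _ = (s i' * s i) ^ (k + 1) * s i' := by rw [pow_succ']; simp [mul_assoc]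

lemma repWord_ris (i i' : B) (k : ℕ) :
    cs.rightInvSeq (repWord i i' k) =
      ((List.range (2 * k)).reverse).map (fun l => (s i' * s i) ^ l * s i') := by
  induction k with
  | zero => simp [repWord, rightInvSeq]
  | succ k ih =>
    have hsplit : repWord i i' (k + 1) = [i, i'] ++ repWord i i' k := rfl
    rw [hsplit, rightInvSeq_append' cs, ih, repWord_prod cs]
    have hris2 : cs.rightInvSeq [i, i'] = [s i' * s i * s i', s i'] := by
      show (π [i'])⁻¹ * (s i) * (π [i']) :: cs.rightInvSeq [i'] = _
      show (π [i'])⁻¹ * (s i) * (π [i']) :: ((π [])⁻¹ * (s i') * (π []) :: _) = _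
      simp [cs.inv_simple]
    rw [hris2]
    have hinvpow : ((s i * s i') ^ k)⁻¹ = (s i' * s i) ^ k := by
      rw [← inv_pow, mul_inv_rev, cs.inv_simple, cs.inv_simple]
    have key0 : ((s i * s i') ^ k)⁻¹ * (s i') * (s i * s i') ^ k
        = (s i' * s i) ^ (2 * k) * s i' := by
      rw [hinvpow, mul_assoc, simple_mul_pow cs, ← mul_assoc, ← pow_add, two_mul]
    have key1 : ((s i * s i') ^ k)⁻¹ * (s i' * s i * s i') * (s i * s i') ^ k
        = (s i' * s i) ^ (2 * k + 1) * s i' := by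
      rw [hinvpow]
      calc (s i' * s i) ^ k * (s i' * s i * s i') * (s i * s i') ^ k
          = (s i' * s i) ^ k * (s i' * s i) * (s i' * (s i * s i') ^ k) := by
            simp [mul_assoc]
        _ = (s i' * s i) ^ k * (s i' * s i) * ((s i' * s i) ^ k * s i') := by
            rw [simple_mul_pow cs]
        _ = ((s i' * s i) ^ k * (s i' * s i) ^ 1 * (s i' * s i) ^ k) * s i' := by
            rw [pow_one]; simp [mul_assoc]
        _ = (s i' * s i) ^ (2 * k + 1) * s i' := by
            have h3 : k + 1 + k = 2 * k + 1 := by omega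
            rw [← pow_add, ← pow_add, h3]
    have hrange : List.range (2 * (k + 1)) = List.range (2 * k) ++ [2 * k, 2 * k + 1] := by
      have h2 : 2 * (k + 1) = 2 * k + 2 := by ring
      rw [h2, List.range_add]
      rfl
    rw [hrange]
    simp only [List.reverse_append, List.map_append, List.map_cons, List.map_nil]
    rw [key0, key1]
    simp

lemma zmod2_cases (a : ZMod 2) : a = 0 ∨ a = 1 := by revert a; decide

lemma zmod2_eq_of_add_eq_zero {a b : ZMod 2} (h : a + b = 0) : a = b := by
  revert h; revert a b; decide

lemma muLiftable : CoxeterMatrix.IsLiftable M (mu cs) := by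
  intro i i'
  have h2 : ∀ k : ℕ, (mu cs i * mu cs i') ^ k = muWord cs (repWord i i' k) := by
    intro k
    induction k with
    | zero => simp [repWord, muWord]
    | succ k ih =>
      rw [pow_succ', ih]
      have hs : repWord i i' (k + 1) = [i, i'] ++ repWord i i' k := rfl
      rw [hs, muWord_append]
      congr 1
  rw [h2]
  apply Equiv.ext
  rintro ⟨x, e⟩
  rw [muWord_apply]
  have hπ : π (repWord i i' (M i i')) = 1 := by
    rw [repWord_prod]; exact cs.simple_mul_simple_pow i i'
  have hcount : (((cs.rightInvSeq (repWord i i' (M i i'))).count x : ℕ) : ZMod 2) = 0 := by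
    rw [repWord_ris]
    rw [List.map_reverse, List.count_reverse]
    have hr : List.range (2 * M i i') = List.range (M i i') ++
        (List.range (M i i')).map (M i i' + ·) := by
      rw [two_mul, List.range_add]
    rw [hr, List.map_append, List.count_append]
    have hmap : ((List.range (M i i')).map (M i i' + ·)).map
          (fun l => (s i' * s i) ^ l * s i')
        = (List.range (M i i')).map (fun l => (s i' * s i) ^ l * s i') := by
      rw [List.map_map]
      apply List.map_congr_left
      intro a _
      show (s i' * s i) ^ (M i i' + a) * s i' = (s i' * s i) ^ a * s i'
      rw [pow_add, cs.simple_mul_simple_pow' i i', one_mul]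
    rw [hmap, ← two_mul]
    push_cast
    have h20 : (2 : ZMod 2) = 0 := rfl
    rw [h20, zero_mul]
  rw [hπ, hcount]
  simp

/-- The reflection representation homomorphism. -/
noncomputable def phi : W →* Equiv.Perm (W × ZMod 2) := cs.lift ⟨mu cs, muLiftable cs⟩

lemma phi_simple (i : B) : phi cs (s i) = mu cs i := cs.lift_apply_simple (muLiftable cs) i

lemma phi_wordProd (ω : List B) : phi cs (π ω) = muWord cs ω := by
  unfold wordProd muWord
  rw [map_list_prod]
  congr 1
  rw [List.map_map]
  apply List.map_congr_left
  intro i _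
  exact phi_simple cs i

/-- parity invariant -/
noncomputable def nn (w t : W) : ZMod 2 := (phi cs w (t, 0)).2

lemma nn_word (ω : List B) (x : W) :
    nn cs (π ω) x = ((cs.rightInvSeq ω).count x : ZMod 2) := by
  rw [nn, phi_wordProd, muWord_apply, zero_add]

lemma phi_apply (w x : W) (e : ZMod 2) :
    phi cs w (x, e) = (w * x * w⁻¹, e + nn cs w x) := by
  obtain ⟨ω, rfl⟩ := cs.wordProd_surjective w
  rw [phi_wordProd, muWord_apply, nn_word]

lemma nn_mul (u v x : W) : nn cs (u * v) x = nn cs v x + nn cs u (v * x * v⁻¹) := by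
  have h : phi cs (u * v) (x, 0) = phi cs u (phi cs v (x, 0)) := by
    rw [map_mul]; rfl
  rw [phi_apply, phi_apply, phi_apply] at h
  have := congrArg Prod.snd h
  simpa using this

lemma nn_one (x : W) : nn cs 1 x = 0 := by
  have : π ([] : List B) = 1 := cs.wordProd_nil
  rw [← this, nn_word]
  simp

lemma nn_inv (u x : W) : nn cs u⁻¹ x = nn cs u (u⁻¹ * x * u) := by
  have h := nn_mul cs u u⁻¹ x
  rw [mul_inv_cancel, nn_one] at h
  have h2 : u⁻¹ * x * u⁻¹⁻¹ = u⁻¹ * x * u := by rw [inv_inv]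
  rw [h2] at h
  exact zmod2_eq_of_add_eq_zero h.symm

lemma nn_simple_self (i : B) : nn cs (s i) (s i) = 1 := by
  have : π [i] = s i := cs.wordProd_singleton i
  rw [← this, nn_word]
  have : cs.rightInvSeq [i] = [s i] := by
    show (π [])⁻¹ * (s i) * (π []) :: _ = _
    simp
  rw [this]
  simp

lemma nn_refl_self {t : W} (ht : cs.IsReflection t) : nn cs t t = 1 := by
  obtain ⟨u, i, rfl⟩ := ht
  have e1 : nn cs (u * cs.simple i * u⁻¹) (u * cs.simple i * u⁻¹)
      = nn cs u⁻¹ (u * cs.simple i * u⁻¹) + nn cs (u * cs.simple i)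
        (u⁻¹ * (u * cs.simple i * u⁻¹) * u⁻¹⁻¹) := by
    rw [← nn_mul cs (u * cs.simple i) u⁻¹]
  have e2 : u⁻¹ * (u * cs.simple i * u⁻¹) * u⁻¹⁻¹ = s i := by group
  have e3 : nn cs u⁻¹ (u * cs.simple i * u⁻¹) = nn cs u (s i) := by
    rw [nn_inv]
    congr 1
    group
  have e4 : nn cs (u * cs.simple i) (s i) = nn cs (s i) (s i) + nn cs u (s i) := by
    rw [nn_mul]
    congr 2
    rw [cs.inv_simple]
    rw [cs.simple_mul_simple_cancel_right]
  rw [e1, e2, e3, e4, nn_simple_self]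
  clear e1 e2 e3 e4
  generalize nn cs u (s i) = a
  revert a; decide

lemma mem_ris_of_nn_one {t w : W} (h : nn cs w t = 1) (ω : List B) (hω : π ω = w) :
    t ∈ cs.rightInvSeq ω := by
  have hc := nn_word cs ω t
  rw [hω, h] at hc
  by_contra hmem
  rw [List.count_eq_zero_of_not_mem hmem] at hc
  simp at hc

lemma isRightInversion_iff_nn_one {t : W} (ht : cs.IsReflection t) (w : W) :
    cs.IsRightInversion w t ↔ nn cs w t = 1 := by
  constructor
  · intro hinv
    rcases zmod2_cases (nn cs w t) with h0 | h1
    · exfalso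
      have hwt : nn cs (w * t) t = 1 := by
        rw [nn_mul]
        have h2 : t * t * t⁻¹ = t := by rw [ht.mul_self, one_mul, ht.inv]
        rw [h2, h0, nn_refl_self cs ht, add_zero]
      obtain ⟨ω, hred, hw⟩ := cs.exists_reduced_word' (w * t)
      have hmem := mem_ris_of_nn_one cs hwt ω hw.symm
      have hinv2 := cs.isRightInversion_of_mem_rightInvSeq hred hmem
      rw [← hw] at hinv2
      have : w * t * t = w := by rw [mul_assoc, ht.mul_self, mul_one]
      have hlt2 := hinv2.2
      rw [this] at hlt2
      exact Nat.lt_asymm hinv.2 hlt2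
    · exact h1
  · intro h1
    obtain ⟨ω, hred, hw⟩ := cs.exists_reduced_word' w
    have hmem := mem_ris_of_nn_one cs h1 ω hw.symm
    have := cs.isRightInversion_of_mem_rightInvSeq hred hmem
    rwa [← hw] at this

/-- Strong exchange property (right version). -/
lemma strong_exchange {t w : W} (ht : cs.IsReflection t) (hlt : ℓ (w * t) < ℓ w)
    (ω : List B) (hω : π ω = w) : ∃ k < ω.length, w * t = π (ω.eraseIdx k) := by
  have h1 : nn cs w t = 1 := (isRightInversion_iff_nn_one cs ht w).mp ⟨ht, hlt⟩
  have hmem := mem_ris_of_nn_one cs h1 ω hω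
  obtain ⟨k, hk, hkt⟩ := List.mem_iff_getElem.mp hmem
  rw [cs.length_rightInvSeq] at hk
  refine ⟨k, hk, ?_⟩
  have hgd := cs.wordProd_mul_getD_rightInvSeq ω k
  rw [List.getD_eq_getElem _ 1 (by rwa [cs.length_rightInvSeq]), hkt, hω] at hgd
  exact hgd

section WordsOverJ

variable (J : Set B)

lemma word_mem_closure (ω : List B) (hω : ∀ i ∈ ω, i ∈ J) :
    π ω ∈ Subgroup.closure (cs.simple '' J) := by
  induction ω with
  | nil => rw [cs.wordProd_nil]; exact one_mem _
  | cons i ω ih =>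
    rw [cs.wordProd_cons]
    exact mul_mem (Subgroup.subset_closure ⟨i, hω i List.mem_cons_self, rfl⟩)
      (ih fun j hj => hω j (List.mem_cons_of_mem i hj))

lemma exists_word_of_mem_closure {x : W} (hx : x ∈ Subgroup.closure (cs.simple '' J)) :
    ∃ ω : List B, (∀ i ∈ ω, i ∈ J) ∧ π ω = x := by
  induction hx using Subgroup.closure_induction with
  | mem x hxm =>
    obtain ⟨i, hi, rfl⟩ := hxm
    exact ⟨[i], by simpa using hi, cs.wordProd_singleton i⟩
  | one => exact ⟨[], by simp, cs.wordProd_nil⟩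
  | mul x y _ _ hx hy =>
    obtain ⟨ω₁, h1, e1⟩ := hx
    obtain ⟨ω₂, h2, e2⟩ := hy
    refine ⟨ω₁ ++ ω₂, ?_, by rw [cs.wordProd_append, e1, e2]⟩
    intro i hi
    rcases List.mem_append.mp hi with h | h
    · exact h1 i h
    · exact h2 i h
  | inv x _ hx =>
    obtain ⟨ω, h1, e1⟩ := hx
    exact ⟨ω.reverse, fun i hi => h1 i (List.mem_reverse.mp hi),
      by rw [cs.wordProd_reverse, e1]⟩

lemma ris_mem_closure {t : W} (ω : List B) (hω : ∀ i ∈ ω, i ∈ J)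
    (ht : t ∈ cs.rightInvSeq ω) : t ∈ Subgroup.closure (cs.simple '' J) := by
  induction ω with
  | nil => simp [rightInvSeq] at ht
  | cons i ω ih =>
    have hd : cs.rightInvSeq (i :: ω) = ((π ω)⁻¹ * (s i) * (π ω)) :: cs.rightInvSeq ω := rfl
    rw [hd] at ht
    rcases List.mem_cons.mp ht with h | h
    · subst h
      have hωc : π ω ∈ Subgroup.closure (cs.simple '' J) :=
        word_mem_closure cs J ω fun j hj => hω j (List.mem_cons_of_mem i hj)
      exact mul_mem (mul_mem (inv_mem hωc)
        (Subgroup.subset_closure ⟨i, hω i List.mem_cons_self, rfl⟩)) hωc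
    · exact ih (fun j hj => hω j (List.mem_cons_of_mem i hj)) h

lemma exists_reduced_word_over (n : ℕ) : ∀ ω : List B, ω.length ≤ n → (∀ i ∈ ω, i ∈ J) →
    ∃ ω' : List B, (∀ i ∈ ω', i ∈ J) ∧ cs.IsReduced ω' ∧ π ω' = π ω := by
  induction n with
  | zero =>
    intro ω hlen _
    have : ω = [] := List.eq_nil_of_length_eq_zero (Nat.le_zero.mp hlen)
    subst this
    exact ⟨[], by simp, by simp [CoxeterSystem.IsReduced], rfl⟩
  | succ n ih =>
    intro ω hlen hJ
    by_cases hred : cs.IsReduced ω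
    · exact ⟨ω, hJ, hred, rfl⟩
    · rcases List.eq_nil_or_concat' ω with rfl | ⟨ω₁, i, rfl⟩
      · exact absurd (by simp [CoxeterSystem.IsReduced]) hred
      · have hJ1 : ∀ j ∈ ω₁, j ∈ J := fun j hj => hJ j (by simp [hj])
        have hiJ : i ∈ J := hJ i (by simp)
        have hlen1 : ω₁.length ≤ n := by
          have := hlen
          simp only [List.length_append, List.length_singleton] at this
          omega
        obtain ⟨ω₁', hJ1', hred1, hprod1⟩ := ih ω₁ hlen1 hJ1
        have hπ : π (ω₁' ++ [i]) = π (ω₁ ++ [i]) := by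
          rw [cs.wordProd_append, cs.wordProd_append, hprod1]
        by_cases h2 : cs.IsReduced (ω₁' ++ [i])
        · exact ⟨ω₁' ++ [i], by
            intro j hj
            rcases List.mem_append.mp hj with h | h
            · exact hJ1' j h
            · simp at h; subst h; exact hiJ, h2, hπ⟩
        · have hlt : ℓ (π ω₁' * (s i)) < ℓ (π ω₁') := by
            have hne := cs.length_mul_simple_ne (π ω₁') i
            rcases cs.length_mul_simple (π ω₁') i with h | h
            · exfalso
              apply h2
              show ℓ (π (ω₁' ++ [i])) = (ω₁' ++ [i]).length
              rw [cs.wordProd_append, cs.wordProd_singleton, h, hred1]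
              simp
            · omega
          obtain ⟨k, hk, hkeq⟩ := strong_exchange cs (cs.isReflection_simple i) hlt ω₁' rfl
          have hlenE : (ω₁'.eraseIdx k).length ≤ n := by
            have h1 : ω₁'.length = ℓ (π ω₁') := hred1.symm
            have h2' : ℓ (π ω₁') = ℓ (π ω₁) := by rw [hprod1]
            have h3 : ℓ (π ω₁) ≤ ω₁.length := cs.length_wordProd_le ω₁
            have h4 := List.length_eraseIdx_add_one hk
            omega
          obtain ⟨ω'', hJ2, hred2, hprod2⟩ := ih (ω₁'.eraseIdx k)
            hlenE (fun j hj => hJ1' j (List.mem_of_mem_eraseIdx hj))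
          refine ⟨ω'', hJ2, hred2, ?_⟩
          rw [hprod2, ← hkeq, ← hπ, cs.wordProd_append, cs.wordProd_singleton]

lemma exists_reduced_word_over' {x : W} (hx : x ∈ Subgroup.closure (cs.simple '' J)) :
    ∃ ω : List B, (∀ i ∈ ω, i ∈ J) ∧ cs.IsReduced ω ∧ π ω = x := by
  obtain ⟨ω, hJω, hprod⟩ := exists_word_of_mem_closure cs J hx
  obtain ⟨ω', h1, h2, h3⟩ := exists_reduced_word_over cs J ω.length ω le_rfl hJω
  exact ⟨ω', h1, h2, by rw [h3, hprod]⟩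

end WordsOverJ

lemma nn_simple (i : B) (x : W) : nn cs (s i) x = if x = s i then 1 else 0 := by
  have h1 : π [i] = s i := cs.wordProd_singleton i
  rw [← h1, nn_word]
  have h2 : cs.rightInvSeq [i] = [s i] := by
    show (π [])⁻¹ * (s i) * (π []) :: _ = _
    simp
  rw [h2]
  rcases eq_or_ne x (s i) with h | h
  · subst h; simp
  · simp [List.count_singleton', h1, h, Ne.symm h]

lemma inv_transfer_step {x y : W} {j : B} (hxj : ℓ (x * s j) < ℓ x)
    (hsub : ∀ t, cs.IsRightInversion x t → cs.IsRightInversion y t) :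
    ∀ t, cs.IsRightInversion (x * s j) t → cs.IsRightInversion (y * s j) t := by
  intro t hti
  have htr : cs.IsReflection t := hti.1
  have htne : t ≠ s j := by
    intro h
    subst h
    have := hti.2
    rw [mul_assoc, cs.simple_mul_simple_self, mul_one] at this
    omega
  have hconj : cs.IsReflection (s j * t * s j) := by
    have := htr.conj (s j)
    rwa [cs.inv_simple] at this
  have hnx : nn cs (x * s j) t = 1 :=
    (isRightInversion_iff_nn_one cs htr _).mp hti
  have hcoc : ∀ z : W, nn cs (z * s j) t = nn cs z (s j * t * s j) := by
    intro z
    rw [nn_mul, nn_simple, if_neg htne, zero_add, cs.inv_simple]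
  have h2 : nn cs x (s j * t * s j) = 1 := by rw [← hcoc]; exact hnx
  have h3 : cs.IsRightInversion x (s j * t * s j) :=
    (isRightInversion_iff_nn_one cs hconj _).mpr h2
  have h4 := hsub _ h3
  have h5 : nn cs y (s j * t * s j) = 1 :=
    (isRightInversion_iff_nn_one cs hconj _).mp h4
  refine (isRightInversion_iff_nn_one cs htr _).mpr ?_
  rw [hcoc]
  exact h5

lemma length_sub_of_inv_subset : ∀ n : ℕ, ∀ x y : W, ℓ x = n →
    (∀ t, cs.IsRightInversion x t → cs.IsRightInversion y t) →
    ℓ x ≤ ℓ y ∧ ℓ (y * x⁻¹) = ℓ y - ℓ x := by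
  intro n
  induction n with
  | zero =>
    intro x y hx _
    have : x = 1 := cs.length_eq_zero_iff.mp hx
    subst this
    simp [hx]
  | succ n ih =>
    intro x y hx hsub
    have hx1 : x ≠ 1 := by
      intro h; subst h; rw [cs.length_one] at hx; omega
    obtain ⟨j, hj⟩ := cs.exists_rightDescent_of_ne_one hx1
    have hj' : ℓ (x * s j) < ℓ x := hj
    have hxj : ℓ (x * s j) = n := by
      rcases cs.length_mul_simple x j with h | h <;> omega
    have hyj : cs.IsRightInversion y (s j) :=
      hsub (s j) ⟨cs.isReflection_simple j, hj'⟩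
    have hyj' : ℓ (y * s j) = ℓ y - 1 := by
      have := hyj.2
      rcases cs.length_mul_simple y j with h | h <;> omega
    have hy1 : 1 ≤ ℓ y := by
      have := hyj.2
      omega
    obtain ⟨h1, h2⟩ := ih (x * s j) (y * s j) hxj (inv_transfer_step cs hj' hsub)
    have hrw : y * s j * (x * s j)⁻¹ = y * x⁻¹ := by
      rw [mul_inv_rev, cs.inv_simple, ← mul_assoc, cs.simple_mul_simple_cancel_right]
    rw [hrw] at h2
    constructor
    · omega
    · rw [h2, hyj', hxj, hx]
      omega

lemma exists_coset_min (J : Set B) (g : W) :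
    ∃ y₀ ∈ Subgroup.closure (cs.simple '' J),
      ∀ y ∈ Subgroup.closure (cs.simple '' J), ℓ (g * y₀) ≤ ℓ (g * y) := by
  classical
  have hne : ∃ n, ∃ y ∈ Subgroup.closure (cs.simple '' J), ℓ (g * y) = n :=
    ⟨ℓ (g * 1), 1, one_mem _, rfl⟩
  obtain ⟨y₀, hy₀, hl⟩ := Nat.find_spec hne
  refine ⟨y₀, hy₀, fun y hy => ?_⟩
  rw [hl]
  exact Nat.find_min' hne ⟨y, hy, rfl⟩

lemma coset_min_mul (J : Set B) {g₀ : W}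
    (hmin : ∀ y ∈ Subgroup.closure (cs.simple '' J), ℓ g₀ ≤ ℓ (g₀ * y)) :
    ∀ n : ℕ, ∀ v ∈ Subgroup.closure (cs.simple '' J), ℓ v = n →
      ℓ (g₀ * v) = ℓ g₀ + ℓ v := by
  intro n
  induction n with
  | zero =>
    intro v _ hv
    have : v = 1 := cs.length_eq_zero_iff.mp hv
    subst this
    simp
  | succ n ih =>
    intro v hv hlv
    obtain ⟨κ, hκJ, hκred, hκprod⟩ := exists_reduced_word_over' cs J hv
    rcases List.eq_nil_or_concat' κ with rfl | ⟨κ₁, j, rfl⟩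
    · exfalso
      rw [cs.wordProd_nil] at hκprod
      rw [← hκprod, cs.length_one] at hlv
      omega
    · have hκ₁red : cs.IsReduced κ₁ := by
        have := hκred.take κ₁.length
        rwa [List.take_left] at this
      have hvsplit : v = π κ₁ * s j := by
        rw [← hκprod, cs.wordProd_append, cs.wordProd_singleton]
      have hlv' : ℓ (π κ₁) = n := by
        have h1 : ℓ (π (κ₁ ++ [j])) = κ₁.length + 1 := by
          rw [hκred]; simp
        have h2 : ℓ (π κ₁) = κ₁.length := hκ₁red
        rw [hκprod] at h1
        omega
      have hκ₁J : ∀ i ∈ κ₁, i ∈ J := fun i hi => hκJ i (by simp [hi])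
      have hκ₁mem : π κ₁ ∈ Subgroup.closure (cs.simple '' J) :=
        word_mem_closure cs J κ₁ hκ₁J
      have hih := ih (π κ₁) hκ₁mem hlv'
      rcases cs.length_mul_simple (g₀ * π κ₁) j with h | h
      · rw [hvsplit, ← mul_assoc, h, hih, hlv', ← hvsplit, hlv]
        omega
      · exfalso
        obtain ⟨ωh, hωhred, hωheq⟩ := cs.exists_reduced_word' g₀
        have hconcat : π (ωh ++ κ₁) = g₀ * π κ₁ := by
          rw [cs.wordProd_append, ← hωheq]
        have hlt : ℓ ((g₀ * π κ₁) * s j) < ℓ (g₀ * π κ₁) := by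
          have hne := cs.length_mul_simple_ne (g₀ * π κ₁) j
          omega
        obtain ⟨k, hk, hkeq⟩ := strong_exchange cs (cs.isReflection_simple j)
          hlt (ωh ++ κ₁) hconcat
        rcases Nat.lt_or_ge k ωh.length with hcase | hcase
        · rw [List.eraseIdx_append_of_lt_length hcase] at hkeq
          have hgc : g₀ * (π κ₁ * s j * (π κ₁)⁻¹) = π (ωh.eraseIdx k) := by
            rw [cs.wordProd_append] at hkeq
            have : g₀ * π κ₁ * s j * (π κ₁)⁻¹ = π (ωh.eraseIdx k) * π κ₁ * (π κ₁)⁻¹ := by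
              rw [← hkeq]
            simpa [mul_assoc] using this
          have hc_mem : π κ₁ * s j * (π κ₁)⁻¹ ∈ Subgroup.closure (cs.simple '' J) :=
            mul_mem (mul_mem hκ₁mem
              (Subgroup.subset_closure ⟨j, hκJ j (by simp), rfl⟩)) (inv_mem hκ₁mem)
          have h1 := hmin _ hc_mem
          rw [hgc] at h1
          have h2 : ℓ (π (ωh.eraseIdx k)) ≤ (ωh.eraseIdx k).length :=
            cs.length_wordProd_le _
          have h3 := List.length_eraseIdx_add_one hcase
          have h4 : ωh.length = ℓ g₀ := hωhred.symm.trans (by rw [hωheq])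
          omega
        · rw [List.eraseIdx_append_of_length_le hcase] at hkeq
          have hcancel : π κ₁ * s j = π (κ₁.eraseIdx (k - ωh.length)) := by
            rw [cs.wordProd_append, ← hωheq] at hkeq
            have := hkeq
            rw [mul_assoc] at this
            exact mul_left_cancel this
          have hklt : k - ωh.length < κ₁.length := by
            simp only [List.length_append] at hk
            omega
          have h2 : ℓ (π κ₁ * s j) ≤ (κ₁.eraseIdx (k - ωh.length)).length := by
            rw [hcancel]; exact cs.length_wordProd_le _
          have h3 := List.length_eraseIdx_add_one hklt
          have h4 : ℓ (π κ₁ * s j) = n + 1 := by rw [← hvsplit, hlv]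
          have h5 : κ₁.length = n := by rw [← hκ₁red, hlv']
          omega

end Stmt8Aux

/-- if `J` is spherical and `w` is the unique maximal length element of its
double coset `W_J w W_J`, then `{s ∈ J : wsw⁻¹ ∈ W_J} = {s ∈ J : wsw⁻¹ ∈ J}`. -/
theorem stmt8 (cs : CoxeterSystem M W) (J : Set B)
    (hsph : Finite (Subgroup.closure (cs.simple '' J)))
    (w : W)
    (hmax : ∀ u, (∃ x ∈ Subgroup.closure (cs.simple '' J),
        ∃ y ∈ Subgroup.closure (cs.simple '' J), u = x * w * y) →
      cs.length u ≤ cs.length w ∧ (cs.length u = cs.length w → u = w)) :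
    {j | j ∈ J ∧ w * cs.simple j * w⁻¹ ∈ Subgroup.closure (cs.simple '' J)}
      = {j | j ∈ J ∧ ∃ j' ∈ J, w * cs.simple j * w⁻¹ = cs.simple j'} := by
  classical
  ext j
  simp only [Set.mem_setOf_eq]
  constructor
  · rintro ⟨hjJ, hv⟩
    refine ⟨hjJ, ?_⟩
    set P := Subgroup.closure (cs.simple '' J) with hP
    set v := w * cs.simple j * w⁻¹ with hvdef
    -- every coset element w⁻¹ * y has length at most ℓ(w⁻¹)
    have hginv : ∀ y ∈ P, cs.length (w⁻¹ * y) ≤ cs.length w⁻¹ := by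
      intro y hy
      have h1 : (w⁻¹ * y)⁻¹ = y⁻¹ * w := by group
      have h2 := (hmax (y⁻¹ * w) ⟨y⁻¹, inv_mem hy, 1, one_mem _, by group⟩).1
      have h3 := cs.length_inv (w⁻¹ * y)
      rw [h1] at h3
      rw [cs.length_inv w, ← h3]
      exact h2
    obtain ⟨y₀, hy₀, hminy⟩ := Stmt8Aux.exists_coset_min cs J w⁻¹
    set g₁ := w⁻¹ * y₀ with hg₁
    have hmin : ∀ y ∈ P, cs.length g₁ ≤ cs.length (g₁ * y) := by
      intro y hy
      have : g₁ * y = w⁻¹ * (y₀ * y) := by rw [hg₁, mul_assoc]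
      rw [this]
      exact hminy (y₀ * y) (mul_mem hy₀ hy)
    have hRQ : ∀ x ∈ P, cs.length (g₁ * x) = cs.length g₁ + cs.length x :=
      fun x hx => Stmt8Aux.coset_min_mul cs J hmin (cs.length x) x hx rfl
    set v₀ := y₀⁻¹ with hv₀
    have hv₀P : v₀ ∈ P := inv_mem hy₀
    have hgsplit : w⁻¹ = g₁ * v₀ := by rw [hg₁, hv₀, mul_assoc, mul_inv_cancel, mul_one]
    have hlg : cs.length w⁻¹ = cs.length g₁ + cs.length v₀ := by
      rw [hgsplit]; exact hRQ v₀ hv₀P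
    -- v₀ is the longest element of W_J
    have hmaxv₀ : ∀ x ∈ P, cs.length (v₀ * x) ≤ cs.length v₀ := by
      intro x hx
      have h1 := hRQ (v₀ * x) (mul_mem hv₀P hx)
      have h2 : g₁ * (v₀ * x) = w⁻¹ * x := by rw [hg₁, hv₀]; group
      rw [h2] at h1
      have h3 := hginv x hx
      omega
    -- right inversions of elements of W_J are right inversions of v₀
    have hRN : ∀ x ∈ P, ∀ t, cs.IsRightInversion x t → cs.IsRightInversion v₀ t := by
      intro x hx t ht
      have htr := ht.1
      obtain ⟨κ, hκJ, hκred, hκprod⟩ := Stmt8Aux.exists_reduced_word_over' cs J hx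
      have hn1 : Stmt8Aux.nn cs x t = 1 :=
        (Stmt8Aux.isRightInversion_iff_nn_one cs htr x).mp ht
      have hmem := Stmt8Aux.mem_ris_of_nn_one cs hn1 κ hκprod
      have htP : t ∈ P := Stmt8Aux.ris_mem_closure cs J κ hκJ hmem
      refine ⟨htr, ?_⟩
      exact lt_of_le_of_ne (hmaxv₀ t htP) (htr.length_mul_left_ne v₀)
    -- subtraction property
    have hsubtr : ∀ x ∈ P, cs.length x ≤ cs.length v₀ ∧
        cs.length (v₀ * x⁻¹) = cs.length v₀ - cs.length x := by
      intro x hx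
      exact Stmt8Aux.length_sub_of_inv_subset cs (cs.length x) x v₀ rfl (hRN x hx)
    -- length of w * s j
    have hws : cs.length (w * cs.simple j) = cs.length w - 1 ∧ 1 ≤ cs.length w := by
      have hsP : cs.simple j ∈ P := Subgroup.subset_closure ⟨j, hjJ, rfl⟩
      have h1 := (hmax (w * cs.simple j) ⟨1, one_mem _, cs.simple j, hsP, by group⟩).1
      have h2 := cs.length_mul_simple_ne w j
      rcases cs.length_mul_simple w j with h | h <;> omega
    -- compute ℓ (w⁻¹ * v)
    have hwv : w⁻¹ * v = cs.simple j * w⁻¹ := by rw [hvdef]; group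
    have hlwv : cs.length (w⁻¹ * v) = cs.length w - 1 := by
      rw [hwv]
      have h1 := cs.length_inv (cs.simple j * w⁻¹)
      have h2 : (cs.simple j * w⁻¹)⁻¹ = w * cs.simple j := by
        rw [mul_inv_rev, inv_inv, cs.inv_simple]
      rw [h2] at h1
      omega
    -- machinery: ℓ (w⁻¹ * v) = ℓ w - ℓ v
    have hvinvP : v⁻¹ ∈ P := inv_mem hv
    have hsub := hsubtr v⁻¹ hvinvP
    have hlv₀v : cs.length (v₀ * v) = cs.length v₀ - cs.length v := by
      have := hsub.2
      rwa [inv_inv, cs.length_inv v] at this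
    have hlviv : cs.length v ≤ cs.length v₀ := by
      have := hsub.1
      rwa [cs.length_inv v] at this
    have hcomp : cs.length (w⁻¹ * v) = cs.length g₁ + (cs.length v₀ - cs.length v) := by
      have h1 : w⁻¹ * v = g₁ * (v₀ * v) := by rw [hg₁, hv₀]; group
      rw [h1, hRQ (v₀ * v) (mul_mem hv₀P hv), hlv₀v]
    have hlwinv : cs.length w⁻¹ = cs.length w := cs.length_inv w
    have hlv1 : cs.length v = 1 := by omega
    -- v is a simple reflection with index in J
    obtain ⟨κ, hκJ, hκred, hκprod⟩ := Stmt8Aux.exists_reduced_word_over' cs J hv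
    have hκlen : κ.length = 1 := by
      rw [← hκred, hκprod, hlv1]
    obtain ⟨j', rfl⟩ : ∃ j', κ = [j'] := by
      match κ, hκlen with
      | [a], _ => exact ⟨a, rfl⟩
    refine ⟨j', hκJ j' (by simp), ?_⟩
    rw [← hκprod, cs.wordProd_singleton]
  · rintro ⟨hjJ, j', hj'J, heq⟩
    exact ⟨hjJ, heq ▸ Subgroup.subset_closure ⟨j', hj'J, rfl⟩⟩
end

section
/- Let (W,S) be a Coxeter system, J ⊆ S spherical, and w the unique maximal length element of its double coset W_J w W_J. Then W_K := { x ∈ W_J : w x w⁻¹ ∈ W_J } is the standard parabolic subgroup generated by K = { s ∈ J : wsw⁻¹ ∈ J }, and Ad(w) restricts to an isomorphism of Coxeter systems (W_K, K) → (W_{wKw⁻¹}, wKw⁻¹) (in particular it is length-preserving on W_K). -/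
namespace StmtNine

open List

variable {B W : Type*} [Group W] {M : CoxeterMatrix B} (cs : CoxeterSystem M W)

local prefix:100 "σ" => cs.simple
local prefix:100 "π" => cs.wordProd
local prefix:100 "ℓ" => cs.length
local prefix:100 "ris" => cs.rightInvSeq

theorem ris_cons (i : B) (ω : List B) :
    ris (i :: ω) = (π ω)⁻¹ * σ i * π ω :: ris ω := rfl

theorem ris_append (ω ρ : List B) :
    ris (ω ++ ρ) = (ris ω).map (fun x => (π ρ)⁻¹ * x * π ρ) ++ ris ρ := by
  induction ω with
  | nil => simp
  | cons i ω ih =>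
      rw [cons_append, ris_cons, ris_cons, ih, cs.wordProd_append]
      simp [mul_assoc]

variable [DecidableEq W]

theorem count_ris_append (ω ρ : List B) (t : W) :
    (ris (ω ++ ρ)).count t
      = (ris ω).count ((π ρ) * t * (π ρ)⁻¹) + (ris ρ).count t := by
  rw [ris_append, count_append]
  congr 1
  have hinj : Function.Injective (fun x : W => (π ρ)⁻¹ * x * π ρ) := fun a b hab => by
    simpa [mul_assoc] using hab
  have ht : t = (fun x : W => (π ρ)⁻¹ * x * π ρ) ((π ρ) * t * (π ρ)⁻¹) := by
    group
  conv_lhs => rw [ht]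
  exact count_map_of_injective _ _ hinj _

/-- The underlying function of the permutation `η i` of `W × ℤˣ`. -/
def etaFun (i : B) : W × ℤˣ → W × ℤˣ :=
  fun p => (σ i * p.1 * σ i, if p.1 = σ i then -p.2 else p.2)

theorem etaFun_involutive (i : B) : Function.Involutive (etaFun cs i) := by
  rintro ⟨t, ε⟩
  by_cases h : t = σ i
  · simp [etaFun, h]
  · have h2 : σ i * t * σ i ≠ σ i := by
      intro hc
      apply h
      have := congrArg (fun x => σ i * x * σ i) hc
      simpa [mul_assoc, cs.simple_mul_simple_cancel_left,
        cs.simple_mul_simple_cancel_right, cs.simple_mul_simple_self] using this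
    simp only [etaFun, h, if_neg, h2]
    simp [mul_assoc, cs.simple_mul_simple_cancel_left, ← mul_assoc,
      cs.simple_mul_simple_cancel_right, if_neg h]

/-- The permutation `η i` of `W × ℤˣ`. -/
def eta (i : B) : Equiv.Perm (W × ℤˣ) := (etaFun_involutive cs i).toPerm

theorem eta_apply (i : B) (p : W × ℤˣ) :
    eta cs i p = (σ i * p.1 * σ i, if p.1 = σ i then -p.2 else p.2) := rfl

theorem eta_prod (ω : List B) (t : W) (ε : ℤˣ) :
    (ω.map (eta cs)).prod (t, ε)
      = (π ω * t * (π ω)⁻¹, if Even ((ris ω).count t) then ε else -ε) := by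
  induction ω with
  | nil => simp
  | cons i ω ih =>
      rw [map_cons, prod_cons, Equiv.Perm.mul_apply, ih, eta_apply]
      dsimp only
      have hc : (ris (i :: ω)).count t
          = (ris ω).count t + (if (π ω)⁻¹ * σ i * π ω = t then 1 else 0) := by
        rw [ris_cons, count_cons]
        simp only [beq_iff_eq]
      rw [hc, Prod.mk.injEq]
      constructor
      · rw [cs.wordProd_cons, mul_inv_rev, cs.inv_simple]; group
      · by_cases h : (π ω)⁻¹ * σ i * π ω = t
        · have h1 : π ω * t * (π ω)⁻¹ = σ i := by rw [← h]; group
          rw [if_pos h1, if_pos h]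
          rcases Nat.even_or_odd ((ris ω).count t) with he | ho
          · rw [if_pos he, if_neg (by rw [Nat.even_add_one]; exact not_not.mpr he)]
          · have hne : ¬ Even ((ris ω).count t) := Nat.not_even_iff_odd.mpr ho
            rw [if_neg hne, if_pos (Nat.even_add_one.mpr hne)]
            simp
        · have h1 : π ω * t * (π ω)⁻¹ ≠ σ i := by
            intro hc2; apply h; rw [← hc2]; group
          rw [if_neg h1, if_neg h, add_zero]

theorem pi_alternatingWord_two_mul (i j : B) :
    π (CoxeterSystem.alternatingWord i j (2 * M i j)) = 1 := by
  rw [cs.prod_alternatingWord_eq_mul_pow]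
  have : Even (2 * M i j) := even_two_mul _
  rw [if_pos this]
  rw [show 2 * M i j / 2 = M i j by omega]
  rw [one_mul, cs.simple_mul_simple_pow]

theorem sjsi_pow_mul (i j : B) (a : ℕ) :
    (σ j * σ i) ^ a * σ j = σ j * (σ i * σ j) ^ a := by
  induction a with
  | zero => simp
  | succ a ih =>
      rw [pow_succ, mul_assoc ((σ j * σ i) ^ a), mul_assoc (σ j) (σ i) (σ j),
        ← mul_assoc ((σ j * σ i) ^ a), ih, mul_assoc, ← pow_succ]

theorem ris_alternatingWord (i j : B) (n : ℕ) :
    ris (CoxeterSystem.alternatingWord i j n)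
      = (range n).map (fun k => σ j * (σ i * σ j) ^ (n - 1 - k)) := by
  induction n generalizing i j with
  | zero => simp [CoxeterSystem.alternatingWord]
  | succ n ih =>
      rw [CoxeterSystem.alternatingWord_succ, cs.rightInvSeq_concat, ih j i,
        map_map, concat_eq_append, range_succ, map_append, map_singleton]
      congr 1
      · apply map_congr_left
        intro k hk
        rw [mem_range] at hk
        simp only [Function.comp_apply, MulAut.conj_apply, cs.inv_simple]
        rw [(sjsi_pow_mul cs j i (n - 1 - k)).symm]
        rw [show n + 1 - 1 - k = (n - 1 - k) + 1 by omega]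
        rw [pow_succ]
        group
      · simp [show n + 1 - 1 - n = 0 by omega]

theorem count_ris_braid_even (i j : B) (t : W) :
    Even ((ris (CoxeterSystem.alternatingWord i j (2 * M i j))).count t) := by
  rw [ris_alternatingWord]
  rw [show 2 * M i j = M i j + M i j by omega, range_add, map_append]
  have : (range (M i j)).map (fun k => σ j * (σ i * σ j) ^ (M i j + M i j - 1 - k))
      = (range (M i j)).map ((fun k => σ j * (σ i * σ j) ^ (M i j + M i j - 1 - k))
          ∘ (fun x => M i j + x)) := by
    apply map_congr_left
    intro k hk
    rw [mem_range] at hk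
    simp only [Function.comp_apply]
    congr 1
    rw [show M i j + M i j - 1 - k = M i j + (M i j - 1 - (k : ℕ)) by omega,
      show M i j + M i j - 1 - (M i j + k) = M i j - 1 - k by omega]
    rw [pow_add, cs.simple_mul_simple_pow, one_mul]
  rw [map_map, ← this, count_append]
  exact Even.add_self _

theorem prod_map_alternating {G : Type*} [Monoid G] (f : B → G) (i j : B) (m : ℕ) :
    ((CoxeterSystem.alternatingWord i j (2 * m)).map f).prod = (f i * f j) ^ m := by
  induction m with
  | zero => simp [CoxeterSystem.alternatingWord]
  | succ m ih =>
      have h1 : 2 * (m + 1) = (2 * m + 1) + 1 := by omega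
      rw [h1, CoxeterSystem.alternatingWord_succ', if_neg (by simp [Nat.even_add_one]),
        CoxeterSystem.alternatingWord_succ', if_pos (by simp [Nat.even_add_one, parity_simps])]
      rw [map_cons, map_cons, prod_cons, prod_cons, ih, pow_succ', mul_assoc]

theorem eta_liftable : M.IsLiftable (fun i => eta cs (W := W) i) := by
  intro i j
  rw [← prod_map_alternating (fun i => eta cs i) i j (M i j)]
  apply Equiv.ext
  rintro ⟨t, ε⟩
  rw [eta_prod, pi_alternatingWord_two_mul cs]
  rw [if_pos (count_ris_braid_even cs i j t)]
  simp

/-- The sign representation on `W × ℤˣ`. -/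
noncomputable def theta : W →* Equiv.Perm (W × ℤˣ) :=
  cs.lift ⟨fun i => eta cs i, eta_liftable cs⟩

theorem theta_wordProd (ω : List B) : theta cs (π ω) = (ω.map (eta cs)).prod := by
  rw [CoxeterSystem.wordProd, map_list_prod, map_map]
  congr 1
  apply map_congr_left
  intro i _
  simp only [Function.comp_apply, theta]
  exact cs.lift_apply_simple (eta_liftable cs) i

theorem count_parity_invariant {ω ω' : List B} (h : π ω = π ω') (t : W) :
    (Even ((ris ω).count t) ↔ Even ((ris ω').count t)) := by
  have h2 := congrArg (theta cs) h
  rw [theta_wordProd cs, theta_wordProd cs] at h2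
  have h3 := congrArg (fun (p : Equiv.Perm (W × ℤˣ)) => p (t, 1)) h2
  rw [eta_prod cs, eta_prod cs] at h3
  have h4 := congrArg Prod.snd h3
  simp only at h4
  by_cases e1 : Even ((ris ω).count t) <;> by_cases e2 : Even ((ris ω').count t)
  · exact iff_of_true e1 e2
  · rw [if_pos e1, if_neg e2] at h4
    exact absurd h4 (by decide)
  · rw [if_neg e1, if_pos e2] at h4
    exact absurd h4 (by decide)
  · exact iff_of_false e1 e2



theorem pi_conj_word (A : List B) (i : B) :
    π (A ++ i :: A.reverse) = π A * σ i * (π A)⁻¹ := by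
  rw [cs.wordProd_append, cs.wordProd_cons, cs.wordProd_reverse, mul_assoc]

theorem count_aux (l : List W) (t' u : W) (ht' : t' * t' = 1) (hu : u * u = 1) :
    ((((t' * u)⁻¹ * u * (t' * u))) :: (l.map (fun x => u * x * u) ++ [u])).count (u * t' * u)
      = l.count t' + (if t' = u then 2 else 0) := by
  have ht'i : t'⁻¹ = t' := inv_eq_of_mul_eq_one_right ht'
  have hui : u⁻¹ = u := inv_eq_of_mul_eq_one_right hu
  have hinj : Function.Injective (fun x : W => u * x * u) := fun a b hab => by
    have := congrArg (fun x => u⁻¹ * x * u⁻¹) hab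
    simpa [mul_assoc, hui, hu, ← mul_assoc] using this
  have hmap : (l.map (fun x => u * x * u)).count (u * t' * u) = l.count t' := by
    have h0 : u * t' * u = (fun x : W => u * x * u) t' := rfl
    rw [h0, count_map_of_injective _ _ hinj]
  have hhead : (t' * u)⁻¹ * u * (t' * u) = u * (t' * (u * (t' * u))) := by
    rw [mul_inv_rev, ht'i, hui]
    simp [mul_assoc]
  rw [count_cons, count_append, hmap, count_singleton']
  by_cases h : t' = u
  · subst h
    have e0 : (t' * t')⁻¹ * t' * (t' * t') = t' := by rw [ht']; simp
    have e1 : t' * t' * t' = t' := by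
      rw [show t' * t' * t' = (t' * t') * t' from rfl, ht', one_mul]
    rw [e0, e1]
    simp
  · have h1 : ¬ ((t' * u)⁻¹ * u * (t' * u) = u * t' * u) := by
      rw [hhead]
      intro hc
      apply h
      rw [mul_assoc] at hc
      have c1 := mul_left_cancel hc
      have c2 := mul_left_cancel c1
      have c3 : t' * u = 1 := by
        have := congrArg (fun x => u⁻¹ * x) c2
        simpa [← mul_assoc] using this
      have c4 := eq_inv_of_mul_eq_one_left c3
      rwa [hui] at c4
    have h2 : ¬ (u = u * t' * u) := by
      intro hc
      apply h
      rw [mul_assoc] at hc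
      have c1 : t' * u = 1 := by
        have := congrArg (fun x => u⁻¹ * x) hc.symm
        simpa [← mul_assoc] using this
      have c4 := eq_inv_of_mul_eq_one_left c1
      rwa [hui] at c4
    have h1' : ¬ (u⁻¹ * t'⁻¹ * u * (t' * u) = u * t' * u) := by
      rw [← mul_inv_rev]; exact h1
    simp [h1', h2, h]

theorem count_conj_word_odd (A : List B) (i : B) :
    Odd ((ris (A ++ i :: A.reverse)).count (π A * σ i * (π A)⁻¹)) := by
  induction A with
  | nil => simp [ris_cons]
  | cons b A ih =>
      have hword : ((b :: A) ++ i :: (b :: A).reverse)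
          = b :: ((A ++ i :: A.reverse) ++ [b]) := by simp
      have htt : π (b :: A) * σ i * (π (b :: A))⁻¹
          = σ b * (π A * σ i * (π A)⁻¹) * σ b := by
        rw [cs.wordProd_cons, mul_inv_rev, cs.inv_simple]; group
      have hπτ : π ((A ++ i :: A.reverse) ++ [b]) = (π A * σ i * (π A)⁻¹) * σ b := by
        rw [cs.wordProd_append, pi_conj_word cs, cs.wordProd_singleton]
      rw [hword, htt, ris_cons, ris_append, hπτ]
      simp only [cs.wordProd_singleton, cs.inv_simple, cs.rightInvSeq_singleton]
      rw [count_aux _ _ _ ((cs.isReflection_simple i).conj (π A)).mul_self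
        (cs.simple_mul_simple_self b)]
      obtain ⟨c, hc⟩ := ih
      by_cases h : π A * σ i * (π A)⁻¹ = σ b
      · rw [if_pos h, hc]; exact ⟨c + 1, by omega⟩
      · rw [if_neg h, hc, add_zero]; exact ⟨c, rfl⟩

theorem count_odd_of_right_inversion {t : W} (ht : cs.IsReflection t) (ω : List B)
    (hlt : ℓ (π ω * t) < ℓ (π ω)) : ¬ Even ((ris ω).count t) := by
  obtain ⟨a, i, hti⟩ := ht
  obtain ⟨A, hA⟩ := cs.wordProd_surjective a
  obtain ⟨τ, hτred, hτ⟩ := cs.exists_reduced_word' (π ω * t)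
  have hρ : π (A ++ i :: A.reverse) = t := by rw [pi_conj_word cs, hA, ← hti]
  have htt : t * t = 1 := by
    rw [hti]; exact ((cs.isReflection_simple i).conj a).mul_self
  have hπω : π (τ ++ (A ++ i :: A.reverse)) = π ω := by
    rw [cs.wordProd_append, hρ, ← hτ]
    calc (π ω * t) * t = π ω * (t * t) := by rw [mul_assoc]
    _ = π ω := by rw [htt, mul_one]
  have hcount : (ris (τ ++ (A ++ i :: A.reverse))).count t
      = (ris τ).count (π (A ++ i :: A.reverse) * t * (π (A ++ i :: A.reverse))⁻¹)
        + (ris (A ++ i :: A.reverse)).count t := count_ris_append cs _ _ _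
  have hconj : π (A ++ i :: A.reverse) * t * (π (A ++ i :: A.reverse))⁻¹ = t := by
    rw [hρ, htt, one_mul, inv_eq_of_mul_eq_one_right htt]
  have hzero : (ris τ).count t = 0 := by
    rw [count_eq_zero]
    intro hmem
    have hinv := cs.isRightInversion_of_mem_rightInvSeq hτred hmem
    rw [← hτ] at hinv
    have h2 := hinv.2
    rw [mul_assoc, htt, mul_one] at h2
    omega
  have hodd : Odd ((ris (τ ++ (A ++ i :: A.reverse))).count t) := by
    rw [hcount, hconj, hzero, zero_add]
    have := count_conj_word_odd cs A i
    rwa [hA, ← hti] at this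
  intro heven
  have := (count_parity_invariant cs hπω t).mpr heven
  rw [← Nat.not_odd_iff_even] at this
  exact this hodd

theorem exchange_right {t : W} (ht : cs.IsReflection t) (ω : List B)
    (hlt : ℓ (π ω * t) < ℓ (π ω)) : t ∈ ris ω := by
  have h := count_odd_of_right_inversion cs ht ω hlt
  rcases Nat.eq_zero_or_pos ((ris ω).count t) with h0 | hpos
  · exact absurd (by rw [h0]; exact Even.zero) h
  · exact count_pos_iff.mp hpos

theorem exchange_right' {t : W} (ht : cs.IsReflection t) (ω : List B)
    (hlt : ℓ (π ω * t) < ℓ (π ω)) :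
    ∃ k, k < ω.length ∧ π ω * t = π (ω.eraseIdx k) := by
  have hmem := exchange_right cs ht ω hlt
  obtain ⟨k, hk, hkt⟩ := List.mem_iff_getElem.mp hmem
  refine ⟨k, by simpa using hk, ?_⟩
  have := cs.wordProd_mul_getD_rightInvSeq ω k
  rwa [List.getD_eq_getElem _ _ hk, hkt] at this

theorem exchange_left' {t : W} (ht : cs.IsReflection t) (ω : List B)
    (hlt : ℓ (t * π ω) < ℓ (π ω)) :
    ∃ φ : List B, φ.Sublist ω ∧ φ.length + 1 = ω.length ∧ t * π ω = π φ := by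
  have hti : t⁻¹ = t := ht.inv
  have h1 : ℓ (π ω.reverse * t) < ℓ (π ω.reverse) := by
    rw [cs.wordProd_reverse]
    have e1 : (π ω)⁻¹ * t = (t * π ω)⁻¹ := by rw [mul_inv_rev, hti]
    rw [e1, cs.length_inv, cs.length_inv]
    exact hlt
  obtain ⟨k, hk, he⟩ := exchange_right' cs ht ω.reverse h1
  refine ⟨(ω.reverse.eraseIdx k).reverse, ?_, ?_, ?_⟩
  · have hs : (ω.reverse.eraseIdx k) <+ ω.reverse := List.eraseIdx_sublist _ _
    have := hs.reverse
    rwa [List.reverse_reverse] at this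
  · rw [List.length_reverse, List.length_eraseIdx, if_pos hk]
    rw [List.length_reverse] at hk ⊢
    omega
  · have e2 : t * π ω = (π ω.reverse * t)⁻¹ := by
      rw [cs.wordProd_reverse, mul_inv_rev, inv_inv, hti]
    rw [e2, he, ← cs.wordProd_reverse]




theorem mem_closure_iff_word (J : Set B) (x : W) :
    x ∈ Subgroup.closure (cs.simple '' J) ↔ ∃ ω : List B, (∀ i ∈ ω, i ∈ J) ∧ x = π ω := by
  constructor
  · intro hx
    induction hx using Subgroup.closure_induction with
    | mem y hy =>
        obtain ⟨j, hj, rfl⟩ := hy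
        exact ⟨[j], by simpa using hj, (cs.wordProd_singleton j).symm⟩
    | one => exact ⟨[], by simp, by simp⟩
    | mul a b _ _ iha ihb =>
        obtain ⟨ω1, h1, rfl⟩ := iha
        obtain ⟨ω2, h2, rfl⟩ := ihb
        refine ⟨ω1 ++ ω2, ?_, (cs.wordProd_append ω1 ω2).symm⟩
        intro i hi
        rcases mem_append.mp hi with h | h
        exacts [h1 i h, h2 i h]
    | inv a _ iha =>
        obtain ⟨ω1, h1, rfl⟩ := iha
        exact ⟨ω1.reverse, fun i hi => h1 i (mem_reverse.mp hi),
          (cs.wordProd_reverse ω1).symm⟩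
  · rintro ⟨ω, hω, rfl⟩
    induction ω with
    | nil => rw [cs.wordProd_nil]; exact one_mem _
    | cons i ω ih =>
        rw [cs.wordProd_cons]
        exact mul_mem (Subgroup.subset_closure ⟨i, hω i mem_cons_self, rfl⟩)
          (ih fun j hj => hω j (mem_cons_of_mem i hj))

theorem exists_reduced_word_subset (ω : List B) :
    ∃ φ : List B, (∀ i ∈ φ, i ∈ ω) ∧ cs.IsReduced φ ∧ π φ = π ω := by
  generalize hn : ω.length = n
  induction n using Nat.strong_induction_on generalizing ω with
  | _ n ih =>
    by_cases hred : cs.IsReduced ω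
    · exact ⟨ω, fun _ h => h, hred, rfl⟩
    · have hstep : ∃ k, ∃ h : k < ω.length,
          ℓ (σ (ω[k]) * π (ω.drop (k + 1))) < ℓ (π (ω.drop (k + 1))) := by
        by_contra hcon
        push_neg at hcon
        have hall : ∀ m, m ≤ ω.length → ℓ (π (ω.drop (ω.length - m))) = m := by
          intro m
          induction m with
          | zero => intro _; simp
          | succ m ihm =>
              intro hm
              have hk : ω.length - (m + 1) < ω.length := by omega
              have hdrop : ω.drop (ω.length - (m + 1))
                  = ω[ω.length - (m + 1)] :: ω.drop (ω.length - (m + 1) + 1) :=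
                List.drop_eq_getElem_cons hk
              have harith : ω.length - (m + 1) + 1 = ω.length - m := by omega
              rw [hdrop, cs.wordProd_cons, harith]
              have h1 := ihm (by omega)
              have h2 := hcon (ω.length - (m + 1)) hk
              rw [harith] at h2
              have h3 := cs.length_simple_mul (π (ω.drop (ω.length - m)))
                (ω[ω.length - (m + 1)])
              rw [h1] at h2 h3
              rcases h3 with h3 | h3
              · exact h3
              · omega
        have := hall ω.length (le_refl _)
        simp at this
        exact hred this
      obtain ⟨k, hk, hdesc⟩ := hstep
      obtain ⟨φ', hsub, hlen, heq⟩ :=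
        exchange_left' cs (cs.isReflection_simple (ω[k])) (ω.drop (k + 1)) hdesc
      have hπ : π (ω.take k ++ φ') = π ω := by
        rw [cs.wordProd_append, ← heq]
        conv_rhs => rw [← List.take_append_drop k ω]
        rw [cs.wordProd_append]
        congr 1
        rw [List.drop_eq_getElem_cons hk, cs.wordProd_cons]
      have hlen2 : (ω.take k ++ φ').length < n := by
        rw [List.length_append, List.length_take]
        rw [List.length_drop] at hlen
        omega
      obtain ⟨φ, hmem, hred2, hπ2⟩ := ih _ hlen2 (ω.take k ++ φ') rfl
      refine ⟨φ, ?_, hred2, by rw [hπ2, hπ]⟩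
      intro i hi
      rcases mem_append.mp (hmem i hi) with h | h
      · exact List.mem_of_mem_take h
      · exact List.mem_of_mem_drop (hsub.subset h)

theorem mem_closure_iff_reduced_word (J : Set B) (x : W) :
    x ∈ Subgroup.closure (cs.simple '' J)
      ↔ ∃ ω : List B, (∀ i ∈ ω, i ∈ J) ∧ cs.IsReduced ω ∧ x = π ω := by
  rw [mem_closure_iff_word cs J x]
  constructor
  · rintro ⟨ω, hω, rfl⟩
    obtain ⟨φ, hsub, hred, hπ⟩ := exists_reduced_word_subset cs ω
    exact ⟨φ, fun i hi => hω i (hsub i hi), hred, hπ.symm⟩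
  · rintro ⟨ω, hω, _, rfl⟩
    exact ⟨ω, hω, rfl⟩

theorem peel_right (J : Set B) {x : W} (hx : x ∈ Subgroup.closure (cs.simple '' J))
    (hne : x ≠ 1) :
    ∃ (y : W) (j : B), y ∈ Subgroup.closure (cs.simple '' J) ∧ j ∈ J ∧
      x = y * σ j ∧ ℓ x = ℓ y + 1 := by
  obtain ⟨ω, hω, hred, rfl⟩ := (mem_closure_iff_reduced_word cs J x).mp hx
  rcases List.eq_nil_or_concat ω with rfl | ⟨φ, j, rfl⟩
  · simp at hne
  · refine ⟨π φ, j, ?_, ?_, ?_, ?_⟩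
    · rw [mem_closure_iff_word cs J]
      exact ⟨φ, fun i hi => hω i (by simp [hi]), rfl⟩
    · exact hω j (by simp)
    · rw [cs.wordProd_concat]
    · have hredφ : cs.IsReduced φ := by
        have := hred.take (φ.length)
        rwa [List.concat_eq_append, List.take_left] at this
      rw [hred, hredφ, List.concat_eq_append, List.length_append]
      simp

theorem simple_of_mem_length_one (J : Set B) {x : W}
    (hx : x ∈ Subgroup.closure (cs.simple '' J)) (h1 : ℓ x = 1) :
    ∃ j ∈ J, x = σ j := by
  obtain ⟨ω, hω, hred, rfl⟩ := (mem_closure_iff_reduced_word cs J x).mp hx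
  have hlen : ω.length = 1 := by rw [← hred, h1]
  obtain ⟨a, rfl⟩ := List.length_eq_one_iff.mp hlen
  exact ⟨a, hω a (by simp), cs.wordProd_singleton a⟩

/-- The set of right inversions. -/
def invSet (u : W) : Set W := {t | cs.IsReflection t ∧ ℓ (u * t) < ℓ u}

theorem invSet_eq_ris {ω : List B} (hω : cs.IsReduced ω) :
    invSet cs (π ω) = {t | t ∈ ris ω} := by
  ext t
  constructor
  · rintro ⟨h1, h2⟩
    exact exchange_right cs h1 ω h2
  · intro h
    exact ⟨cs.isReflection_of_mem_rightInvSeq ω h,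
      (cs.isRightInversion_of_mem_rightInvSeq hω h).2⟩

theorem ncard_invSet (u : W) : (invSet cs u).ncard = ℓ u := by
  obtain ⟨ω, hred, rfl⟩ := cs.exists_reduced_word' u
  rw [invSet_eq_ris cs hred]
  have hnd := hred.nodup_rightInvSeq
  have h2 : {t | t ∈ ris ω} = ↑(ris ω).toFinset := by ext; simp
  rw [h2, Set.ncard_coe_finset, List.toFinset_card_of_nodup hnd,
    cs.length_rightInvSeq]
  exact hred.symm

theorem ris_mem_closure (J : Set B) {ω : List B} (hω : ∀ i ∈ ω, i ∈ J) {t : W}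
    (ht : t ∈ ris ω) : t ∈ Subgroup.closure (cs.simple '' J) := by
  induction ω with
  | nil => simp [cs.rightInvSeq_nil] at ht
  | cons i ω ih =>
      rw [ris_cons] at ht
      rcases List.mem_cons.mp ht with rfl | hmem
      · have hπ : π ω ∈ Subgroup.closure (cs.simple '' J) :=
          (mem_closure_iff_word cs J _).mpr ⟨ω, fun i hi => hω i (mem_cons_of_mem _ hi), rfl⟩
        have hs : σ i ∈ Subgroup.closure (cs.simple '' J) :=
          Subgroup.subset_closure ⟨i, hω i mem_cons_self, rfl⟩
        exact mul_mem (mul_mem (inv_mem hπ) hs) hπ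
      · exact ih (fun j hj => hω j (mem_cons_of_mem _ hj)) hmem

theorem invSet_subset (J : Set B) {u : W} (hu : u ∈ Subgroup.closure (cs.simple '' J)) :
    invSet cs u ⊆ {t : W | t ∈ Subgroup.closure (cs.simple '' J) ∧ cs.IsReflection t} := by
  obtain ⟨ω, hω, hred, rfl⟩ := (mem_closure_iff_reduced_word cs J u).mp hu
  rw [invSet_eq_ris cs hred]
  intro t ht
  exact ⟨ris_mem_closure cs J hω ht, cs.isReflection_of_mem_rightInvSeq ω ht⟩

theorem invSet_iff_count_odd {t : W} (ht : cs.IsReflection t) (ω : List B) :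
    t ∈ invSet cs (π ω) ↔ ¬ Even ((ris ω).count t) := by
  obtain ⟨τ, hred, hτ⟩ := cs.exists_reduced_word' (π ω)
  have hpar := count_parity_invariant cs hτ.symm t
  have hnd := hred.nodup_rightInvSeq
  constructor
  · intro htm
    have hmem : t ∈ ris τ := by
      apply exchange_right cs ht τ
      rw [← hτ]
      exact htm.2
    have h1 : (ris τ).count t = 1 := le_antisymm
      (List.nodup_iff_count_le_one.mp hnd t) (List.count_pos_iff.mpr hmem)
    rw [← hpar, h1]
    simp
  · intro hodd
    rw [← hpar] at hodd
    have hmem : t ∈ ris τ := by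
      rcases Nat.eq_zero_or_pos ((ris τ).count t) with h0 | hpos
      · exact absurd (h0 ▸ Even.zero) hodd
      · exact List.count_pos_iff.mp hpos
    have := (cs.isRightInversion_of_mem_rightInvSeq hred hmem).2
    rw [← hτ] at this
    exact ⟨ht, this⟩

theorem invSet_mul_iff {t : W} (ht : cs.IsReflection t) (q z : W) :
    t ∈ invSet cs (q * z) ↔ ¬ ((z * t * z⁻¹ ∈ invSet cs q) ↔ (t ∈ invSet cs z)) := by
  obtain ⟨ωq, _, hq⟩ := cs.exists_reduced_word' q
  obtain ⟨ωz, _, hz⟩ := cs.exists_reduced_word' z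
  have hqz : q * z = π (ωq ++ ωz) := by rw [cs.wordProd_append, ← hq, ← hz]
  have h1 : t ∈ invSet cs (q * z) ↔ ¬ Even ((ris (ωq ++ ωz)).count t) := by
    rw [hqz]; exact invSet_iff_count_odd cs ht _
  have h2 : z * t * z⁻¹ ∈ invSet cs q ↔
      ¬ Even ((ris ωq).count (z * t * z⁻¹)) := by
    rw [hq]; exact invSet_iff_count_odd cs (ht.conj z) _
  have h3 : t ∈ invSet cs z ↔ ¬ Even ((ris ωz).count t) := by
    rw [hz]; exact invSet_iff_count_odd cs ht _
  rw [h1, h2, h3, count_ris_append, ← hz, Nat.even_add]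
  tauto


theorem length_mul_max_right (J : Set B)
    (hfinR : {t : W | t ∈ Subgroup.closure (cs.simple '' J) ∧ cs.IsReflection t}.Finite)
    {z : W} (hz : z ∈ Subgroup.closure (cs.simple '' J))
    (hmaxz : ∀ p ∈ Subgroup.closure (cs.simple '' J), ℓ p ≤ ℓ z) :
    ∀ q ∈ Subgroup.closure (cs.simple '' J), ℓ (q * z) + ℓ q = ℓ z := by
  have hRz : invSet cs z = {t : W | t ∈ Subgroup.closure (cs.simple '' J) ∧ cs.IsReflection t} := by
    apply Set.Subset.antisymm (invSet_subset cs J hz)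
    rintro t ⟨htP, htr⟩
    exact ⟨htr, lt_of_le_of_ne (hmaxz _ (mul_mem hz htP)) (htr.length_mul_left_ne z)⟩
  intro q hq
  have hiff : ∀ t ∈ {t : W | t ∈ Subgroup.closure (cs.simple '' J) ∧ cs.IsReflection t},
      (t ∈ invSet cs (q * z) ↔ ¬ (z * t * z⁻¹ ∈ invSet cs q)) := by
    intro t htRJ
    have h0 := invSet_mul_iff cs htRJ.2 q z
    have h1 : t ∈ invSet cs z := by rw [hRz]; exact htRJ
    rw [h0]
    tauto
  have key : invSet cs (q * z)
      = {t : W | t ∈ Subgroup.closure (cs.simple '' J) ∧ cs.IsReflection t}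
        \ ((fun r => z⁻¹ * r * z) '' invSet cs q) := by
    ext t
    constructor
    · intro htm
      have htRJ := invSet_subset cs J (mul_mem hq hz) htm
      refine ⟨htRJ, ?_⟩
      rintro ⟨r, hr, hrt⟩
      have hzt : z * t * z⁻¹ = r := by rw [← hrt]; group
      exact ((hiff t htRJ).mp htm) (hzt ▸ hr)
    · rintro ⟨htRJ, hnot⟩
      apply (hiff t htRJ).mpr
      intro hc
      exact hnot ⟨z * t * z⁻¹, hc, by group⟩
  have hinj : Function.Injective (fun r : W => z⁻¹ * r * z) := fun a b hab => by
    simpa [mul_assoc] using hab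
  have hsub2 : ((fun r => z⁻¹ * r * z) '' invSet cs q)
      ⊆ {t : W | t ∈ Subgroup.closure (cs.simple '' J) ∧ cs.IsReflection t} := by
    rintro _ ⟨r, hr, rfl⟩
    have hrRJ := invSet_subset cs J hq hr
    refine ⟨mul_mem (mul_mem (inv_mem hz) hrRJ.1) hz, ?_⟩
    have := hrRJ.2.conj z⁻¹
    rwa [inv_inv] at this
  have hfin2 := hfinR.subset hsub2
  have hcard := Set.ncard_diff hsub2 hfin2
  have h5 : (invSet cs (q * z)).ncard
      = {t : W | t ∈ Subgroup.closure (cs.simple '' J) ∧ cs.IsReflection t}.ncard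
        - (invSet cs q).ncard := by
    rw [key, hcard, Set.ncard_image_of_injective _ hinj]
  rw [ncard_invSet, ncard_invSet] at h5
  have h6 : {t : W | t ∈ Subgroup.closure (cs.simple '' J) ∧ cs.IsReflection t}.ncard = ℓ z := by
    rw [← hRz, ncard_invSet]
  have h7 : ℓ q ≤ ℓ z := hmaxz q hq
  omega

theorem length_max_mul_left (J : Set B)
    (hfinR : {t : W | t ∈ Subgroup.closure (cs.simple '' J) ∧ cs.IsReflection t}.Finite)
    {z : W} (hz : z ∈ Subgroup.closure (cs.simple '' J))
    (hmaxz : ∀ p ∈ Subgroup.closure (cs.simple '' J), ℓ p ≤ ℓ z) :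
    ∀ q ∈ Subgroup.closure (cs.simple '' J), ℓ (z * q) + ℓ q = ℓ z := by
  intro q hq
  have hz' : z⁻¹ ∈ Subgroup.closure (cs.simple '' J) := inv_mem hz
  have hmax' : ∀ p ∈ Subgroup.closure (cs.simple '' J), ℓ p ≤ ℓ z⁻¹ := by
    intro p hp; rw [cs.length_inv]; exact hmaxz p hp
  have h := length_mul_max_right cs J hfinR hz' hmax' q⁻¹ (inv_mem hq)
  rw [← mul_inv_rev, cs.length_inv, cs.length_inv, cs.length_inv] at h
  exact h

theorem min_coset_additive (J : Set B) {u₀ : W}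
    (hmin : ∀ p ∈ Subgroup.closure (cs.simple '' J), ℓ u₀ ≤ ℓ (u₀ * p)) :
    ∀ p ∈ Subgroup.closure (cs.simple '' J), ℓ (u₀ * p) = ℓ u₀ + ℓ p := by
  intro p hp
  generalize hlp : ℓ p = n
  revert p
  induction n using Nat.strong_induction_on with
  | _ n ih =>
    intro p hp hlp
    subst hlp
    by_cases hne : p = 1
    · simp [hne]
    obtain ⟨y, j, hy, hjJ, rfl, hlen⟩ := peel_right cs J hp hne
    have ihy : ℓ (u₀ * y) = ℓ u₀ + ℓ y := ih (ℓ y) (by omega) y hy rfl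
    rcases cs.length_mul_simple (u₀ * y) j with hcase | hcase
    · rw [← mul_assoc, hcase, ihy]
      omega
    · exfalso
      obtain ⟨ω₀, hω₀red, hω₀⟩ := cs.exists_reduced_word' u₀
      obtain ⟨τ, hτJ, hτred, hτ⟩ := (mem_closure_iff_reduced_word cs J y).mp hy
      have hπ : π (ω₀ ++ τ) = u₀ * y := by rw [cs.wordProd_append, ← hω₀, ← hτ]
      have hlt : ℓ (π (ω₀ ++ τ) * σ j) < ℓ (π (ω₀ ++ τ)) := by
        rw [hπ]
        omega
      obtain ⟨k, hk, he⟩ := exchange_right' cs (cs.isReflection_simple j) _ hlt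
      rw [hπ] at he
      by_cases hkω : k < ω₀.length
      · rw [List.eraseIdx_append_of_lt_length hkω, cs.wordProd_append, ← hτ] at he
        have he2 : u₀ * (y * σ j * y⁻¹) = π (ω₀.eraseIdx k) := by
          have := congrArg (fun x => x * y⁻¹) he
          simp only [mul_assoc] at this ⊢
          simpa [mul_assoc] using this
        have hmem : y * σ j * y⁻¹ ∈ Subgroup.closure (cs.simple '' J) :=
          mul_mem (mul_mem hy (Subgroup.subset_closure ⟨j, hjJ, rfl⟩)) (inv_mem hy)
        have h4 := hmin _ hmem
        rw [he2] at h4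
        have h5 := cs.length_wordProd_le (ω₀.eraseIdx k)
        rw [List.length_eraseIdx, if_pos hkω] at h5
        have h6 : ℓ u₀ = ω₀.length := by rw [hω₀]; exact hω₀red
        omega
      · push_neg at hkω
        rw [List.eraseIdx_append_of_length_le hkω, cs.wordProd_append, ← hω₀] at he
        have he2 : y * σ j = π (τ.eraseIdx (k - ω₀.length)) := mul_left_cancel (by
          rw [← mul_assoc]; exact he)
        have h4 := cs.length_wordProd_le (τ.eraseIdx (k - ω₀.length))
        rw [← he2] at h4
        have hklt : k - ω₀.length < τ.length := by
          rw [List.length_append] at hk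
          omega
        rw [List.length_eraseIdx, if_pos hklt] at h4
        have h6 : ℓ y = τ.length := by rw [hτ]; exact hτred
        omega


theorem exists_decomp (J : Set B)
    (hfin : (Subgroup.closure (cs.simple '' J) : Set W).Finite) (w : W)
    (hmax : ∀ u, (∃ x ∈ Subgroup.closure (cs.simple '' J),
        ∃ y ∈ Subgroup.closure (cs.simple '' J), u = x * w * y) →
      ℓ u ≤ ℓ w ∧ (ℓ u = ℓ w → u = w)) :
    ∃ u₀ z₀ : W, z₀ ∈ Subgroup.closure (cs.simple '' J) ∧
      (∀ p ∈ Subgroup.closure (cs.simple '' J), ℓ p ≤ ℓ z₀) ∧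
      u₀ * z₀ = w ∧
      (∀ p ∈ Subgroup.closure (cs.simple '' J), ℓ (u₀ * p) = ℓ u₀ + ℓ p) ∧
      ℓ w = ℓ u₀ + ℓ z₀ := by
  have hne : (Subgroup.closure (cs.simple '' J) : Set W).Nonempty := ⟨1, one_mem _⟩
  obtain ⟨z₀, hz₀P, hz₀max⟩ := Set.Finite.exists_maximalFor cs.length _ hfin hne
  have hmaxz : ∀ p ∈ Subgroup.closure (cs.simple '' J), ℓ p ≤ ℓ z₀ := by
    intro p hp
    by_contra hcon
    push_neg at hcon
    have := hz₀max (j := p) hp (le_of_lt hcon)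
    omega
  have hSne : (cs.length '' {v : W | ∃ p ∈ Subgroup.closure (cs.simple '' J),
      v = w * p}).Nonempty := ⟨ℓ w, ⟨w, ⟨1, one_mem _, by rw [mul_one]⟩, rfl⟩⟩
  obtain ⟨u₀, hu₀S, hu₀len⟩ := Nat.sInf_mem hSne
  obtain ⟨p₀, hp₀P, hu₀w⟩ := hu₀S
  have hminS : ∀ v, (∃ p ∈ Subgroup.closure (cs.simple '' J), v = w * p) → ℓ u₀ ≤ ℓ v := by
    intro v hv
    rw [hu₀len]
    exact Nat.sInf_le ⟨v, hv, rfl⟩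
  have hmin : ∀ p ∈ Subgroup.closure (cs.simple '' J), ℓ u₀ ≤ ℓ (u₀ * p) := fun p hp =>
    hminS _ ⟨p₀ * p, mul_mem hp₀P hp, by rw [hu₀w]; group⟩
  have hCLR := min_coset_additive cs J hmin
  have hDle := hmax (u₀ * z₀) ⟨1, one_mem _, p₀ * z₀, mul_mem hp₀P hz₀P, by rw [hu₀w]; group⟩
  have hw2 : w = u₀ * p₀⁻¹ := by rw [hu₀w]; group
  have hwlen : ℓ w = ℓ u₀ + ℓ p₀⁻¹ := by
    rw [hw2]; exact hCLR p₀⁻¹ (inv_mem hp₀P)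
  have hle2 : ℓ w ≤ ℓ u₀ + ℓ z₀ := by
    have := hmaxz p₀⁻¹ (inv_mem hp₀P)
    omega
  have h3 := hCLR z₀ hz₀P
  have heq : ℓ (u₀ * z₀) = ℓ w := by omega
  have hwz := hDle.2 heq
  exact ⟨u₀, z₀, hz₀P, hmaxz, hwz, hCLR, by omega⟩

theorem A_right (J : Set B)
    (hfin : (Subgroup.closure (cs.simple '' J) : Set W).Finite) (w : W)
    (hmax : ∀ u, (∃ x ∈ Subgroup.closure (cs.simple '' J),
        ∃ y ∈ Subgroup.closure (cs.simple '' J), u = x * w * y) →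
      ℓ u ≤ ℓ w ∧ (ℓ u = ℓ w → u = w)) :
    ∀ q ∈ Subgroup.closure (cs.simple '' J), ℓ (w * q) + ℓ q = ℓ w := by
  obtain ⟨u₀, z₀, hz₀P, hmaxz, hwz, hCLR, hwlen⟩ := exists_decomp cs J hfin w hmax
  have hfinR : {t : W | t ∈ Subgroup.closure (cs.simple '' J) ∧ cs.IsReflection t}.Finite :=
    hfin.subset (fun t ht => ht.1)
  intro q hq
  have h1 : w * q = u₀ * (z₀ * q) := by rw [← hwz]; group
  have h2 := hCLR (z₀ * q) (mul_mem hz₀P hq)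
  have h3 := length_max_mul_left cs J hfinR hz₀P hmaxz q hq
  rw [h1, h2]
  omega

theorem hmax_inv (J : Set B) (w : W)
    (hmax : ∀ u, (∃ x ∈ Subgroup.closure (cs.simple '' J),
        ∃ y ∈ Subgroup.closure (cs.simple '' J), u = x * w * y) →
      ℓ u ≤ ℓ w ∧ (ℓ u = ℓ w → u = w)) :
    ∀ u, (∃ x ∈ Subgroup.closure (cs.simple '' J),
        ∃ y ∈ Subgroup.closure (cs.simple '' J), u = x * w⁻¹ * y) →
      ℓ u ≤ ℓ w⁻¹ ∧ (ℓ u = ℓ w⁻¹ → u = w⁻¹) := by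
  rintro u ⟨x, hx, y, hy, hu⟩
  have h := hmax u⁻¹ ⟨y⁻¹, inv_mem hy, x⁻¹, inv_mem hx, by rw [hu]; group⟩
  rw [cs.length_inv u] at h
  constructor
  · rw [cs.length_inv]
    exact h.1
  · intro he
    rw [cs.length_inv] at he
    have := h.2 he
    rw [← this, inv_inv]

theorem A_left (J : Set B)
    (hfin : (Subgroup.closure (cs.simple '' J) : Set W).Finite) (w : W)
    (hmax : ∀ u, (∃ x ∈ Subgroup.closure (cs.simple '' J),
        ∃ y ∈ Subgroup.closure (cs.simple '' J), u = x * w * y) →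
      ℓ u ≤ ℓ w ∧ (ℓ u = ℓ w → u = w)) :
    ∀ q ∈ Subgroup.closure (cs.simple '' J), ℓ (q * w) + ℓ q = ℓ w := by
  intro q hq
  have h := A_right cs J hfin w⁻¹ (hmax_inv cs J w hmax) q⁻¹ (inv_mem hq)
  rw [← mul_inv_rev, cs.length_inv, cs.length_inv] at h
  rw [← cs.length_inv w]
  omega


theorem length_conj_eq (J : Set B)
    (hfin : (Subgroup.closure (cs.simple '' J) : Set W).Finite) (w : W)
    (hmax : ∀ u, (∃ x ∈ Subgroup.closure (cs.simple '' J),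
        ∃ y ∈ Subgroup.closure (cs.simple '' J), u = x * w * y) →
      ℓ u ≤ ℓ w ∧ (ℓ u = ℓ w → u = w)) :
    ∀ x ∈ Subgroup.closure (cs.simple '' J),
      w * x * w⁻¹ ∈ Subgroup.closure (cs.simple '' J) → ℓ (w * x * w⁻¹) = ℓ x := by
  intro x hx hy
  have h1 := A_left cs J hfin w hmax (w * x * w⁻¹) hy
  have h2 := A_right cs J hfin w hmax x hx
  have h3 : (w * x * w⁻¹) * w = w * x := by group
  rw [h3] at h1
  omega

theorem hard (J : Set B)
    (hfin : (Subgroup.closure (cs.simple '' J) : Set W).Finite) (w : W)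
    (hmax : ∀ u, (∃ x ∈ Subgroup.closure (cs.simple '' J),
        ∃ y ∈ Subgroup.closure (cs.simple '' J), u = x * w * y) →
      ℓ u ≤ ℓ w ∧ (ℓ u = ℓ w → u = w)) :
    ∀ x ∈ Subgroup.closure (cs.simple '' J),
      w * x * w⁻¹ ∈ Subgroup.closure (cs.simple '' J) →
      x ∈ Subgroup.closure (cs.simple ''
        {j | j ∈ J ∧ ∃ j' ∈ J, w * cs.simple j * w⁻¹ = cs.simple j'}) := by
  have hAl := A_left cs J hfin w hmax
  have hB := length_conj_eq cs J hfin w hmax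
  obtain ⟨u₀, z₀, hz₀P, hmaxz, hwz, hCLR, hwlen⟩ := exists_decomp cs J hfin w hmax
  have hfinR : {t : W | t ∈ Subgroup.closure (cs.simple '' J) ∧ cs.IsReflection t}.Finite :=
    hfin.subset fun t ht => ht.1
  have hA1r := length_mul_max_right cs J hfinR hz₀P hmaxz
  have hA1l := length_max_mul_left cs J hfinR hz₀P hmaxz
  have hz₀invP : z₀⁻¹ ∈ Subgroup.closure (cs.simple '' J) := inv_mem hz₀P
  have hmaxz' : ∀ p ∈ Subgroup.closure (cs.simple '' J), ℓ p ≤ ℓ z₀⁻¹ := fun p hp => by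
    rw [cs.length_inv]; exact hmaxz p hp
  have hA1rinv := length_mul_max_right cs J hfinR hz₀invP hmaxz'
  have hconjlen : ∀ p ∈ Subgroup.closure (cs.simple '' J), ℓ (z₀ * p * z₀⁻¹) = ℓ p := by
    intro p hp
    have h1 := hA1rinv (z₀ * p) (mul_mem hz₀P hp)
    have h2 := hA1l p hp
    rw [cs.length_inv] at h1
    omega
  have hu₀eq : u₀ = w * z₀⁻¹ := by rw [← hwz]; group
  intro x hx hy
  generalize hlx : ℓ x = n
  revert x
  induction n using Nat.strong_induction_on with
  | _ n ih =>
    intro x hx hy hlx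
    subst hlx
    by_cases hne : x = 1
    · subst hne; exact one_mem _
    obtain ⟨x', j, hx', hjJ, rfl, hlen⟩ := peel_right cs J hx hne
    have hsjP : σ j ∈ Subgroup.closure (cs.simple '' J) :=
      Subgroup.subset_closure ⟨j, hjJ, rfl⟩
    have hstP : z₀ * σ j * z₀⁻¹ ∈ Subgroup.closure (cs.simple '' J) :=
      mul_mem (mul_mem hz₀P hsjP) (inv_mem hz₀P)
    have hstlen : ℓ (z₀ * σ j * z₀⁻¹) = 1 := by
      rw [hconjlen (σ j) hsjP, cs.length_simple]
    obtain ⟨j₁, hj₁J, hj₁⟩ := simple_of_mem_length_one cs J hstP hstlen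
    have hyP : w * (x' * σ j) * w⁻¹ ∈ Subgroup.closure (cs.simple '' J) := hy
    have hylen : ℓ (w * (x' * σ j) * w⁻¹) = ℓ (x' * σ j) := hB _ hx hy
    have hxtP : z₀ * (x' * σ j) * z₀⁻¹ ∈ Subgroup.closure (cs.simple '' J) :=
      mul_mem (mul_mem hz₀P hx) (inv_mem hz₀P)
    have hxtlen : ℓ (z₀ * (x' * σ j) * z₀⁻¹) = ℓ (x' * σ j) := hconjlen _ hx
    have hveq : u₀ * (z₀ * (x' * σ j) * z₀⁻¹) = (w * (x' * σ j) * w⁻¹) * u₀ := by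
      rw [hu₀eq]; group
    have hv1 : ℓ (u₀ * (z₀ * (x' * σ j) * z₀⁻¹)) = ℓ u₀ + ℓ (x' * σ j) := by
      rw [hCLR _ hxtP, hxtlen]
    have hxt'P : z₀ * x' * z₀⁻¹ ∈ Subgroup.closure (cs.simple '' J) :=
      mul_mem (mul_mem hz₀P hx') (inv_mem hz₀P)
    have hxt' : (z₀ * (x' * σ j) * z₀⁻¹) * (z₀ * σ j * z₀⁻¹) = z₀ * x' * z₀⁻¹ := by
      calc (z₀ * (x' * σ j) * z₀⁻¹) * (z₀ * σ j * z₀⁻¹)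
          = z₀ * ((x' * σ j) * σ j) * z₀⁻¹ := by group
      _ = z₀ * x' * z₀⁻¹ := by rw [cs.simple_mul_simple_cancel_right]
    have hxt'2 : (z₀ * (x' * σ j) * z₀⁻¹) * σ j₁ = z₀ * x' * z₀⁻¹ := by
      rw [← hj₁]; exact hxt'
    have hvs : ℓ ((u₀ * (z₀ * (x' * σ j) * z₀⁻¹)) * σ j₁) = ℓ u₀ + ℓ x' := by
      rw [mul_assoc, hxt'2, hCLR _ hxt'P, hconjlen _ hx']
    obtain ⟨ωy, hωyJ, hωyred, hωy⟩ :=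
      (mem_closure_iff_reduced_word cs J _).mp hyP
    obtain ⟨ω₀, hω₀red, hω₀⟩ := cs.exists_reduced_word' u₀
    have hπv : π (ωy ++ ω₀) = u₀ * (z₀ * (x' * σ j) * z₀⁻¹) := by
      rw [cs.wordProd_append, ← hωy, ← hω₀, hveq]
    have hlt : ℓ (π (ωy ++ ω₀) * σ j₁) < ℓ (π (ωy ++ ω₀)) := by
      rw [hπv, hvs, hv1]
      omega
    obtain ⟨k, hk, he⟩ := exchange_right' cs (cs.isReflection_simple j₁) _ hlt
    rw [hπv] at he
    by_cases hky : k < ωy.length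
    · rw [List.eraseIdx_append_of_lt_length hky, cs.wordProd_append, ← hω₀] at he
      have hy'P : π (ωy.eraseIdx k) ∈ Subgroup.closure (cs.simple '' J) :=
        (mem_closure_iff_word cs J _).mpr
          ⟨ωy.eraseIdx k, fun i hi => hωyJ i ((List.eraseIdx_sublist ωy k).subset hi), rfl⟩
      have ht_eq : w * σ j * w⁻¹ = u₀ * σ j₁ * u₀⁻¹ := by
        rw [← hj₁, hu₀eq]; group
      have hyt : (w * (x' * σ j) * w⁻¹) * (w * σ j * w⁻¹) = π (ωy.eraseIdx k) := by
        rw [ht_eq]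
        have h0 : (w * (x' * σ j) * w⁻¹) * (u₀ * σ j₁ * u₀⁻¹)
            = (((w * (x' * σ j) * w⁻¹) * u₀) * σ j₁) * u₀⁻¹ := by group
        rw [h0, ← hveq, he]
        group
      have htP : w * σ j * w⁻¹ ∈ Subgroup.closure (cs.simple '' J) := by
        have h0 : w * σ j * w⁻¹
            = (w * (x' * σ j) * w⁻¹)⁻¹ * π (ωy.eraseIdx k) := by
          rw [← hyt]; group
        rw [h0]
        exact mul_mem (inv_mem hyP) hy'P
      have htw : (w * σ j * w⁻¹) * w = u₀ * (σ j₁ * z₀) := by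
        rw [ht_eq, ← hwz]; group
      have h7 : ℓ ((w * σ j * w⁻¹) * w) = ℓ u₀ + ℓ (σ j₁ * z₀) := by
        rw [htw]
        exact hCLR _ (mul_mem (Subgroup.subset_closure ⟨j₁, hj₁J, rfl⟩) hz₀P)
      have h8 := hA1r (σ j₁) (Subgroup.subset_closure ⟨j₁, hj₁J, rfl⟩)
      rw [cs.length_simple] at h8
      have h9 := hAl (w * σ j * w⁻¹) htP
      have htlen : ℓ (w * σ j * w⁻¹) = 1 := by omega
      obtain ⟨j', hj'J, hj'⟩ := simple_of_mem_length_one cs J htP htlen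
      have hx'conj : w * x' * w⁻¹ ∈ Subgroup.closure (cs.simple '' J) := by
        have h0 : (w * (x' * σ j) * w⁻¹) * (w * σ j * w⁻¹)
            = w * ((x' * σ j) * σ j) * w⁻¹ := by group
        rw [cs.simple_mul_simple_cancel_right] at h0
        rw [← h0]
        exact mul_mem hyP htP
      have hx'K := ih (ℓ x') (by omega) x' hx' hx'conj rfl
      exact mul_mem hx'K (Subgroup.subset_closure ⟨j, ⟨hjJ, j', hj'J, hj'⟩, rfl⟩)
    · push_neg at hky
      rw [List.eraseIdx_append_of_length_le hky, cs.wordProd_append, ← hωy] at he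
      exfalso
      have he2 : u₀ * σ j₁ = π (ω₀.eraseIdx (k - ωy.length)) := by
        have h0 : (u₀ * (z₀ * (x' * σ j) * z₀⁻¹)) * σ j₁
            = (w * (x' * σ j) * w⁻¹) * (u₀ * σ j₁) := by
          rw [hveq]; group
        rw [h0] at he
        exact mul_left_cancel he
      have h4 := hCLR (σ j₁) (Subgroup.subset_closure ⟨j₁, hj₁J, rfl⟩)
      rw [cs.length_simple] at h4
      have h5 := cs.length_wordProd_le (ω₀.eraseIdx (k - ωy.length))
      rw [← he2] at h5
      have hklt : k - ωy.length < ω₀.length := by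
        rw [List.length_append] at hk
        omega
      rw [List.length_eraseIdx, if_pos hklt] at h5
      have h6 : ℓ u₀ = ω₀.length := by rw [hω₀]; exact hω₀red
      omega

end StmtNine


variable {B W : Type*} [Group W] {M : CoxeterMatrix B}

/-- `W_K = {x ∈ W_J : wxw⁻¹ ∈ W_J}` is the standard parabolic subgroup
generated by `K = {s ∈ J : wsw⁻¹ ∈ J}`, and `Ad(w)` is length-preserving on `W_K`
(restricting to an isomorphism of Coxeter systems `(W_K, K) → (W_{wKw⁻¹}, wKw⁻¹)`). -/
theorem stmt9 (cs : CoxeterSystem M W) (J : Set B)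
    (hsph : Finite (Subgroup.closure (cs.simple '' J)))
    (w : W)
    (hmax : ∀ u, (∃ x ∈ Subgroup.closure (cs.simple '' J),
        ∃ y ∈ Subgroup.closure (cs.simple '' J), u = x * w * y) →
      cs.length u ≤ cs.length w ∧ (cs.length u = cs.length w → u = w)) :
    {x : W | x ∈ Subgroup.closure (cs.simple '' J) ∧
        w * x * w⁻¹ ∈ Subgroup.closure (cs.simple '' J)}
      = ↑(Subgroup.closure (cs.simple ''
          {j | j ∈ J ∧ ∃ j' ∈ J, w * cs.simple j * w⁻¹ = cs.simple j'})) ∧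
    (∀ x ∈ Subgroup.closure (cs.simple ''
        {j | j ∈ J ∧ ∃ j' ∈ J, w * cs.simple j * w⁻¹ = cs.simple j'}),
      cs.length (w * x * w⁻¹) = cs.length x) := by
  classical
  have hfin : (Subgroup.closure (cs.simple '' J) : Set W).Finite :=
    Set.finite_coe_iff.mp hsph
  have heasy : ∀ x ∈ Subgroup.closure (cs.simple ''
      {j | j ∈ J ∧ ∃ j' ∈ J, w * cs.simple j * w⁻¹ = cs.simple j'}),
      x ∈ Subgroup.closure (cs.simple '' J) ∧
        w * x * w⁻¹ ∈ Subgroup.closure (cs.simple '' J) := by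
    intro x hxQ
    have hsub : Subgroup.closure (cs.simple ''
        {j | j ∈ J ∧ ∃ j' ∈ J, w * cs.simple j * w⁻¹ = cs.simple j'}) ≤
        Subgroup.closure (cs.simple '' J) ⊓
          Subgroup.comap (MulAut.conj w).toMonoidHom
            (Subgroup.closure (cs.simple '' J)) := by
      rw [Subgroup.closure_le]
      rintro _ ⟨k, ⟨hkJ, j', hj'J, hconj⟩, rfl⟩
      rw [SetLike.mem_coe, Subgroup.mem_inf]
      constructor
      · exact Subgroup.subset_closure ⟨k, hkJ, rfl⟩
      · rw [Subgroup.mem_comap]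
        have h0 : (MulAut.conj w).toMonoidHom (cs.simple k)
            = w * cs.simple k * w⁻¹ := rfl
        rw [h0, hconj]
        exact Subgroup.subset_closure ⟨j', hj'J, rfl⟩
    have h := hsub hxQ
    rw [Subgroup.mem_inf, Subgroup.mem_comap] at h
    obtain ⟨h1, h2⟩ := h
    refine ⟨h1, ?_⟩
    have h0 : (MulAut.conj w).toMonoidHom x = w * x * w⁻¹ := rfl
    rwa [h0] at h2
  constructor
  · ext x
    simp only [Set.mem_setOf_eq, SetLike.mem_coe]
    constructor
    · rintro ⟨hx, hy⟩
      exact StmtNine.hard cs J hfin w hmax x hx hy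
    · intro hxQ
      exact heasy x hxQ
  · intro x hxQ
    obtain ⟨h1, h2⟩ := heasy x hxQ
    exact StmtNine.length_conj_eq cs J hfin w hmax x h1 h2
end

section
/- Let (W,S) be a Coxeter system, J ⊆ S spherical, and let w be the unique maximal length element in a double coset D = W_J w W_J. Let u = w₁ w w₂ with w₁, w₂ ∈ W_J (so ℓ(u) = ℓ(w) − ℓ(w₁) − ℓ(w₂)), and let v = w w₂ w₁. Then ℓ(u) ≤ ℓ(v), with equality if and only if ℓ(w₂ w₁) = ℓ(w₂) + ℓ(w₁). Consequently, if 𝒪_J denotes the W_J-conjugacy class of u (and of v), then u has maximal length in 𝒪_J if and only if v has maximal length in 𝒪_J and ℓ(w₂w₁) = ℓ(w₂) + ℓ(w₁). -/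
variable {B W : Type*} [Group W] {M : CoxeterMatrix B}

namespace Stmt10Aux

open List CoxeterSystem

variable {B W : Type*} [Group W] {M : CoxeterMatrix B} (cs : CoxeterSystem M W)

lemma conj_eq_iff (a x t : W) : a * t * a⁻¹ = x ↔ t = a⁻¹ * x * a := by
  constructor
  · intro h; rw [← h]; group
  · intro h; rw [h]; group

open scoped Classical in
/-- The sign representation on `W × ℤˣ` used to prove the strong exchange property. -/
noncomputable def eta (i : B) : Function.End (W × ℤˣ) :=
  fun p => (cs.simple i * p.1 * cs.simple i, if p.1 = cs.simple i then -p.2 else p.2)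

open scoped Classical in
lemma eta_apply (i : B) (t : W) (ε : ℤˣ) :
    eta cs i (t, ε) = (cs.simple i * t * cs.simple i, if t = cs.simple i then -ε else ε) := rfl

open scoped Classical in
lemma eta_liftable : M.IsLiftable (eta cs) := by
  intro i j
  have hd' : (cs.simple i * cs.simple j)⁻¹ = cs.simple j * cs.simple i := by
    rw [mul_inv_rev, cs.inv_simple, cs.inv_simple]
  set si := cs.simple i
  set sj := cs.simple j
  set c := si * sj with hc
  set d := c⁻¹ with hd
  have hsjc : ∀ k : ℕ, sj * c ^ k = d ^ k * sj := by
    intro k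
    induction k with
    | zero => simp
    | succ k ih =>
      have h1 : sj * c = d * sj := by
        rw [hd', hc]; group
      calc sj * c ^ (k + 1) = (sj * c) * c ^ k := by rw [pow_succ']; group
        _ = d * (sj * c ^ k) := by rw [h1]; group
        _ = d ^ (k + 1) * sj := by rw [ih, pow_succ']; group
  have hv1 : ∀ k : ℕ, (c ^ k)⁻¹ * sj * c ^ k = d ^ (2 * k) * sj := by
    intro k
    have : (c ^ k)⁻¹ * sj * c ^ k = (c ^ k)⁻¹ * (sj * c ^ k) := by group
    rw [this, hsjc, ← inv_pow, ← hd, ← mul_assoc, ← pow_add, two_mul]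
  have hsisj : sj * si * sj = d * sj := by rw [hd']
  have hv2 : ∀ k : ℕ, (c ^ k)⁻¹ * (sj * si * sj) * c ^ k = d ^ (2 * k + 1) * sj := by
    intro k
    have h1 : (c ^ k)⁻¹ * (sj * si * sj) * c ^ k = (c ^ k)⁻¹ * d * (sj * c ^ k) := by
      rw [hsisj]; group
    rw [h1, hsjc, ← inv_pow, ← hd]
    have : d ^ k * d * (d ^ k * sj) = (d ^ k * d * d ^ k) * sj := by group
    rw [this, ← pow_succ, ← pow_add]
    congr 2
    omega
  have key : ∀ (k : ℕ) (t : W) (ε : ℤˣ),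
      ((eta cs i * eta cs j) ^ k) (t, ε) =
        (c ^ k * t * (c ^ k)⁻¹,
          ((range (2 * k)).map
            (fun m => if t = d ^ m * sj then (-1 : ℤˣ) else 1)).prod * ε) := by
    intro k
    induction k with
    | zero => intro t ε; simp; rfl
    | succ k ih =>
      intro t ε
      have hpow : ((eta cs i * eta cs j) ^ (k+1)) (t, ε)
          = (eta cs i * eta cs j) (((eta cs i * eta cs j) ^ k) (t, ε)) := by
        rw [pow_succ']; rfl
      rw [hpow, ih]
      have hmul : ∀ q : W × ℤˣ, (eta cs i * eta cs j) q = eta cs i (eta cs j q) := fun _ => rfl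
      rw [hmul, eta_apply, eta_apply]
      have hrange : range (2 * (k+1)) = range (2*k) ++ [2*k, 2*k+1] := by
        have h2 : 2 * (k+1) = (2*k + 1) + 1 := by ring
        rw [h2, range_succ, range_succ]
        simp
      rw [hrange]
      simp only [map_append, prod_append, map_cons, map_nil, prod_cons, prod_nil]
      have hcond1 : (c ^ k * t * (c ^ k)⁻¹ = sj) ↔ (t = d ^ (2*k) * sj) := by
        rw [conj_eq_iff, hv1]
      have hcond2 : (sj * (c ^ k * t * (c ^ k)⁻¹) * sj = si) ↔ (t = d ^ (2*k+1) * sj) := by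
        constructor
        · intro h
          have h2 : c ^ k * t * (c ^ k)⁻¹ = sj * si * sj := by
            calc c ^ k * t * (c ^ k)⁻¹
                = (sj * sj) * (c ^ k * t * (c ^ k)⁻¹) * (sj * sj) := by
                  rw [cs.simple_mul_simple_self j]; group
              _ = sj * (sj * (c ^ k * t * (c ^ k)⁻¹) * sj) * sj := by group
              _ = sj * si * sj := by rw [h]
          rw [(conj_eq_iff _ _ _).mp h2, hv2]
        · intro h
          have h2 : c ^ k * t * (c ^ k)⁻¹ = sj * si * sj := by
            rw [conj_eq_iff, hv2, ← h]
          rw [h2]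
          calc sj * (sj * si * sj) * sj = (sj * sj) * si * (sj * sj) := by group
            _ = si := by rw [cs.simple_mul_simple_self j]; group
      have hcinv : c⁻¹ = sj * si := by
        rw [hc, mul_inv_rev, cs.inv_simple, cs.inv_simple]
      have hfirst : si * (sj * (c ^ k * t * (c ^ k)⁻¹) * sj) * si
          = c ^ (k+1) * t * (c ^ (k+1))⁻¹ := by
        calc si * (sj * (c ^ k * t * (c ^ k)⁻¹) * sj) * si
            = c * (c ^ k * t * (c ^ k)⁻¹) * c⁻¹ := by rw [hcinv, hc]; group
          _ = c ^ (k+1) * t * (c ^ (k+1))⁻¹ := by group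
      rw [hfirst]
      rw [show cs.simple j = sj from rfl, show cs.simple i = si from rfl]
      simp only [hcond1, hcond2]
      by_cases h1 : t = d ^ (2*k) * sj <;> by_cases h2 : t = d ^ (2*k+1) * sj <;>
        simp only [h1, h2, if_true, if_false, eq_self_iff_true, if_pos, if_neg, not_false_iff]
      · have h5 : (d ^ (2*k) * sj : W) = d ^ (2*k+1) * sj := h1.symm.trans h2
        simp [if_pos h5, h5, mul_comm, mul_left_comm, mul_assoc]
      · have h5 : ¬ (d ^ (2*k) * sj : W) = d ^ (2*k+1) * sj := fun h => h2 (h1.trans h)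
        simp [if_neg h5, mul_comm, mul_left_comm, mul_assoc]
      · have h5 : ¬ (d ^ (2*k+1) * sj : W) = d ^ (2*k) * sj := fun h => h1 (h2.trans h)
        have h6 : ¬ (d ^ (k*2+1) : W) = d ^ (k*2) := fun h => h5 (by
          rw [mul_comm k 2] at h
          rw [h])
        simp [if_neg h6, mul_comm, mul_left_comm, mul_assoc]
      · simp [mul_comm, mul_left_comm, mul_assoc]
  -- now conclude
  funext p
  obtain ⟨t, ε⟩ := p
  rw [key (M i j) t ε]
  have hcp : c ^ (M i j) = 1 := by
    rw [hc]; exact cs.simple_mul_simple_pow i j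
  have hdp : ∀ m : ℕ, d ^ (M i j + m) = d ^ m := by
    intro m
    rw [pow_add, hd, inv_pow, hcp, inv_one, one_mul]
  have hrange2 : range (2 * M i j) = range (M i j) ++ (range (M i j)).map (M i j + ·) := by
    rw [two_mul, range_add]
  have hsq : ((range (2 * M i j)).map
      (fun m => if t = d ^ m * sj then (-1 : ℤˣ) else 1)).prod = 1 := by
    rw [hrange2, map_append, prod_append, map_map]
    have : ((range (M i j)).map ((fun m => if t = d ^ m * sj then (-1 : ℤˣ) else 1) ∘ (M i j + ·)))
        = (range (M i j)).map (fun m => if t = d ^ m * sj then (-1 : ℤˣ) else 1) := by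
      apply map_congr_left
      intro m _
      simp only [Function.comp_apply, hdp]
    rw [this, ← sq]
    generalize ((range (M i j)).map (fun m => if t = d ^ m * sj then (-1 : ℤˣ) else 1)).prod = z
    rcases Int.units_eq_one_or z with h | h <;> rw [h] <;> rfl
  rw [hsq, hcp]
  simp
  rfl


/-- The sign homomorphism `W →* Function.End (W × ℤˣ)`. -/
noncomputable def rho : W →* Function.End (W × ℤˣ) :=
  cs.lift ⟨eta cs, eta_liftable cs⟩

lemma rho_simple (i : B) : rho cs (cs.simple i) = eta cs i :=
  cs.lift_apply_simple (eta_liftable cs) i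

open scoped Classical in
lemma rho_wordProd (ω : List B) (t : W) (ε : ℤˣ) :
    rho cs (cs.wordProd ω) (t, ε) =
      (cs.wordProd ω * t * (cs.wordProd ω)⁻¹,
        ε * (-1) ^ ((cs.rightInvSeq ω).count t)) := by
  induction ω generalizing t ε with
  | nil => simp [rightInvSeq]; rfl
  | cons i ω ih =>
    rw [cs.wordProd_cons, map_mul, rho_simple]
    have happ : (eta cs i * rho cs (cs.wordProd ω)) (t, ε)
        = eta cs i (rho cs (cs.wordProd ω) (t, ε)) := rfl
    rw [happ, ih, eta_apply]
    have hris : cs.rightInvSeq (i :: ω)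
        = ((cs.wordProd ω)⁻¹ * cs.simple i * cs.wordProd ω) :: cs.rightInvSeq ω := rfl
    rw [hris, List.count_cons]
    have hcond : (cs.wordProd ω * t * (cs.wordProd ω)⁻¹ = cs.simple i)
        ↔ t = (cs.wordProd ω)⁻¹ * cs.simple i * cs.wordProd ω := conj_eq_iff _ _ _
    by_cases h : t = (cs.wordProd ω)⁻¹ * cs.simple i * cs.wordProd ω
    · rw [if_pos (hcond.mpr h), if_pos (by simp [h]), Prod.mk.injEq]
      refine ⟨by rw [mul_inv_rev, cs.inv_simple]; group, ?_⟩
      simp [pow_succ]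
    · rw [if_neg (fun hh => h (hcond.mp hh)), Prod.mk.injEq]
      refine ⟨by rw [mul_inv_rev, cs.inv_simple]; group, ?_⟩
      have hne : ¬ (((cs.wordProd ω)⁻¹ * cs.simple i * cs.wordProd ω == t) = true) := by
        simp only [beq_iff_eq]
        exact fun hh => h hh.symm
      rw [if_neg hne, add_zero]

open scoped Classical in
/-- The sign of `t` at `x`. -/
noncomputable def sgn (x t : W) : ℤˣ := (rho cs x (t, 1)).2

open scoped Classical in
lemma rho_apply (x t : W) (ε : ℤˣ) :
    rho cs x (t, ε) = (x * t * x⁻¹, ε * sgn cs x t) := by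
  obtain ⟨ω, rfl⟩ := cs.wordProd_surjective x
  rw [rho_wordProd, sgn, rho_wordProd]
  simp

lemma sgn_one (t : W) : sgn cs 1 t = 1 := by
  rw [sgn, map_one]
  rfl

lemma sgn_mul (x y t : W) : sgn cs (x * y) t = sgn cs y t * sgn cs x (y * t * y⁻¹) := by
  have h : rho cs (x * y) (t, 1) = rho cs x (rho cs y (t, 1)) := by
    rw [map_mul]; rfl
  rw [sgn, h, rho_apply, rho_apply, one_mul]

open scoped Classical in
lemma sgn_wordProd (ω : List B) (t : W) :
    sgn cs (cs.wordProd ω) t = (-1) ^ ((cs.rightInvSeq ω).count t) := by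
  classical
  rw [sgn, rho_wordProd]
  simp

lemma sgn_simple_self (i : B) : sgn cs (cs.simple i) (cs.simple i) = -1 := by
  rw [sgn, rho_simple, eta_apply]
  simp

/-- The sign of a reflection at itself is `-1`. -/
lemma sgn_reflection_self {t : W} (ht : cs.IsReflection t) : sgn cs t t = -1 := by
  obtain ⟨g, i, rfl⟩ := ht
  set t := g * cs.simple i * g⁻¹ with hts
  have h1 : sgn cs (g * (cs.simple i * g⁻¹)) t
      = sgn cs (cs.simple i * g⁻¹) t * sgn cs g ((cs.simple i * g⁻¹) * t * (cs.simple i * g⁻¹)⁻¹) := by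
    rw [sgn_mul]
  have h2 : sgn cs (cs.simple i * g⁻¹) t
      = sgn cs g⁻¹ t * sgn cs (cs.simple i) (g⁻¹ * t * g) := by
    rw [sgn_mul]
    congr 2
    group
  have h3 : g⁻¹ * t * g = cs.simple i := by rw [hts]; group
  have h4 : (cs.simple i * g⁻¹) * t * (cs.simple i * g⁻¹)⁻¹ = cs.simple i := by
    have hr : (cs.simple i * g⁻¹) * t * (cs.simple i * g⁻¹)⁻¹
        = cs.simple i * (g⁻¹ * t * g) * (cs.simple i)⁻¹ := by group
    rw [hr, h3, cs.inv_simple, cs.simple_mul_simple_self, one_mul]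
  have h5 : sgn cs g⁻¹ t * sgn cs g (cs.simple i) = 1 := by
    have h6 : sgn cs (g * g⁻¹) t = sgn cs g⁻¹ t * sgn cs g (g⁻¹ * t * g⁻¹⁻¹) := sgn_mul cs g g⁻¹ t
    rw [inv_inv, mul_inv_cancel, h3] at h6
    rw [← h6, sgn_one]
  have : sgn cs (g * (cs.simple i * g⁻¹)) t = -1 := by
    rw [h1, h2, h3, h4, sgn_simple_self]
    calc sgn cs g⁻¹ t * -1 * sgn cs g (cs.simple i)
        = -(sgn cs g⁻¹ t * sgn cs g (cs.simple i)) := by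
          rw [mul_neg_one, neg_mul]
      _ = -1 := by rw [h5]
  calc sgn cs t t = sgn cs (g * (cs.simple i * g⁻¹)) t := by rw [hts]; congr 1; group
    _ = -1 := this

/-- If the sign is `-1`, then `t` occurs in the right inversion sequence of every word. -/
lemma mem_rightInvSeq_of_sgn {x t : W} (h : sgn cs x t = -1) {ω : List B}
    (hω : cs.wordProd ω = x) : t ∈ cs.rightInvSeq ω := by
  classical
  subst hω
  rw [sgn_wordProd] at h
  by_contra hmem
  rw [List.count_eq_zero_of_not_mem hmem] at h
  simp at h

/-- `t` is a right inversion of `x` if and only if `sgn x t = -1`. -/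
lemma isRightInversion_iff_sgn {x t : W} (ht : cs.IsReflection t) :
    cs.IsRightInversion x t ↔ sgn cs x t = -1 := by
  constructor
  · intro ⟨_, hlt⟩
    rcases Int.units_eq_one_or (sgn cs x t) with h | h
    · exfalso
      have hx : x = (x * t) * t := by rw [mul_assoc, ht.mul_self, mul_one]
      have h2 : sgn cs ((x * t) * t) t = sgn cs t t * sgn cs (x * t) (t * t * t⁻¹) := sgn_mul ..
      have h3 : t * t * t⁻¹ = t := by rw [ht.mul_self, one_mul, ht.inv]
      rw [← hx, h3, sgn_reflection_self cs ht, h] at h2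
      have h4 : sgn cs (x * t) t = -1 := by
        rcases Int.units_eq_one_or (sgn cs (x * t) t) with h5 | h5
        · rw [h5] at h2; simp at h2
        · exact h5
      obtain ⟨ω, hred, hω⟩ := cs.exists_reduced_word' (x * t)
      have hmem := mem_rightInvSeq_of_sgn cs h4 hω.symm
      have hinv := cs.isRightInversion_of_mem_rightInvSeq hred hmem
      rw [← hω] at hinv
      have : cs.length (x * t * t) < cs.length (x * t) := hinv.2
      rw [mul_assoc, ht.mul_self, mul_one] at this
      omega
    · exact h
  · intro h
    refine ⟨ht, ?_⟩
    obtain ⟨ω, hred, hω⟩ := cs.exists_reduced_word' x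
    have hmem := mem_rightInvSeq_of_sgn cs h hω.symm
    have hinv := cs.isRightInversion_of_mem_rightInvSeq hred hmem
    rw [← hω] at hinv
    exact hinv.2

/-- Exchange lemma: if `ℓ(x sᵢ) < ℓ(x)`, then for every word `ω` for `x` one can
delete a letter to get a word for `x * sᵢ`. -/
lemma exchange {x : W} {i : B} (h : cs.length (x * cs.simple i) < cs.length x)
    {ω : List B} (hω : cs.wordProd ω = x) :
    ∃ j, j < ω.length ∧ x * cs.simple i = cs.wordProd (ω.eraseIdx j) := by
  have hsgn : sgn cs x (cs.simple i) = -1 :=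
    (isRightInversion_iff_sgn cs (cs.isReflection_simple i)).mp ⟨cs.isReflection_simple i, h⟩
  have hmem := mem_rightInvSeq_of_sgn cs hsgn hω
  obtain ⟨j, hj, hget⟩ := List.mem_iff_getElem.mp hmem
  rw [cs.length_rightInvSeq] at hj
  refine ⟨j, hj, ?_⟩
  rw [← hω, ← cs.wordProd_mul_getD_rightInvSeq ω j]
  congr 1
  rw [List.getD_eq_getElem _ _ (by rwa [cs.length_rightInvSeq])]
  exact hget.symm


lemma wordProd_mem_closure {J : Set B} {ω : List B} (hω : ∀ i ∈ ω, i ∈ J) :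
    cs.wordProd ω ∈ Subgroup.closure (cs.simple '' J) := by
  induction ω with
  | nil => rw [cs.wordProd_nil]; exact one_mem _
  | cons i ω ih =>
    rw [cs.wordProd_cons]
    exact mul_mem (Subgroup.subset_closure ⟨i, hω i (by simp), rfl⟩)
      (ih (fun j hj => hω j (by simp [hj])))

lemma exists_Jword {J : Set B} {a : W} (ha : a ∈ Subgroup.closure (cs.simple '' J)) :
    ∃ ω : List B, (∀ i ∈ ω, i ∈ J) ∧ cs.wordProd ω = a := by
  refine Subgroup.closure_induction ?_ ?_ ?_ ?_ ha
  · rintro x ⟨i, hi, rfl⟩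
    exact ⟨[i], by simpa using hi, by simp⟩
  · exact ⟨[], by simp, by simp⟩
  · rintro x y _ _ ⟨ω₁, h1, rfl⟩ ⟨ω₂, h2, rfl⟩
    refine ⟨ω₁ ++ ω₂, ?_, by rw [cs.wordProd_append]⟩
    intro i hi
    rcases List.mem_append.mp hi with h | h
    exacts [h1 i h, h2 i h]
  · rintro x _ ⟨ω, h1, rfl⟩
    exact ⟨ω.reverse, fun i hi => h1 i (List.mem_reverse.mp hi), by simp⟩

lemma exists_reduced_Jword {J : Set B} :
    ∀ n (ω : List B), ω.length = n → (∀ i ∈ ω, i ∈ J) →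
      ∃ ω' : List B, (∀ i ∈ ω', i ∈ J) ∧ cs.IsReduced ω' ∧ cs.wordProd ω' = cs.wordProd ω := by
  intro n
  induction n using Nat.strong_induction_on with
  | _ n ih =>
    intro ω hlen hJ
    by_cases hred : cs.IsReduced ω
    · exact ⟨ω, hJ, hred, rfl⟩
    · classical
      have hP : ∃ m, ¬ cs.IsReduced (ω.take m) := ⟨ω.length, by rwa [List.take_length]⟩
      set k' := Nat.find hP with hk'def
      have hk'spec : ¬ cs.IsReduced (ω.take k') := Nat.find_spec hP
      have hk'pos : k' ≠ 0 := by
        intro h0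
        rw [h0] at hk'spec
        exact hk'spec (by simp [CoxeterSystem.IsReduced])
      set k := k' - 1 with hkdef
      have hkk : k < k' := by omega
      have hkred : cs.IsReduced (ω.take k) := by
        by_contra hcon
        exact absurd hcon (Nat.find_min hP hkk)
      have hksucc : k + 1 = k' := by omega
      have hk'le : k' ≤ ω.length := Nat.find_le (by rwa [List.take_length])
      have hklt : k < ω.length := by omega
      have htake : ω.take (k+1) = ω.take k ++ [ω[k]] := by
        rw [List.take_succ, List.getElem?_eq_getElem hklt]
        rfl
      have hknot : ¬ cs.IsReduced (ω.take (k+1)) := by rwa [hksucc]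
      have hxlen : (ω.take k).length = k := by
        rw [List.length_take]
        omega
      have hxred : cs.length (cs.wordProd (ω.take k)) = k := by
        rw [hkred, hxlen]
      have hprod1 : cs.wordProd (ω.take (k+1)) = cs.wordProd (ω.take k) * cs.simple ω[k] := by
        rw [htake, cs.wordProd_append, cs.wordProd_singleton]
      have hlt : cs.length (cs.wordProd (ω.take k) * cs.simple ω[k])
          < cs.length (cs.wordProd (ω.take k)) := by
        rcases cs.length_mul_simple (cs.wordProd (ω.take k)) ω[k] with h | h
        · exfalso
          apply hknot
          rw [CoxeterSystem.IsReduced, hprod1, h, hxred, List.length_take]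
          omega
        · omega
      obtain ⟨j, hj, hex⟩ := exchange cs hlt rfl
      set ω'' := (ω.take k).eraseIdx j ++ ω.drop (k+1) with hω''
      have hprod2 : cs.wordProd ω'' = cs.wordProd ω := by
        rw [hω'', cs.wordProd_append, ← hex, ← hprod1, ← cs.wordProd_append,
          List.take_append_drop]
      have hJ'' : ∀ i ∈ ω'', i ∈ J := by
        intro i hi
        rcases List.mem_append.mp hi with h | h
        · exact hJ i (List.take_subset _ _ (List.mem_of_mem_eraseIdx h))
        · exact hJ i (List.drop_subset _ _ h)
      have hlen'' : ω''.length < n := by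
        rw [hω'', List.length_append]
        have h1 : ((ω.take k).eraseIdx j).length + 1 = (ω.take k).length :=
          List.length_eraseIdx_add_one hj
        have h2 : (ω.drop (k+1)).length = ω.length - (k+1) := by
          rw [List.length_drop]
        omega
      obtain ⟨ω', hJ', hred', hprod'⟩ := ih ω''.length hlen'' ω'' rfl hJ''
      exact ⟨ω', hJ', hred', by rw [hprod', hprod2]⟩

lemma exists_reduced_Jword' {J : Set B} {a : W} (ha : a ∈ Subgroup.closure (cs.simple '' J)) :
    ∃ ω : List B, (∀ i ∈ ω, i ∈ J) ∧ cs.IsReduced ω ∧ cs.wordProd ω = a := by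
  obtain ⟨ω, hJ, hprod⟩ := exists_Jword cs ha
  obtain ⟨ω', hJ', hred', hprod'⟩ := exists_reduced_Jword cs ω.length ω rfl hJ
  exact ⟨ω', hJ', hred', by rw [hprod', hprod]⟩

lemma exists_right_descent_in_J {J : Set B} {a : W}
    (ha : a ∈ Subgroup.closure (cs.simple '' J)) (hne : a ≠ 1) :
    ∃ b ∈ Subgroup.closure (cs.simple '' J), ∃ i ∈ J,
      a = b * cs.simple i ∧ cs.length b + 1 = cs.length a := by
  obtain ⟨ω, hJ, hred, hprod⟩ := exists_reduced_Jword' cs ha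
  have hne' : ω ≠ [] := by
    rintro rfl
    rw [cs.wordProd_nil] at hprod
    exact hne hprod.symm
  refine ⟨cs.wordProd ω.dropLast, ?_, ω.getLast hne', ?_, ?_, ?_⟩
  · exact wordProd_mem_closure cs (fun i hi => hJ i (List.dropLast_subset _ hi))
  · exact hJ _ (List.getLast_mem hne')
  · rw [← hprod]
    conv_lhs => rw [← List.dropLast_append_getLast hne']
    rw [cs.wordProd_append, cs.wordProd_singleton]
  · have h1 : cs.IsReduced ω.dropLast := by
      rw [List.dropLast_eq_take]
      exact hred.take _
    have h2 : ω.dropLast.length = ω.length - 1 := by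
      rw [List.length_dropLast]
    have h3 : 1 ≤ ω.length := by
      cases ω with
      | nil => exact absurd rfl hne'
      | cons a l => simp
    rw [← hprod, hred, h1, h2]
    omega

/-- Key lemma: if `w` has maximal length in `w W_J`, then `ℓ(wa) = ℓ(w) - ℓ(a)` for
all `a ∈ W_J`. -/
lemma coset_max_sub {J : Set B} {w : W}
    (hw : ∀ a ∈ Subgroup.closure (cs.simple '' J), cs.length (w * a) ≤ cs.length w) :
    ∀ a ∈ Subgroup.closure (cs.simple '' J),
      cs.length (w * a) + cs.length a = cs.length w := by
  have H : ∀ n a, a ∈ Subgroup.closure (cs.simple '' J) → cs.length a = n →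
      cs.length (w * a) + cs.length a = cs.length w := by
    intro n
    induction n using Nat.strong_induction_on with
    | _ n ih =>
      intro a ha hn
      by_cases h1 : a = 1
      · subst h1; simp
      · obtain ⟨b, hb, i, hiJ, hab, hlen⟩ := exists_right_descent_in_J cs ha h1
        set t := b * cs.simple i * b⁻¹ with htdef
        have htrefl : cs.IsReflection t := ⟨b, i, rfl⟩
        have htK : t ∈ Subgroup.closure (cs.simple '' J) :=
          mul_mem (mul_mem hb (Subgroup.subset_closure ⟨i, hiJ, rfl⟩)) (inv_mem hb)
        have hwt : cs.IsRightInversion w t := by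
          refine ⟨htrefl, lt_of_le_of_ne (hw t htK) ?_⟩
          exact htrefl.length_mul_left_ne w
        have hsgnw : sgn cs w t = -1 := (isRightInversion_iff_sgn cs htrefl).mp hwt
        have hsgnb : sgn cs b (cs.simple i) = 1 := by
          rcases Int.units_eq_one_or (sgn cs b (cs.simple i)) with h | h
          · exact h
          · exfalso
            have hbinv := (isRightInversion_iff_sgn cs (cs.isReflection_simple i)).mpr h
            have : cs.length (b * cs.simple i) < cs.length b := hbinv.2
            rw [← hab] at this
            omega
        have hsgnwb : sgn cs (w * b) (cs.simple i) = -1 := by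
          rw [sgn_mul, hsgnb, one_mul, ← htdef, hsgnw]
        have hwbinv := (isRightInversion_iff_sgn cs (cs.isReflection_simple i)).mpr hsgnwb
        have hlt : cs.length (w * b * cs.simple i) < cs.length (w * b) := hwbinv.2
        have hstep : cs.length (w * b * cs.simple i) + 1 = cs.length (w * b) := by
          rcases cs.length_mul_simple (w * b) i with h | h <;> omega
        have hihb : cs.length (w * b) + cs.length b = cs.length w :=
          ih (cs.length b) (by omega) b hb rfl
        rw [hab] at hlen ⊢
        rw [← mul_assoc]
        omega
  intro a ha
  exact H (cs.length a) a ha rfl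

end Stmt10Aux

/-- with `w` the unique maximal length element in `W_J w W_J`,
`u = w₁ w w₂` with `ℓ(u) = ℓ(w) − ℓ(w₁) − ℓ(w₂)` and `v = w w₂ w₁`:
`ℓ(u) ≤ ℓ(v)`, with equality iff `ℓ(w₂w₁) = ℓ(w₂) + ℓ(w₁)`; and `u` is of maximal
length in its `W_J`-conjugacy class iff `v` is of maximal length in that class and
`ℓ(w₂w₁) = ℓ(w₂) + ℓ(w₁)`. -/
theorem stmt10 (cs : CoxeterSystem M W) (J : Set B)
    (hsph : Finite (Subgroup.closure (cs.simple '' J)))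
    (w : W)
    (hmax : ∀ u, (∃ x ∈ Subgroup.closure (cs.simple '' J),
        ∃ y ∈ Subgroup.closure (cs.simple '' J), u = x * w * y) →
      cs.length u ≤ cs.length w ∧ (cs.length u = cs.length w → u = w))
    (w₁ w₂ : W)
    (hw₁ : w₁ ∈ Subgroup.closure (cs.simple '' J))
    (hw₂ : w₂ ∈ Subgroup.closure (cs.simple '' J))
    (u v : W) (hu : u = w₁ * w * w₂)
    (hlu : cs.length u + cs.length w₁ + cs.length w₂ = cs.length w)
    (hv : v = w * w₂ * w₁) :
    cs.length u ≤ cs.length v ∧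
    (cs.length u = cs.length v ↔ cs.length (w₂ * w₁) = cs.length w₂ + cs.length w₁) ∧
    ((∀ z, (∃ x ∈ Subgroup.closure (cs.simple '' J), z = x * u * x⁻¹) →
        cs.length z ≤ cs.length u) ↔
      ((∀ z, (∃ x ∈ Subgroup.closure (cs.simple '' J), z = x * u * x⁻¹) →
          cs.length z ≤ cs.length v) ∧
        cs.length (w₂ * w₁) = cs.length w₂ + cs.length w₁)) := by
  have hmax' : ∀ a ∈ Subgroup.closure (cs.simple '' J),
      cs.length (w * a) ≤ cs.length w := by
    intro a ha
    exact (hmax (w * a) ⟨1, one_mem _, a, ha, by group⟩).1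
  have hsub := Stmt10Aux.coset_max_sub cs hmax'
  have hw21K : w₂ * w₁ ∈ Subgroup.closure (cs.simple '' J) := mul_mem hw₂ hw₁
  have hv' : cs.length v + cs.length (w₂ * w₁) = cs.length w := by
    rw [hv, mul_assoc]
    exact hsub _ hw21K
  have htri : cs.length (w₂ * w₁) ≤ cs.length w₂ + cs.length w₁ := cs.length_mul_le w₂ w₁
  have hconj : v = w₁⁻¹ * u * (w₁⁻¹)⁻¹ := by rw [hu, hv]; group
  have h1 : cs.length u ≤ cs.length v := by omega
  have h2 : cs.length u = cs.length v ↔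
      cs.length (w₂ * w₁) = cs.length w₂ + cs.length w₁ := by
    constructor <;> intro <;> omega
  refine ⟨h1, h2, ?_⟩
  constructor
  · intro hPu
    have hvle : cs.length v ≤ cs.length u := hPu v ⟨w₁⁻¹, inv_mem hw₁, hconj⟩
    have heq : cs.length u = cs.length v := le_antisymm h1 hvle
    exact ⟨fun z hz => (hPu z hz).trans (le_of_eq heq), h2.mp heq⟩
  · rintro ⟨hPv, hadd⟩
    intro z hz
    have heq : cs.length u = cs.length v := h2.mpr hadd
    rw [heq]
    exact hPv z hz
end

section
/- Let ℋ be the generic Hecke algebra of a Coxeter system (W,S) with invertible parameters b_s, and J ⊆ S with subalgebra ℋ_J spanned by {T_x : x ∈ W_J}. Suppose w, w' ∈ W with ℓ(w) = ℓ(w'), w' = x w x⁻¹ for some x ∈ W_J, and either ℓ(xw) = ℓ(w) − ℓ(x) or ℓ(wx⁻¹) = ℓ(w) − ℓ(x). Then T_w ≡ T_{w'} modulo the R-submodule [ℋ_J, ℋ] spanned by commutators h j − j h with j ∈ ℋ_J, h ∈ ℋ. -/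
variable {B W : Type*} [Group W] {M : CoxeterMatrix B}
variable {R : Type*} [CommRing R] {H : Type*} [Ring H] [Algebra R H]

/-- The `R`-span of commutators `j*h - h*j` with `j ∈ ℋ_J` and `h ∈ ℋ`, where `ℋ_J` is
the `R`-span of `{T_x : x ∈ W_J}`. -/
def commSubmodule (cs : CoxeterSystem M W) (T : W → H) (J : Set B) : Submodule R H :=
  Submodule.span R {z | ∃ j ∈ Submodule.span R
    (T '' ((Subgroup.closure (cs.simple '' J) : Subgroup W) : Set W)),
    ∃ h : H, z = j * h - h * j}

/-- if `ℓ(w) = ℓ(w')`, `w' = x w x⁻¹` with `x ∈ W_J` and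
`ℓ(xw) = ℓ(w) − ℓ(x)` or `ℓ(wx⁻¹) = ℓ(w) − ℓ(x)`, then `T_w ≡ T_{w'} mod [ℋ_J, ℋ]`. -/
theorem stmt15 (cs : CoxeterSystem M W) (J : Set B)
    (T : W → H) (bas : Module.Basis W R H) (hbas : ∀ w, bas w = T w)
    (a b binv : B → R) (hb : ∀ i, b i * binv i = 1)
    (hpar : ∀ i j, IsConj (cs.simple i) (cs.simple j) → a i = a j ∧ b i = b j)
    (hone : T 1 = 1)
    (hmul : ∀ v w : W, cs.length (v * w) = cs.length v + cs.length w →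
      T v * T w = T (v * w))
    (hsq : ∀ i, T (cs.simple i) * T (cs.simple i)
      = a i • T (cs.simple i) + b i • (1 : H))
    (w w' x : W) (hx : x ∈ Subgroup.closure (cs.simple '' J))
    (hlen : cs.length w = cs.length w') (hconj : w' = x * w * x⁻¹)
    (hred : cs.length (x * w) + cs.length x = cs.length w ∨
      cs.length (w * x⁻¹) + cs.length x = cs.length w) :
    T w - T w' ∈ commSubmodule (R := R) cs T J := by
  have hmemT : ∀ y : W, y ∈ Subgroup.closure (cs.simple '' J) →
      T y ∈ Submodule.span R
        (T '' ((Subgroup.closure (cs.simple '' J) : Subgroup W) : Set W)) := by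
    intro y hy
    exact Submodule.subset_span ⟨y, hy, rfl⟩
  have hgen : ∀ (j h : H), (∃ y ∈ Subgroup.closure (cs.simple '' J), j = T y) →
      j * h - h * j ∈ commSubmodule (R := R) cs T J := by
    rintro j h ⟨y, hy, rfl⟩
    exact Submodule.subset_span ⟨T y, hmemT y hy, h, rfl⟩
  rcases hred with h1 | h2
  · have e1 : T x⁻¹ * T (x * w) = T w := by
      have hl : cs.length (x⁻¹ * (x * w)) = cs.length x⁻¹ + cs.length (x * w) := by
        rw [cs.length_inv]
        group
        omega
      have := hmul x⁻¹ (x * w) hl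
      rw [this]
      congr 1
      group
    have e2 : T (x * w) * T x⁻¹ = T w' := by
      have hl : cs.length (x * w * x⁻¹) = cs.length (x * w) + cs.length x⁻¹ := by
        rw [cs.length_inv, ← hconj, ← hlen]
        omega
      rw [hmul (x * w) x⁻¹ hl, hconj]
    have : T w - T w' = T x⁻¹ * T (x * w) - T (x * w) * T x⁻¹ := by
      rw [e1, e2]
    rw [this]
    exact hgen _ _ ⟨x⁻¹, inv_mem hx, rfl⟩
  · have e1 : T (w * x⁻¹) * T x = T w := by
      have hl : cs.length (w * x⁻¹ * x) = cs.length (w * x⁻¹) + cs.length x := by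
        rw [inv_mul_cancel_right]
        omega
      have := hmul (w * x⁻¹) x hl
      rw [this]
      congr 1
      group
    have e2 : T x * T (w * x⁻¹) = T w' := by
      have hl : cs.length (x * (w * x⁻¹)) = cs.length x + cs.length (w * x⁻¹) := by
        have : x * (w * x⁻¹) = w' := by rw [hconj]; group
        rw [this, ← hlen]
        omega
      rw [hmul x (w * x⁻¹) hl]
      congr 1
      rw [hconj]
      group
    have : T w - T w' = -(T x * T (w * x⁻¹) - T (w * x⁻¹) * T x) := by
      rw [e1, e2, neg_sub]
    rw [this]
    exact Submodule.neg_mem _ (hgen _ _ ⟨x, hx, rfl⟩)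
end

section
/- Let ℋ be the generic Hecke algebra of a Coxeter system (W,S), J ⊆ S, and w ∈ W, s ∈ J with ℓ(sws) > ℓ(sw) = ℓ(ws) > ℓ(w). Then T_{sws} ≡ b_s T_w + a_s T_{sw} modulo [ℋ_J, ℋ], the R-span of commutators of ℋ_J with ℋ. -/
variable {B W : Type*} [Group W] {M : CoxeterMatrix B}
variable {R : Type*} [CommRing R] {H : Type*} [Ring H] [Algebra R H]

/-- if `s ∈ J` and `ℓ(sws) > ℓ(sw) = ℓ(ws) > ℓ(w)`, then
`T_{sws} ≡ b_s T_w + a_s T_{sw} mod [ℋ_J, ℋ]`. -/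
theorem stmt16 (cs : CoxeterSystem M W) (J : Set B)
    (T : W → H) (bas : Module.Basis W R H) (hbas : ∀ w, bas w = T w)
    (a b : B → R)
    (hpar : ∀ i j, IsConj (cs.simple i) (cs.simple j) → a i = a j ∧ b i = b j)
    (hone : T 1 = 1)
    (hmul : ∀ v w : W, cs.length (v * w) = cs.length v + cs.length w →
      T v * T w = T (v * w))
    (hsq : ∀ i, T (cs.simple i) * T (cs.simple i)
      = a i • T (cs.simple i) + b i • (1 : H))
    (w : W) (i : B) (hi : i ∈ J)
    (h1 : cs.length (cs.simple i * w * cs.simple i) > cs.length (cs.simple i * w))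
    (h2 : cs.length (cs.simple i * w) = cs.length (w * cs.simple i))
    (h3 : cs.length (cs.simple i * w) > cs.length w) :
    T (cs.simple i * w * cs.simple i) - (b i • T w + a i • T (cs.simple i * w))
      ∈ commSubmodule (R := R) cs T J := by
  have hls : cs.length (cs.simple i * w) = cs.length w + 1 :=
    (cs.length_simple_mul w i).resolve_right (by omega)
  have hlws : cs.length (w * cs.simple i) = cs.length w + 1 := by omega
  have hlsws : cs.length (cs.simple i * (w * cs.simple i))
      = cs.length (w * cs.simple i) + 1 := by
    have := cs.length_simple_mul (w * cs.simple i) i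
    rw [← mul_assoc] at this ⊢
    omega
  have hA : T (cs.simple i) * T (w * cs.simple i) = T (cs.simple i * w * cs.simple i) := by
    have := hmul (cs.simple i) (w * cs.simple i)
      (by rw [hlsws, cs.length_simple]; ring)
    rwa [← mul_assoc] at this
  have hB : T w * T (cs.simple i) = T (w * cs.simple i) :=
    hmul w (cs.simple i) (by rw [hlws, cs.length_simple])
  have hC : T (cs.simple i) * T w = T (cs.simple i * w) :=
    hmul (cs.simple i) w (by rw [hls, cs.length_simple]; ring)
  have hD : T (w * cs.simple i) * T (cs.simple i)
      = a i • T (w * cs.simple i) + b i • T w := by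
    rw [← hB, mul_assoc, hsq i, mul_add, mul_smul_comm, mul_smul_comm, mul_one, hB]
  have hTs : T (cs.simple i) ∈ Submodule.span R
      (T '' ((Subgroup.closure (cs.simple '' J) : Subgroup W) : Set W)) :=
    Submodule.subset_span ⟨cs.simple i, Subgroup.subset_closure ⟨i, hi, rfl⟩, rfl⟩
  have hz1 : T (cs.simple i) * T (w * cs.simple i) - T (w * cs.simple i) * T (cs.simple i)
      ∈ commSubmodule (R := R) cs T J :=
    Submodule.subset_span ⟨T (cs.simple i), hTs, T (w * cs.simple i), rfl⟩
  have hz2 : T (cs.simple i) * T w - T w * T (cs.simple i)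
      ∈ commSubmodule (R := R) cs T J :=
    Submodule.subset_span ⟨T (cs.simple i), hTs, T w, rfl⟩
  have := sub_mem hz1 (Submodule.smul_mem _ (a i) hz2)
  convert this using 1
  rw [hA, hC, hB, hD]
  module
end
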